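/- arXiv:1709.05174 — 6 statements merged into one kernel-verified Lean document; each statement's English description precedes it below -/
import Mathlib

section
/- Let p_{XY} be a pmf on X×Y (X, Y finite) with strictly positive marginals, ε ∈ [0,1], and let p_{XYZ} be the corresponding erasure source. Then the one-way secret-key quantity S_ow(X;Y‖Z) equals zero if and only if ε ≤ 1 − η(p_{Y|X}), where p_{Y|X}(y|x) = p_{XY}(x,y)/p_X(x). -/
/-- A probability mass function on a finite set `S`. -/
def IsPMF {S : Type*} [Fintype S] (p : S → ℝ) : Prop :=
  (∀ s, 0 ≤ p s) ∧ ∑ s, p s = 1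

/-- Mutual information `I(A;B)` of a joint (sub)pmf on `A × B`, with the convention
`0·log 0 = 0` (automatic for real multiplication since `Real.log 0 = 0`). -/
noncomputable def MI {A B : Type} [Fintype A] [Fintype B] (p : A → B → ℝ) : ℝ :=
  ∑ a, ∑ b, p a b * Real.log (p a b / ((∑ b', p a b') * (∑ a', p a' b)))

/-- Conditional mutual information `I(A;B|V) = Σ_v p(v)·I(A;B|V=v)` of a joint
(sub)pmf on `V × A × B`. -/
noncomputable def condMI {V A B : Type} [Fintype V] [Fintype A] [Fintype B]
    (p : V → A → B → ℝ) : ℝ :=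
  ∑ v, (∑ a, ∑ b, p v a b) * MI (fun a b => p v a b / (∑ a', ∑ b', p v a' b'))

/-- The strong data processing constant `s*(qA, W)`: the supremum over finite sets `U`
and channels `p(u|a)` with `I(U;A) > 0` of `I(U;B)/I(U;A)`, computed under
`qA(a)·W(b|a)·p(u|a)`. -/
noncomputable def sdpc {A B : Type} [Fintype A] [Fintype B]
    (qA : A → ℝ) (W : A → B → ℝ) : ℝ :=
  sSup { r : ℝ | ∃ (U : Type) (iU : Fintype U) (pu : A → U → ℝ), by
    letI := iU
    exact (∀ a, IsPMF (pu a)) ∧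
      0 < MI (fun u a => qA a * pu a u) ∧
      r = MI (fun u b => ∑ a, qA a * pu a u * W a b) / MI (fun u a => qA a * pu a u) }

/-- `η(W) = max_{q} s*(q, W)`, the maximum of the strong data processing constant
over input pmfs. -/
noncomputable def eta {A B : Type} [Fintype A] [Fintype B] (W : A → B → ℝ) : ℝ :=
  sSup { r : ℝ | ∃ qA : A → ℝ, IsPMF qA ∧ r = sdpc qA W }

open Classical in
/-- The erasure source with base pmf `p_XY` and erasure probability `ε`: Eve's
alphabet is `Z = {e} ⊔ (X × Y)`, modelled as `Option (X × Y)` with `e = none`. -/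
noncomputable def erasureSource {X Y : Type} [Fintype X] [Fintype Y]
    (pXY : X → Y → ℝ) (ε : ℝ) : X → Y → Option (X × Y) → ℝ :=
  fun x y z =>
    match z with
    | none => ε * pXY x y
    | some w => if w = (x, y) then (1 - ε) * pXY x y else 0

/-- The one-way secret-key quantity `S_ow(X;Y‖Z)`: the supremum over finite `V, U` and
joint pmfs `p(v,u,x,y,z) = p(v,u,x)·p_{YZ|X}(y,z|x)` whose `(X,Y,Z)`-marginal is
`p_XYZ`, satisfying the Markov chain `V → U → X → (Y,Z)` (i.e. `p(x|v,u) = p(x|u)`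
whenever defined), of `I(U;Y|V) − I(U;Z|V)`. -/
noncomputable def Sow {X Y Z : Type} [Fintype X] [Fintype Y] [Fintype Z]
    (p : X → Y → Z → ℝ) : ℝ :=
  sSup { r : ℝ | ∃ (V U : Type) (iV : Fintype V) (iU : Fintype U)
      (q : V → U → X → ℝ), by
    letI := iV; letI := iU
    exact (∀ v u x, 0 ≤ q v u x) ∧
      (∑ v, ∑ u, ∑ x, q v u x) = 1 ∧
      (∀ x, ∑ v, ∑ u, q v u x = ∑ y, ∑ z, p x y z) ∧
      (∀ v u x, 0 < (∑ x', q v u x') →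
        q v u x / (∑ x', q v u x')
          = (∑ v', q v' u x) / (∑ v', ∑ x', q v' u x')) ∧
      r = condMI (fun v u y => ∑ x, ∑ z, q v u x * (p x y z / (∑ y', ∑ z', p x y' z')))
        - condMI (fun v u z => ∑ x, ∑ y, q v u x * (p x y z / (∑ y', ∑ z', p x y' z'))) }


private lemma mul_log_div_lb {p q : ℝ} (hp : 0 ≤ p) (hq : 0 ≤ q) (hac : q = 0 → p = 0) :
    p - q ≤ p * Real.log (p / q) := by
  rcases hp.eq_or_lt with h0 | h0
  · rw [← h0]; simpa using hq
  · have hq0 : 0 < q := by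
      rcases hq.eq_or_lt with h | h
      · exact absurd (hac h.symm) (ne_of_gt h0)
      · exact h
    have h1 : Real.log (q / p) ≤ q / p - 1 := Real.log_le_sub_one_of_pos (by positivity)
    have h2 : Real.log (p / q) = - Real.log (q / p) := by
      rw [← Real.log_inv, inv_div]
    have h3 := mul_le_mul_of_nonneg_left h1 h0.le
    have h4 : p * (q / p) = q := by field_simp
    rw [mul_sub, h4, mul_one] at h3
    rw [h2]; linarith

private lemma kl_nonneg {ι : Type*} [Fintype ι] (p q : ι → ℝ)
    (hp : ∀ i, 0 ≤ p i) (hq : ∀ i, 0 ≤ q i) (hac : ∀ i, q i = 0 → p i = 0)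
    (hsum : ∑ i, q i ≤ ∑ i, p i) :
    0 ≤ ∑ i, p i * Real.log (p i / q i) := by
  have h : ∑ i, (p i - q i) ≤ ∑ i, p i * Real.log (p i / q i) :=
    Finset.sum_le_sum fun i _ => mul_log_div_lb (hp i) (hq i) (hac i)
  rw [Finset.sum_sub_distrib] at h
  linarith

lemma mi_nonneg {A B : Type} [Fintype A] [Fintype B] (m : A → B → ℝ)
    (hm : ∀ a b, 0 ≤ m a b) (hs : ∑ a, ∑ b, m a b ≤ 1) : 0 ≤ MI m := by
  have hS0 : 0 ≤ ∑ a, ∑ b, m a b :=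
    Finset.sum_nonneg fun a _ => Finset.sum_nonneg fun b _ => hm a b
  have h := kl_nonneg (ι := A × B) (fun i => m i.1 i.2)
    (fun i => (∑ b', m i.1 b') * (∑ a', m a' i.2))
    (fun i => hm i.1 i.2)
    (fun i => mul_nonneg (Finset.sum_nonneg fun _ _ => hm _ _)
      (Finset.sum_nonneg fun _ _ => hm _ _))
    (fun i hi => by
      rcases mul_eq_zero.mp hi with h | h
      · have h1 : m i.1 i.2 ≤ ∑ b', m i.1 b' :=
          Finset.single_le_sum (fun b _ => hm i.1 b) (Finset.mem_univ i.2)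
        rw [h] at h1; exact le_antisymm h1 (hm i.1 i.2)
      · have h1 : m i.1 i.2 ≤ ∑ a', m a' i.2 :=
          Finset.single_le_sum (fun a _ => hm a i.2) (Finset.mem_univ i.1)
        rw [h] at h1; exact le_antisymm h1 (hm i.1 i.2))
    (by
      rw [Fintype.sum_prod_type, Fintype.sum_prod_type]
      have h2 : ∑ a, ∑ b, (∑ b', m a b') * (∑ a', m a' b)
          = (∑ a, ∑ b', m a b') * (∑ a, ∑ b, m a b) := by
        rw [← Finset.sum_mul_sum]
        congr 1
        exact Finset.sum_comm
      rw [h2]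
      nlinarith)
  rw [Fintype.sum_prod_type] at h
  exact h

lemma mi_le_log_card {A B : Type} [Fintype A] [Fintype B] (m : A → B → ℝ)
    (hm : ∀ a b, 0 ≤ m a b) (hs : ∑ a, ∑ b, m a b = 1) :
    MI m ≤ Real.log (Fintype.card B) := by
  rcases isEmpty_or_nonempty B with hB | hB
  · simp at hs
  have hcard : (0 : ℝ) < (Fintype.card B : ℝ) := by
    exact_mod_cast Fintype.card_pos
  have hB1 : ∑ b, ∑ a, m a b = 1 := by rw [Finset.sum_comm]; exact hs
  -- step 1 : MI m ≤ entropy of B marginal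
  have step1 : MI m ≤ ∑ b, (∑ a', m a' b) * Real.log (1 / (∑ a', m a' b)) := by
    have h1 : MI m ≤ ∑ a, ∑ b, m a b * Real.log (1 / (∑ a', m a' b)) := by
      apply Finset.sum_le_sum; intro a _
      apply Finset.sum_le_sum; intro b _
      rcases (hm a b).eq_or_lt with h0 | h0
      · rw [← h0]; simp
      · have hmA : 0 < ∑ b', m a b' :=
          lt_of_lt_of_le h0 (Finset.single_le_sum (fun b _ => hm a b) (Finset.mem_univ b))
        have hmB : 0 < ∑ a', m a' b :=
          lt_of_lt_of_le h0 (Finset.single_le_sum (fun a _ => hm a b) (Finset.mem_univ a))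
        apply mul_le_mul_of_nonneg_left _ (hm a b)
        apply Real.log_le_log (by positivity)
        rw [div_le_div_iff₀ (by positivity) (by positivity)]
        have : m a b ≤ ∑ b', m a b' :=
          Finset.single_le_sum (fun b _ => hm a b) (Finset.mem_univ b)
        nlinarith
    calc MI m ≤ _ := h1
      _ = _ := by
          rw [Finset.sum_comm]
          exact Finset.sum_congr rfl fun b _ => (Finset.sum_mul _ _ _).symm
  -- step 2 : entropy ≤ log card
  have step2 : ∑ b, (∑ a', m a' b) * Real.log (1 / (∑ a', m a' b))
      ≤ Real.log (Fintype.card B) := by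
    have hkl := kl_nonneg (fun b => ∑ a', m a' b) (fun _ => (Fintype.card B : ℝ)⁻¹)
      (fun b => Finset.sum_nonneg fun a _ => hm a b)
      (fun _ => by positivity)
      (fun b hb => absurd hb (by positivity))
      (by
        have h5 : ∑ _b : B, ((Fintype.card B : ℝ))⁻¹ = 1 := by
          rw [Finset.sum_const, nsmul_eq_mul, Finset.card_univ, mul_inv_cancel₀ (ne_of_gt hcard)]
        simpa [h5] using le_of_eq hB1.symm)
    have hexp : ∀ b, (∑ a', m a' b) * Real.log ((∑ a', m a' b) / (Fintype.card B : ℝ)⁻¹)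
        = (∑ a', m a' b) * Real.log (∑ a', m a' b)
          + (∑ a', m a' b) * Real.log (Fintype.card B) := by
      intro b
      rcases eq_or_ne (∑ a', m a' b) 0 with h | h
      · simp [h]
      · rw [div_eq_mul_inv, inv_inv, Real.log_mul h (ne_of_gt hcard), mul_add]
    rw [Finset.sum_congr rfl fun b _ => hexp b, Finset.sum_add_distrib,
      ← Finset.sum_mul, hB1, one_mul] at hkl
    have : ∀ b, (∑ a', m a' b) * Real.log (1 / (∑ a', m a' b))
        = -((∑ a', m a' b) * Real.log (∑ a', m a' b)) := by
      intro b; rw [one_div, Real.log_inv]; ring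
    rw [Finset.sum_congr rfl fun b _ => this b, Finset.sum_neg_distrib]
    linarith
  linarith

open Finset in
lemma mi_pair {U S T : Type} [Fintype U] [Fintype S] [Fintype T]
    (m : U → S → ℝ) (W : S → T → ℝ)
    (hW : ∀ s t, 0 ≤ W s t) (hWrow : ∀ s, ∑ t, W s t = 1) :
    MI (fun u (st : S × T) => m u st.1 * W st.1 st.2) = MI m := by
  have hmarg1 : ∀ (u : U), ∑ st : S × T, m u st.1 * W st.1 st.2 = ∑ s', m u s' := by
    intro u
    rw [Fintype.sum_prod_type]
    apply Finset.sum_congr rfl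
    intro s' _
    have hb : ∀ y : T, m u (s', y).1 * W (s', y).1 (s', y).2 = m u s' * W s' y := fun y => rfl
    rw [Finset.sum_congr rfl fun y _ => hb y, ← Finset.mul_sum, hWrow, mul_one]
  simp only [MI]
  apply Finset.sum_congr rfl
  intro u _
  rw [Fintype.sum_prod_type]
  apply Finset.sum_congr rfl
  intro s _
  calc ∑ y, m u s * W s y * Real.log (m u s * W s y /
          ((∑ st : S × T, m u st.1 * W st.1 st.2) * (∑ u', m u' s * W s y)))
      = ∑ y, (m u s * Real.log (m u s / ((∑ s', m u s') * (∑ u', m u' s)))) * W s y := by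
        apply Finset.sum_congr rfl; intro y _
        rw [hmarg1, show (∑ u', m u' s * W s y) = (∑ u', m u' s) * W s y from
          (Finset.sum_mul _ _ _).symm]
        rcases (hW s y).eq_or_lt with h | h
        · rw [← h]; simp
        · rw [show (∑ s', m u s') * ((∑ u', m u' s) * W s y)
              = ((∑ s', m u s') * (∑ u', m u' s)) * W s y from by ring,
            mul_div_mul_right _ _ (ne_of_gt h)]
          ring
    _ = m u s * Real.log (m u s / ((∑ s', m u s') * (∑ u', m u' s))) := by
        rw [← Finset.mul_sum, hWrow, mul_one]

open Finset in
lemma mi_marg_le {U S T : Type} [Fintype U] [Fintype S] [Fintype T]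
    (t : U → S → T → ℝ) (hnn : ∀ u s y, 0 ≤ t u s y)
    (hsum : ∑ u, ∑ s, ∑ y, t u s y = 1) :
    MI (fun u y => ∑ s, t u s y) ≤ MI (fun u (st : S × T) => t u st.1 st.2) := by
  have hUeq : ∀ u, (∑ s', ∑ y', t u s' y') = ∑ y', ∑ s', t u s' y' :=
    fun u => Finset.sum_comm
  have hpair : MI (fun u (st : S × T) => t u st.1 st.2)
      = ∑ u, ∑ s, ∑ y, t u s y * Real.log (t u s y /
          ((∑ s', ∑ y', t u s' y') * (∑ u', t u' s y))) := by
    simp only [MI]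
    apply Finset.sum_congr rfl; intro u _
    rw [Fintype.sum_prod_type]
    apply Finset.sum_congr rfl; intro s _
    apply Finset.sum_congr rfl; intro y _
    rw [show (∑ st : S × T, t u st.1 st.2) = ∑ s', ∑ y', t u s' y' from by
      rw [Fintype.sum_prod_type]]
  have hmarg : MI (fun u y => ∑ s, t u s y)
      = ∑ u, ∑ s, ∑ y, t u s y * Real.log ((∑ s', t u s' y) /
          ((∑ y', ∑ s', t u s' y') * (∑ u', ∑ s', t u' s' y))) := by
    simp only [MI]
    apply Finset.sum_congr rfl; intro u _
    refine Eq.trans (Finset.sum_congr rfl fun y _ => Finset.sum_mul _ _ _) ?_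
    exact Finset.sum_comm
  have hterm : ∀ u, (∑ s, ∑ y, t u s y * Real.log (t u s y /
          ((∑ s', ∑ y', t u s' y') * (∑ u', t u' s y))))
      - (∑ s, ∑ y, t u s y * Real.log ((∑ s', t u s' y) /
          ((∑ y', ∑ s', t u s' y') * (∑ u', ∑ s', t u' s' y))))
      = ∑ s, ∑ y, t u s y * Real.log (t u s y /
          ((∑ u', t u' s y) * (∑ s', t u s' y) / (∑ u', ∑ s', t u' s' y))) := by
    intro u
    rw [← Finset.sum_sub_distrib]
    apply Finset.sum_congr rfl; intro s _
    rw [← Finset.sum_sub_distrib]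
    apply Finset.sum_congr rfl; intro y _
    rcases (hnn u s y).eq_or_lt with h | h
    · rw [← h]; simp
    · have h1 : 0 < ∑ u', t u' s y :=
        lt_of_lt_of_le h (Finset.single_le_sum (fun u' _ => hnn u' s y) (mem_univ u))
      have h2 : 0 < ∑ s', t u s' y :=
        lt_of_lt_of_le h (Finset.single_le_sum (fun s' _ => hnn u s' y) (mem_univ s))
      have h3 : 0 < ∑ y', ∑ s', t u s' y' :=
        lt_of_lt_of_le h2 (Finset.single_le_sum
          (fun y' _ => Finset.sum_nonneg fun s' _ => hnn u s' y') (mem_univ y))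
      have h4 : 0 < ∑ u', ∑ s', t u' s' y :=
        lt_of_lt_of_le h2 (Finset.single_le_sum
          (fun u' _ => Finset.sum_nonneg fun s' _ => hnn u' s' y) (mem_univ u))
      have h5 : 0 < ∑ s', ∑ y', t u s' y' := by rw [hUeq]; exact h3
      rw [← mul_sub]
      congr 1
      have e1 : Real.log (t u s y / ((∑ s', ∑ y', t u s' y') * ∑ u', t u' s y))
          = Real.log (t u s y)
            - (Real.log (∑ s', ∑ y', t u s' y') + Real.log (∑ u', t u' s y)) := by
        rw [Real.log_div (ne_of_gt h) (by positivity),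
          Real.log_mul (ne_of_gt h5) (ne_of_gt h1)]
      have e2 : Real.log ((∑ s', t u s' y) / ((∑ y', ∑ s', t u s' y') * ∑ u', ∑ s', t u' s' y))
          = Real.log (∑ s', t u s' y)
            - (Real.log (∑ y', ∑ s', t u s' y') + Real.log (∑ u', ∑ s', t u' s' y)) := by
        rw [Real.log_div (ne_of_gt h2) (by positivity),
          Real.log_mul (ne_of_gt h3) (ne_of_gt h4)]
      have e3 : Real.log (t u s y /
            ((∑ u', t u' s y) * (∑ s', t u s' y) / (∑ u', ∑ s', t u' s' y)))
          = Real.log (t u s y)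
            - (Real.log (∑ u', t u' s y) + Real.log (∑ s', t u s' y)
                - Real.log (∑ u', ∑ s', t u' s' y)) := by
        rw [Real.log_div (ne_of_gt h) (by positivity),
          Real.log_div (by positivity) (ne_of_gt h4),
          Real.log_mul (ne_of_gt h1) (ne_of_gt h2)]
      have e5 : Real.log (∑ s', ∑ y', t u s' y') = Real.log (∑ y', ∑ s', t u s' y') := by
        rw [hUeq]
      rw [e1, e2, e3, e5]; ring
  have hQle : ∑ u, ∑ s, ∑ y, (∑ u', t u' s y) * (∑ s', t u s' y) / (∑ u', ∑ s', t u' s' y)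
      ≤ 1 := by
    have step : ∀ (s : S) (y : T),
        (∑ u, (∑ u', t u' s y) * (∑ s', t u s' y) / (∑ u', ∑ s', t u' s' y))
          ≤ ∑ u, t u s y := by
      intro s y
      rcases eq_or_lt_of_le (Finset.sum_nonneg (fun u' (_ : u' ∈ univ) =>
          Finset.sum_nonneg fun s' (_ : s' ∈ univ) => hnn u' s' y)) with h0 | h0
      · have hz : ∀ u, (∑ u', t u' s y) * (∑ s', t u s' y) / (∑ u', ∑ s', t u' s' y) = 0 := by
          intro u; rw [← h0, div_zero]
        rw [Finset.sum_congr rfl fun u _ => hz u, Finset.sum_const_zero]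
        exact Finset.sum_nonneg fun u _ => hnn u s y
      · have : ∑ u, (∑ u', t u' s y) * (∑ s', t u s' y) / (∑ u', ∑ s', t u' s' y)
            = ∑ u', t u' s y := by
          rw [← Finset.sum_div, ← Finset.mul_sum, mul_div_assoc, div_self (ne_of_gt h0),
            mul_one]
        rw [this]
    calc ∑ u, ∑ s, ∑ y, (∑ u', t u' s y) * (∑ s', t u s' y) / (∑ u', ∑ s', t u' s' y)
        = ∑ s, ∑ y, ∑ u, (∑ u', t u' s y) * (∑ s', t u s' y) / (∑ u', ∑ s', t u' s' y) := by
          refine Eq.trans Finset.sum_comm ?_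
          exact Finset.sum_congr rfl fun s _ => Finset.sum_comm
      _ ≤ ∑ s, ∑ y, ∑ u, t u s y :=
          Finset.sum_le_sum fun s _ => Finset.sum_le_sum fun y _ => step s y
      _ = 1 := by
          rw [← hsum]
          refine Eq.trans (Finset.sum_congr rfl fun s _ => Finset.sum_comm) ?_
          exact Finset.sum_comm
  have hterm2 : ∀ (u : U) (s : S) (y : T),
      t u s y - (∑ u', t u' s y) * (∑ s', t u s' y) / (∑ u', ∑ s', t u' s' y)
        ≤ t u s y * Real.log (t u s y /
            ((∑ u', t u' s y) * (∑ s', t u s' y) / (∑ u', ∑ s', t u' s' y))) := by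
    intro u s y
    apply mul_log_div_lb (hnn u s y)
    · exact div_nonneg (mul_nonneg (Finset.sum_nonneg fun u' _ => hnn u' s y)
        (Finset.sum_nonneg fun s' _ => hnn u s' y))
        (Finset.sum_nonneg fun u' _ => Finset.sum_nonneg fun s' _ => hnn u' s' y)
    · intro hq
      by_contra hne
      have h : 0 < t u s y := lt_of_le_of_ne (hnn u s y) (Ne.symm hne)
      have h1 : 0 < ∑ u', t u' s y :=
        lt_of_lt_of_le h (Finset.single_le_sum (fun u' _ => hnn u' s y) (mem_univ u))
      have h2 : 0 < ∑ s', t u s' y :=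
        lt_of_lt_of_le h (Finset.single_le_sum (fun s' _ => hnn u s' y) (mem_univ s))
      have h4 : 0 < ∑ u', ∑ s', t u' s' y :=
        lt_of_lt_of_le h2 (Finset.single_le_sum
          (fun u' _ => Finset.sum_nonneg fun s' _ => hnn u' s' y) (mem_univ u))
      have hpos : 0 < (∑ u', t u' s y) * (∑ s', t u s' y) / (∑ u', ∑ s', t u' s' y) := by
        positivity
      rw [hq] at hpos; exact lt_irrefl 0 hpos
  have hsuble : ∑ u, ∑ s, ∑ y,
        (t u s y - (∑ u', t u' s y) * (∑ s', t u s' y) / (∑ u', ∑ s', t u' s' y))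
      ≤ ∑ u, ∑ s, ∑ y, t u s y * Real.log (t u s y /
          ((∑ u', t u' s y) * (∑ s', t u s' y) / (∑ u', ∑ s', t u' s' y))) :=
    Finset.sum_le_sum fun u _ => Finset.sum_le_sum fun s _ =>
      Finset.sum_le_sum fun y _ => hterm2 u s y
  have hsplit : ∑ u, ∑ s, ∑ y,
        (t u s y - (∑ u', t u' s y) * (∑ s', t u s' y) / (∑ u', ∑ s', t u' s' y))
      = (∑ u, ∑ s, ∑ y, t u s y)
        - ∑ u, ∑ s, ∑ y, (∑ u', t u' s y) * (∑ s', t u s' y) / (∑ u', ∑ s', t u' s' y) := by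
    rw [← Finset.sum_sub_distrib]
    apply Finset.sum_congr rfl; intro u _
    rw [← Finset.sum_sub_distrib]
    apply Finset.sum_congr rfl; intro s _
    rw [← Finset.sum_sub_distrib]
  rw [hsplit, hsum] at hsuble
  rw [hpair, hmarg, ← sub_nonneg, ← Finset.sum_sub_distrib,
    Finset.sum_congr rfl fun u _ => hterm u]
  linarith

open Finset in
lemma mi_dpi {U S T : Type} [Fintype U] [Fintype S] [Fintype T]
    (m : U → S → ℝ) (W : S → T → ℝ) (hm : ∀ u s, 0 ≤ m u s)
    (hsm : ∑ u, ∑ s, m u s = 1) (hW : ∀ s t, 0 ≤ W s t) (hWrow : ∀ s, ∑ t, W s t = 1) :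
    MI (fun u y => ∑ s, m u s * W s y) ≤ MI m := by
  have h1 := mi_marg_le (fun u s y => m u s * W s y)
    (fun u s y => mul_nonneg (hm u s) (hW s y))
    (by
      rw [← hsm]
      apply Finset.sum_congr rfl; intro u _
      apply Finset.sum_congr rfl; intro s _
      rw [← Finset.mul_sum, hWrow, mul_one])
  exact le_trans h1 (le_of_eq (mi_pair m W hW hWrow))

open Finset in
lemma mi_erasure {U S : Type} [Fintype U] [Fintype S] (m : U → S → ℝ) (ε : ℝ)
    (hm : ∀ u s, 0 ≤ m u s) (hsm : ∑ u, ∑ s, m u s = 1) :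
    MI (fun u (z : Option S) => Option.elim z (ε * ∑ s, m u s) (fun s => (1 - ε) * m u s))
      = (1 - ε) * MI m := by
  simp only [MI, Fintype.sum_option, Option.elim]
  have hrowmarg : ∀ u, ε * (∑ s, m u s) + ∑ s, (1 - ε) * m u s = ∑ s, m u s := by
    intro u; rw [← Finset.mul_sum]; ring
  have hnonemarg : ∑ u', ε * ∑ s, m u' s = ε := by
    rw [← Finset.mul_sum, hsm, mul_one]
  have hsomemarg : ∀ s, ∑ u', (1 - ε) * m u' s = (1 - ε) * ∑ u', m u' s :=
    fun s => (Finset.mul_sum _ _ _).symm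
  have hnone : ∀ u, (ε * ∑ s, m u s) * Real.log ((ε * ∑ s, m u s) /
      ((ε * (∑ s, m u s) + ∑ s, (1 - ε) * m u s) * (∑ u', ε * ∑ s, m u' s))) = 0 := by
    intro u
    rw [hrowmarg, hnonemarg]
    rcases eq_or_ne (ε * ∑ s, m u s) 0 with h | h
    · rw [h, zero_mul]
    · have h1 : (∑ s, m u s) * ε = ε * ∑ s, m u s := mul_comm _ _
      rw [show (∑ s, m u s) * ε = ε * ∑ s, m u s from mul_comm _ _, div_self h,
        Real.log_one, mul_zero]
  have hsome : ∀ u s, ((1 - ε) * m u s) * Real.log (((1 - ε) * m u s) /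
      ((ε * (∑ s', m u s') + ∑ s', (1 - ε) * m u s') * (∑ u', (1 - ε) * m u' s)))
      = (1 - ε) * (m u s * Real.log (m u s / ((∑ s', m u s') * (∑ u', m u' s)))) := by
    intro u s
    rw [hrowmarg, hsomemarg]
    rcases eq_or_ne (1 - ε) 0 with h | h
    · rw [h]; ring_nf
    · rw [show (∑ s', m u s') * ((1 - ε) * ∑ u', m u' s)
          = ((∑ s', m u s') * (∑ u', m u' s)) * (1 - ε) from by ring,
        show (1 - ε) * m u s = m u s * (1 - ε) from mul_comm _ _,
        mul_div_mul_right _ _ h]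
      ring
  calc ∑ u, ((ε * ∑ s, m u s) * Real.log ((ε * ∑ s, m u s) /
          ((ε * (∑ s, m u s) + ∑ s, (1 - ε) * m u s) * (∑ u', ε * ∑ s, m u' s)))
        + ∑ s, ((1 - ε) * m u s) * Real.log (((1 - ε) * m u s) /
          ((ε * (∑ s', m u s') + ∑ s', (1 - ε) * m u s') * (∑ u', (1 - ε) * m u' s))))
      = ∑ u, ∑ s, (1 - ε) * (m u s * Real.log (m u s / ((∑ s', m u s') * (∑ u', m u' s)))) := by
        apply Finset.sum_congr rfl; intro u _
        rw [hnone, zero_add]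
        exact Finset.sum_congr rfl fun s _ => hsome u s
    _ = (1 - ε) * ∑ u, ∑ s, m u s * Real.log (m u s / ((∑ s', m u s') * (∑ u', m u' s))) := by
        rw [Finset.mul_sum]
        exact Finset.sum_congr rfl fun u _ => (Finset.mul_sum _ _ _).symm

open Finset in
lemma mi_point {U S : Type} [Fintype U] [DecidableEq U] [Fintype S] (u0 : U) (ν : S → ℝ)
    (hν : ∑ s, ν s = 1) :
    MI (fun u s => if u = u0 then ν s else 0) = 0 := by
  simp only [MI]
  apply Finset.sum_eq_zero; intro u _
  rcases eq_or_ne u u0 with h | h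
  · subst h
    apply Finset.sum_eq_zero; intro s _
    have h2 : ∑ a' : U, (if a' = u then ν s else 0) = ν s := by
      rw [Finset.sum_ite_eq' univ u (fun _ => ν s)]; simp
    simp only [eq_self_iff_true, if_true]
    rw [h2, hν, one_mul]
    rcases eq_or_ne (ν s) 0 with h3 | h3
    · rw [h3, zero_mul]
    · rw [div_self h3, Real.log_one, mul_zero]
  · apply Finset.sum_eq_zero; intro s _
    simp [if_neg h]

open Finset in
lemma mi_option_none_zero {U S : Type} [Fintype U] [Fintype S] (m : Option U → S → ℝ)
    (h : ∀ s, m none s = 0) :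
    MI m = MI (fun u s => m (some u) s) := by
  simp only [MI, Fintype.sum_option, h]
  simp [h]

open Finset in
lemma mi_unique {U S : Type} [Unique U] [Fintype U] [Fintype S] (m : U → S → ℝ)
    (hs : ∑ s, m default s = 1) : MI m = 0 := by
  simp only [MI, Fintype.sum_unique]
  apply Finset.sum_eq_zero; intro s _
  rw [hs, one_mul]
  rcases eq_or_ne (m default s) 0 with h3 | h3
  · rw [h3, zero_mul]
  · rw [div_self h3, Real.log_one, mul_zero]

lemma mi_zero {A B : Type} [Fintype A] [Fintype B] : MI (fun (_ : A) (_ : B) => (0:ℝ)) = 0 := by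
  simp [MI]

open Finset in
lemma sow_val_eq {X Y : Type} [Fintype X] [Fintype Y] {V U : Type} [Fintype V] [Fintype U]
    (pXY : X → Y → ℝ) (hnn : ∀ x y, 0 ≤ pXY x y) (hX : ∀ x, 0 < ∑ y, pXY x y)
    (ε : ℝ) (q : V → U → X → ℝ) (hq : ∀ v u x, 0 ≤ q v u x) :
    condMI (fun v u y => ∑ x, ∑ z, q v u x *
        (erasureSource pXY ε x y z / (∑ y', ∑ z', erasureSource pXY ε x y' z')))
      - condMI (fun v u z => ∑ x, ∑ y, q v u x *
        (erasureSource pXY ε x y z / (∑ y', ∑ z', erasureSource pXY ε x y' z')))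
      = ∑ v, (∑ u, ∑ x, q v u x) *
          (MI (fun u y => ∑ x, (q v u x / (∑ u', ∑ x', q v u' x'))
              * (pXY x y / ∑ y', pXY x y'))
            - (1 - ε) * MI (fun u x => q v u x / (∑ u', ∑ x', q v u' x'))) := by
  classical
  have hzsum : ∀ x y, ∑ z, erasureSource pXY ε x y z = pXY x y := by
    intro x y
    rw [Fintype.sum_option]
    have h0 : erasureSource pXY ε x y none = ε * pXY x y := rfl
    have h1 : ∀ w : X × Y, erasureSource pXY ε x y (some w)
        = if w = (x, y) then (1 - ε) * pXY x y else 0 := fun w => rfl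
    rw [h0, Finset.sum_congr rfl fun w _ => h1 w,
      Finset.sum_ite_eq' univ (x, y) (fun _ => (1 - ε) * pXY x y)]
    simp; ring
  have hA : ∀ x, ∑ y', ∑ z', erasureSource pXY ε x y' z' = ∑ y', pXY x y' := by
    intro x; exact Finset.sum_congr rfl fun y _ => hzsum x y
  have hWrow : ∀ x, ∑ y, pXY x y / (∑ y', pXY x y') = 1 := by
    intro x; rw [← Finset.sum_div, div_self (ne_of_gt (hX x))]
  have hF : ∀ v u y, (∑ x, ∑ z, q v u x *
        (erasureSource pXY ε x y z / (∑ y', ∑ z', erasureSource pXY ε x y' z')))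
      = ∑ x, q v u x * (pXY x y / ∑ y', pXY x y') := by
    intro v u y
    apply Finset.sum_congr rfl; intro x _
    rw [← Finset.mul_sum, ← Finset.sum_div, hzsum x y, hA x]
  have hGnone : ∀ v u, (∑ x, ∑ y, q v u x *
        (erasureSource pXY ε x y none / (∑ y', ∑ z', erasureSource pXY ε x y' z')))
      = ε * ∑ x, q v u x := by
    intro v u
    rw [Finset.mul_sum]
    apply Finset.sum_congr rfl; intro x _
    calc ∑ y, q v u x * (erasureSource pXY ε x y none /
            (∑ y', ∑ z', erasureSource pXY ε x y' z'))
        = q v u x * ((ε * ∑ y, pXY x y) / (∑ y', pXY x y')) := by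
          rw [← Finset.mul_sum, ← Finset.sum_div, hA x]
          congr 2
          rw [Finset.mul_sum]
          exact Finset.sum_congr rfl fun y _ => rfl
      _ = ε * q v u x := by
          rw [mul_div_assoc, div_self (ne_of_gt (hX x)), mul_one]; ring
  have hGsome : ∀ v u (w : X × Y), (∑ x, ∑ y, q v u x *
        (erasureSource pXY ε x y (some w) / (∑ y', ∑ z', erasureSource pXY ε x y' z')))
      = (1 - ε) * (q v u w.1 * (pXY w.1 w.2 / ∑ y', pXY w.1 y')) := by
    intro v u w
    have hterm : ∀ x y, q v u x * (erasureSource pXY ε x y (some w) /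
          (∑ y', ∑ z', erasureSource pXY ε x y' z'))
        = if w = (x, y) then (1 - ε) * (q v u x * (pXY x y / ∑ y', pXY x y')) else 0 := by
      intro x y
      have h1 : erasureSource pXY ε x y (some w)
          = if w = (x, y) then (1 - ε) * pXY x y else 0 := rfl
      rw [h1, hA x]
      split
      · rw [mul_div_assoc]; ring
      · simp
    rw [Finset.sum_congr rfl fun x _ => Finset.sum_congr rfl fun y _ => hterm x y]
    have hsum2 : ∑ i : X × Y, (if w = i then
          (1 - ε) * (q v u i.1 * (pXY i.1 i.2 / ∑ y', pXY i.1 y')) else 0)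
        = (1 - ε) * (q v u w.1 * (pXY w.1 w.2 / ∑ y', pXY w.1 y')) := by
      rw [Finset.sum_ite_eq univ w]; simp
    rw [← hsum2, Fintype.sum_prod_type]
  have hwF : ∀ v, (∑ u, ∑ y, ∑ x, q v u x * (pXY x y / ∑ y', pXY x y'))
      = ∑ u, ∑ x, q v u x := by
    intro v
    apply Finset.sum_congr rfl; intro u _
    rw [Finset.sum_comm]
    apply Finset.sum_congr rfl; intro x _
    rw [← Finset.mul_sum, hWrow, mul_one]
  have hwG : ∀ v u, (ε * ∑ x, q v u x) + (∑ w : X × Y,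
        (1 - ε) * (q v u w.1 * (pXY w.1 w.2 / ∑ y', pXY w.1 y'))) = ∑ x, q v u x := by
    intro v u
    rw [Fintype.sum_prod_type]
    have hx : ∀ x, ∑ y, (1 - ε) * (q v u x * (pXY x y / ∑ y', pXY x y'))
        = (1 - ε) * q v u x := by
      intro x; rw [← Finset.mul_sum, ← Finset.mul_sum, hWrow, mul_one]
    rw [Finset.sum_congr rfl fun x _ => hx x, ← Finset.mul_sum]
    ring
  -- condMI of the Y side
  have hcF : condMI (fun v u y => ∑ x, ∑ z, q v u x *
        (erasureSource pXY ε x y z / (∑ y', ∑ z', erasureSource pXY ε x y' z')))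
      = ∑ v, (∑ u, ∑ x, q v u x) * MI (fun u y => ∑ x,
          (q v u x / (∑ u', ∑ x', q v u' x')) * (pXY x y / ∑ y', pXY x y')) := by
    simp only [condMI]
    apply Finset.sum_congr rfl; intro v _
    have hwv : (∑ u, ∑ y, ∑ x, ∑ z, q v u x *
          (erasureSource pXY ε x y z / (∑ y', ∑ z', erasureSource pXY ε x y' z')))
        = ∑ u, ∑ x, q v u x := by
      rw [Finset.sum_congr rfl fun u _ => Finset.sum_congr rfl fun y _ => hF v u y]
      exact hwF v
    rw [hwv]
    refine congrArg₂ _ rfl (congrArg MI ?_)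
    funext u y
    rw [hF v u y, Finset.sum_div]
    exact Finset.sum_congr rfl fun x _ => mul_div_right_comm _ _ _
  -- condMI of the Z side
  have hcG : condMI (fun v u z => ∑ x, ∑ y, q v u x *
        (erasureSource pXY ε x y z / (∑ y', ∑ z', erasureSource pXY ε x y' z')))
      = ∑ v, (∑ u, ∑ x, q v u x) * ((1 - ε) *
          MI (fun u x => q v u x / (∑ u', ∑ x', q v u' x'))) := by
    simp only [condMI]
    apply Finset.sum_congr rfl; intro v _
    have hwv : (∑ u, ∑ z, ∑ x, ∑ y, q v u x *
          (erasureSource pXY ε x y z / (∑ y', ∑ z', erasureSource pXY ε x y' z')))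
        = ∑ u, ∑ x, q v u x := by
      apply Finset.sum_congr rfl; intro u _
      rw [Fintype.sum_option, hGnone v u,
        Finset.sum_congr rfl fun w _ => hGsome v u w]
      exact hwG v u
    rw [hwv]
    rcases eq_or_lt_of_le (Finset.sum_nonneg fun u (_ : u ∈ univ) =>
        Finset.sum_nonneg fun x (_ : x ∈ univ) => hq v u x) with h0 | h0
    · rw [← h0, zero_mul, zero_mul]
    · congr 1
      have hm1 : ∑ u, ∑ w : X × Y, (q v u w.1 / (∑ u', ∑ x', q v u' x'))
            * (pXY w.1 w.2 / ∑ y', pXY w.1 y') = 1 := by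
        have hx : ∀ u, ∑ w : X × Y, (q v u w.1 / (∑ u', ∑ x', q v u' x'))
              * (pXY w.1 w.2 / ∑ y', pXY w.1 y')
            = (∑ x, q v u x) / (∑ u', ∑ x', q v u' x') := by
          intro u
          rw [Fintype.sum_prod_type]
          have hy : ∀ x, ∑ y, (q v u x / (∑ u', ∑ x', q v u' x'))
                * (pXY x y / ∑ y', pXY x y')
              = q v u x / (∑ u', ∑ x', q v u' x') := by
            intro x; rw [← Finset.mul_sum, hWrow, mul_one]
          rw [Finset.sum_congr rfl fun x _ => hy x, ← Finset.sum_div]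
        rw [Finset.sum_congr rfl fun u _ => hx u, ← Finset.sum_div,
          div_self (ne_of_gt h0)]
      have hqz : (fun u (z : Option (X × Y)) => (∑ x, ∑ y, q v u x *
            (erasureSource pXY ε x y z / (∑ y', ∑ z', erasureSource pXY ε x y' z')))
              / (∑ u', ∑ x', q v u' x'))
          = fun u (z : Option (X × Y)) => Option.elim z
              (ε * ∑ w : X × Y, (q v u w.1 / (∑ u', ∑ x', q v u' x'))
                * (pXY w.1 w.2 / ∑ y', pXY w.1 y'))
              (fun w => (1 - ε) * ((q v u w.1 / (∑ u', ∑ x', q v u' x'))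
                * (pXY w.1 w.2 / ∑ y', pXY w.1 y'))) := by
        funext u z
        match z with
        | none =>
          simp only [Option.elim]
          rw [hGnone v u]
          have hx : ∀ u, ∑ w : X × Y, (q v u w.1 / (∑ u', ∑ x', q v u' x'))
                * (pXY w.1 w.2 / ∑ y', pXY w.1 y')
              = (∑ x, q v u x) / (∑ u', ∑ x', q v u' x') := by
            intro u
            rw [Fintype.sum_prod_type]
            have hy : ∀ x, ∑ y, (q v u x / (∑ u', ∑ x', q v u' x'))
                  * (pXY x y / ∑ y', pXY x y')
                = q v u x / (∑ u', ∑ x', q v u' x') := by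
              intro x; rw [← Finset.mul_sum, hWrow, mul_one]
            rw [Finset.sum_congr rfl fun x _ => hy x, ← Finset.sum_div]
          rw [hx u, mul_div_assoc]
        | some w =>
          simp only [Option.elim]
          rw [hGsome v u w, mul_div_assoc, mul_div_right_comm]
      rw [hqz]
      rw [mi_erasure (fun u (w : X × Y) => (q v u w.1 / (∑ u', ∑ x', q v u' x'))
          * (pXY w.1 w.2 / ∑ y', pXY w.1 y')) ε
        (fun u w => mul_nonneg (div_nonneg (hq v u w.1) h0.le)
          (div_nonneg (hnn w.1 w.2) (Finset.sum_nonneg fun y _ => hnn w.1 y)))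
        hm1]
      congr 1
      exact mi_pair (fun u x => q v u x / (∑ u', ∑ x', q v u' x'))
        (fun x y => pXY x y / ∑ y', pXY x y')
        (fun x y => div_nonneg (hnn x y) (Finset.sum_nonneg fun y' _ => hnn x y'))
        hWrow
  rw [hcF, hcG, ← Finset.sum_sub_distrib]
  exact Finset.sum_congr rfl fun v _ => (mul_sub _ _ _).symm

open Finset in
lemma erasure_marg {X Y : Type} [Fintype X] [Fintype Y] (pXY : X → Y → ℝ) (ε : ℝ) (x : X) :
    ∑ y, ∑ z, erasureSource pXY ε x y z = ∑ y, pXY x y := by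
  classical
  apply Finset.sum_congr rfl; intro y _
  rw [Fintype.sum_option]
  have h0 : erasureSource pXY ε x y none = ε * pXY x y := rfl
  have h1 : ∀ w : X × Y, erasureSource pXY ε x y (some w)
      = if w = (x, y) then (1 - ε) * pXY x y else 0 := fun w => rfl
  rw [h0, Finset.sum_congr rfl fun w _ => h1 w,
    Finset.sum_ite_eq' univ (x, y) (fun _ => (1 - ε) * pXY x y)]
  simp; ring

open Finset in
lemma sow_elem_le_log {X Y : Type} [Fintype X] [Fintype Y]
    (pXY : X → Y → ℝ) (hnn : ∀ x y, 0 ≤ pXY x y) (hsum : ∑ x, ∑ y, pXY x y = 1)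
    (hX : ∀ x, 0 < ∑ y, pXY x y)
    (ε : ℝ) (hε1 : ε ≤ 1) :
    ∀ r ∈ { r : ℝ | ∃ (V U : Type) (iV : Fintype V) (iU : Fintype U)
      (q : V → U → X → ℝ), by
      letI := iV; letI := iU
      exact (∀ v u x, 0 ≤ q v u x) ∧
        (∑ v, ∑ u, ∑ x, q v u x) = 1 ∧
        (∀ x, ∑ v, ∑ u, q v u x = ∑ y, ∑ z, erasureSource pXY ε x y z) ∧
        (∀ v u x, 0 < (∑ x', q v u x') →
          q v u x / (∑ x', q v u x')
            = (∑ v', q v' u x) / (∑ v', ∑ x', q v' u x')) ∧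
        r = condMI (fun v u y => ∑ x, ∑ z, q v u x * (erasureSource pXY ε x y z / (∑ y', ∑ z', erasureSource pXY ε x y' z')))
          - condMI (fun v u z => ∑ x, ∑ y, q v u x * (erasureSource pXY ε x y z / (∑ y', ∑ z', erasureSource pXY ε x y' z'))) },
    r ≤ Real.log (Fintype.card Y) := by
  rintro r ⟨V, U, iV, iU, q, hqnn, hqtot, hqmarg, hqmark, rfl⟩
  letI := iV; letI := iU
  rw [sow_val_eq pXY hnn hX ε q hqnn]
  have hlog0 : 0 ≤ Real.log (Fintype.card Y) := by
    rcases isEmpty_or_nonempty Y with h | h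
    · exfalso; simp at hsum
    · apply Real.log_nonneg; exact_mod_cast Fintype.card_pos
  have hvle : ∀ v, (∑ u, ∑ x, q v u x) *
      (MI (fun u y => ∑ x, (q v u x / (∑ u', ∑ x', q v u' x')) * (pXY x y / ∑ y', pXY x y'))
        - (1 - ε) * MI (fun u x => q v u x / (∑ u', ∑ x', q v u' x')))
      ≤ (∑ u, ∑ x, q v u x) * Real.log (Fintype.card Y) := by
    intro v
    rcases eq_or_lt_of_le (Finset.sum_nonneg fun u (_ : u ∈ univ) =>
        Finset.sum_nonneg fun x (_ : x ∈ univ) => hqnn v u x) with h0 | h0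
    · rw [← h0, zero_mul, zero_mul]
    · apply mul_le_mul_of_nonneg_left _ h0.le
      have hann : ∀ u x, 0 ≤ q v u x / (∑ u', ∑ x', q v u' x') :=
        fun u x => div_nonneg (hqnn v u x) h0.le
      have hasum : ∑ u, ∑ x, q v u x / (∑ u', ∑ x', q v u' x') = 1 := by
        rw [Finset.sum_congr rfl fun u _ => (Finset.sum_div _ _ _).symm, ← Finset.sum_div]
        exact div_self (ne_of_gt h0)
      have hIa : 0 ≤ MI (fun u x => q v u x / (∑ u', ∑ x', q v u' x')) :=
        mi_nonneg _ hann (le_of_eq hasum)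
      have hbnn : ∀ u y, 0 ≤ ∑ x, (q v u x / (∑ u', ∑ x', q v u' x'))
          * (pXY x y / ∑ y', pXY x y') :=
        fun u y => Finset.sum_nonneg fun x _ => mul_nonneg (hann u x)
          (div_nonneg (hnn x y) (Finset.sum_nonneg fun y' _ => hnn x y'))
      have hbsum : ∑ u, ∑ y, ∑ x, (q v u x / (∑ u', ∑ x', q v u' x'))
          * (pXY x y / ∑ y', pXY x y') = 1 := by
        rw [← hasum]
        apply Finset.sum_congr rfl; intro u _
        rw [Finset.sum_comm]
        apply Finset.sum_congr rfl; intro x _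
        rw [← Finset.mul_sum, ← Finset.sum_div, div_self (ne_of_gt (hX x)), mul_one]
      have hIb := mi_le_log_card _ hbnn hbsum
      have h1ε : 0 ≤ (1 - ε) * MI (fun u x => q v u x / (∑ u', ∑ x', q v u' x')) :=
        mul_nonneg (by linarith) hIa
      linarith
  refine le_trans (Finset.sum_le_sum fun v _ => hvle v) (le_of_eq ?_)
  rw [← Finset.sum_mul, hqtot, one_mul]

open Finset in
lemma sow_elem_nonpos {X Y : Type} [Fintype X] [Fintype Y]
    (pXY : X → Y → ℝ) (hnn : ∀ x y, 0 ≤ pXY x y) (hsum : ∑ x, ∑ y, pXY x y = 1)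
    (hX : ∀ x, 0 < ∑ y, pXY x y)
    (ε : ℝ) (heta : ε ≤ 1 - eta (fun x y => pXY x y / ∑ y', pXY x y')) :
    ∀ r ∈ { r : ℝ | ∃ (V U : Type) (iV : Fintype V) (iU : Fintype U)
      (q : V → U → X → ℝ), by
      letI := iV; letI := iU
      exact (∀ v u x, 0 ≤ q v u x) ∧
        (∑ v, ∑ u, ∑ x, q v u x) = 1 ∧
        (∀ x, ∑ v, ∑ u, q v u x = ∑ y, ∑ z, erasureSource pXY ε x y z) ∧
        (∀ v u x, 0 < (∑ x', q v u x') →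
          q v u x / (∑ x', q v u x')
            = (∑ v', q v' u x) / (∑ v', ∑ x', q v' u x')) ∧
        r = condMI (fun v u y => ∑ x, ∑ z, q v u x * (erasureSource pXY ε x y z / (∑ y', ∑ z', erasureSource pXY ε x y' z')))
          - condMI (fun v u z => ∑ x, ∑ y, q v u x * (erasureSource pXY ε x y z / (∑ y', ∑ z', erasureSource pXY ε x y' z'))) },
    r ≤ 0 := by
  classical
  have hW0 : ∀ x y, 0 ≤ pXY x y / ∑ y', pXY x y' :=
    fun x y => div_nonneg (hnn x y) (le_of_lt (hX x))
  have hWrow : ∀ x, ∑ y, pXY x y / (∑ y', pXY x y') = 1 := fun x => by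
    rw [← Finset.sum_div, div_self (ne_of_gt (hX x))]
  have hub : ∀ (q0 : X → ℝ), IsPMF q0 → ∀ (U' : Type) (iU' : Fintype U') (pu' : X → U' → ℝ),
      (∀ x, IsPMF (pu' x)) → 0 < @MI U' X iU' _ (fun u x => q0 x * pu' x u) →
      @MI U' Y iU' _ (fun u b => ∑ x, q0 x * pu' x u * (pXY x b / ∑ y', pXY x y'))
        / @MI U' X iU' _ (fun u x => q0 x * pu' x u) ≤ 1 := by
    intro q0 hq0 U' iU' pu' hpmf' hpos'
    letI := iU'
    rw [div_le_one hpos']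
    have hmnn : ∀ u x, 0 ≤ q0 x * pu' x u := fun u x => mul_nonneg (hq0.1 x) ((hpmf' x).1 u)
    have hmsum : ∑ u, ∑ x, q0 x * pu' x u = 1 := by
      rw [Finset.sum_comm, Finset.sum_congr rfl fun x (_ : x ∈ univ) => by
        rw [← Finset.mul_sum, (hpmf' x).2, mul_one]]
      exact hq0.2
    exact mi_dpi (fun u x => q0 x * pu' x u) _ hmnn hmsum hW0 hWrow
  have hsdpcle : ∀ q0 : X → ℝ, IsPMF q0 →
      sdpc q0 (fun x y => pXY x y / ∑ y', pXY x y') ≤ 1 := by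
    intro q0 hq0
    unfold sdpc
    apply Real.sSup_le _ zero_le_one
    rintro r ⟨U', iU', pu', hpmf', hpos', rfl⟩
    exact hub q0 hq0 U' iU' pu' hpmf' hpos'
  have hsle : ∀ q0 : X → ℝ, IsPMF q0 →
      sdpc q0 (fun x y => pXY x y / ∑ y', pXY x y')
        ≤ eta (fun x y => pXY x y / ∑ y', pXY x y') := by
    intro q0 hq0
    unfold eta
    refine le_csSup ⟨1, ?_⟩ ⟨q0, hq0, rfl⟩
    rintro r ⟨qA, hqA, rfl⟩
    exact hsdpcle qA hqA
  have hcore : ∀ (U : Type) (iU : Fintype U) (a : U → X → ℝ),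
      (∀ u x, 0 ≤ a u x) → (∑ u ∈ @Finset.univ U iU, ∑ x, a u x) = 1 →
      @MI U Y iU _ (fun u y => ∑ x, a u x * (pXY x y / ∑ y', pXY x y'))
        ≤ (1 - ε) * @MI U X iU _ a := by
    intro U iU a hann hasum
    letI := iU
    have hIa0 : 0 ≤ MI a := mi_nonneg a hann (le_of_eq hasum)
    have hdpi : MI (fun u y => ∑ x, a u x * (pXY x y / ∑ y', pXY x y')) ≤ MI a :=
      mi_dpi a _ hann hasum hW0 hWrow
    rcases hIa0.eq_or_lt with h0 | h0
    · rw [← h0, mul_zero]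
      exact le_trans hdpi (le_of_eq h0.symm)
    · haveI hUne : Nonempty U := by
        rcases isEmpty_or_nonempty U with h | h
        · exfalso; rw [show MI a = 0 from by simp [MI]] at h0; exact lt_irrefl 0 h0
        · exact h
      have hcardU : (0:ℝ) < Fintype.card U := by exact_mod_cast Fintype.card_pos
      have hqvnn : ∀ x, 0 ≤ ∑ u, a u x := fun x => Finset.sum_nonneg fun u _ => hann u x
      have hqvpmf : IsPMF (fun x => ∑ u, a u x) :=
        ⟨hqvnn, by rw [Finset.sum_comm]; exact hasum⟩
      set pu : X → U → ℝ := fun x u => if (∑ u', a u' x) = 0 then (Fintype.card U : ℝ)⁻¹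
        else a u x / (∑ u', a u' x) with hpu
      have hpueq : ∀ u x, (∑ u', a u' x) * pu x u = a u x := by
        intro u x
        rw [hpu]
        dsimp only
        rcases eq_or_ne (∑ u', a u' x) 0 with h | h
        · rw [if_pos h, h, zero_mul]
          have h1 : a u x ≤ ∑ u', a u' x :=
            Finset.single_le_sum (fun u' _ => hann u' x) (Finset.mem_univ u)
          have h2 := hann u x
          rw [h] at h1
          linarith
        · rw [if_neg h, mul_comm, div_mul_cancel₀ _ h]
      have hpupmf : ∀ x, IsPMF (pu x) := by
        intro x; constructor
        · intro u; rw [hpu]; dsimp only; split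
          · positivity
          · exact div_nonneg (hann u x) (hqvnn x)
        · rw [hpu]; dsimp only
          rcases eq_or_ne (∑ u', a u' x) 0 with h | h
          · rw [Finset.sum_congr rfl fun u (_ : u ∈ univ) => if_pos h, Finset.sum_const,
              Finset.card_univ, nsmul_eq_mul, mul_inv_cancel₀ (ne_of_gt hcardU)]
          · rw [Finset.sum_congr rfl fun u (_ : u ∈ univ) => if_neg h, ← Finset.sum_div,
              div_self h]
      have hmeq : (fun u x => (∑ u', a u' x) * pu x u) = a :=
        funext fun u => funext fun x => hpueq u x
      have hratio : MI (fun u y => ∑ x, a u x * (pXY x y / ∑ y', pXY x y')) / MI a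
          ≤ eta (fun x y => pXY x y / ∑ y', pXY x y') := by
        refine le_trans ?_ (hsle (fun x => ∑ u, a u x) hqvpmf)
        unfold sdpc
        refine le_csSup ⟨1, ?_⟩ ?_
        · rintro r ⟨U', iU', pu', hpmf', hpos', rfl⟩
          exact hub (fun x => ∑ u, a u x) hqvpmf U' iU' pu' hpmf' hpos'
        · refine ⟨U, inferInstance, pu, hpupmf, ?_, ?_⟩
          · show 0 < MI (fun u x => (∑ u', a u' x) * pu x u)
            rw [congrArg MI hmeq]
            exact h0
          · show MI (fun u y => ∑ x, a u x * (pXY x y / ∑ y', pXY x y')) / MI a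
              = MI (fun u b => ∑ x, (∑ u', a u' x) * pu x u * (pXY x b / ∑ y', pXY x y'))
                / MI (fun u x => (∑ u', a u' x) * pu x u)
            have e1 : (fun (u : U) (b : Y) => ∑ x, (∑ u', a u' x) * pu x u
                  * (pXY x b / ∑ y', pXY x y'))
                = fun u b => ∑ x, a u x * (pXY x b / ∑ y', pXY x y') := by
              funext u b
              exact Finset.sum_congr rfl fun x _ => by rw [hpueq u x]
            rw [e1, congrArg MI hmeq]
      rw [div_le_iff₀ h0] at hratio
      have h2 : eta (fun x y => pXY x y / ∑ y', pXY x y') * MI a ≤ (1 - ε) * MI a :=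
        mul_le_mul_of_nonneg_right (by linarith) hIa0
      linarith
  rintro r ⟨V, U, iV, iU, q, hqnn, hqtot, hqmarg, hqmark, rfl⟩
  letI := iV; letI := iU
  rw [sow_val_eq pXY hnn hX ε q hqnn]
  apply Finset.sum_nonpos
  intro v _
  rcases eq_or_lt_of_le (Finset.sum_nonneg fun u (_ : u ∈ univ) =>
      Finset.sum_nonneg fun x (_ : x ∈ univ) => hqnn v u x) with h0 | h0
  · rw [← h0, zero_mul]
  · have hann : ∀ u x, 0 ≤ q v u x / (∑ u', ∑ x', q v u' x') :=
      fun u x => div_nonneg (hqnn v u x) h0.le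
    have hasum : ∑ u, ∑ x, q v u x / (∑ u', ∑ x', q v u' x') = 1 := by
      rw [Finset.sum_congr rfl fun u _ => (Finset.sum_div _ _ _).symm, ← Finset.sum_div]
      exact div_self (ne_of_gt h0)
    have hb : MI (fun u y => ∑ x, (q v u x / (∑ u', ∑ x', q v u' x'))
          * (pXY x y / ∑ y', pXY x y'))
        ≤ (1 - ε) * MI (fun u x => q v u x / (∑ u', ∑ x', q v u' x')) :=
      hcore U iU (fun u x => q v u x / (∑ u', ∑ x', q v u' x')) hann hasum
    have h3 : (∑ u, ∑ x, q v u x) *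
        (MI (fun u y => ∑ x, (q v u x / (∑ u', ∑ x', q v u' x'))
            * (pXY x y / ∑ y', pXY x y'))
          - (1 - ε) * MI (fun u x => q v u x / (∑ u', ∑ x', q v u' x')))
        ≤ (∑ u, ∑ x, q v u x) * 0 :=
      mul_le_mul_of_nonneg_left (by linarith) h0.le
    simpa using h3

open Finset in
lemma zero_mem_sow {X Y : Type} [Fintype X] [Fintype Y]
    (pXY : X → Y → ℝ) (hnn : ∀ x y, 0 ≤ pXY x y) (hsum : ∑ x, ∑ y, pXY x y = 1)
    (hX : ∀ x, 0 < ∑ y, pXY x y) (ε : ℝ) :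
    (0:ℝ) ∈ { r : ℝ | ∃ (V U : Type) (iV : Fintype V) (iU : Fintype U)
      (q : V → U → X → ℝ), by
      letI := iV; letI := iU
      exact (∀ v u x, 0 ≤ q v u x) ∧
        (∑ v, ∑ u, ∑ x, q v u x) = 1 ∧
        (∀ x, ∑ v, ∑ u, q v u x = ∑ y, ∑ z, erasureSource pXY ε x y z) ∧
        (∀ v u x, 0 < (∑ x', q v u x') →
          q v u x / (∑ x', q v u x')
            = (∑ v', q v' u x) / (∑ v', ∑ x', q v' u x')) ∧
        r = condMI (fun v u y => ∑ x, ∑ z, q v u x * (erasureSource pXY ε x y z / (∑ y', ∑ z', erasureSource pXY ε x y' z')))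
          - condMI (fun v u z => ∑ x, ∑ y, q v u x * (erasureSource pXY ε x y z / (∑ y', ∑ z', erasureSource pXY ε x y' z'))) } := by
  classical
  refine ⟨PUnit, PUnit, inferInstance, inferInstance, fun _ _ x => ∑ y, pXY x y,
    fun _ _ x => le_of_lt (hX x), ?_, ?_, ?_, ?_⟩
  · simp only [Fintype.sum_unique]
    exact hsum
  · intro x
    simp only [Fintype.sum_unique]
    rw [erasure_marg pXY ε x]
  · intro v u x _
    simp only [Fintype.sum_unique]
  · rw [sow_val_eq pXY hnn hX ε _ (fun _ _ x => le_of_lt (hX x))]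
    simp only [Fintype.sum_unique]
    rw [hsum]
    have hMA : MI (fun (_ : PUnit) x => (∑ y, pXY x y) / 1) = 0 := by
      apply mi_unique
      simp only [div_one]
      exact hsum
    have hMB : MI (fun (_ : PUnit) y => ∑ x, ((∑ y', pXY x y') / 1)
        * (pXY x y / ∑ y', pXY x y')) = 0 := by
      apply mi_unique
      rw [Finset.sum_comm]
      rw [Finset.sum_congr rfl fun x (_ : x ∈ univ) => by
        rw [div_one, ← Finset.mul_sum, ← Finset.sum_div, div_self (ne_of_gt (hX x)), mul_one]]
      exact hsum
    rw [hMA, hMB]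
    ring

private noncomputable def Qwit {X U : Type} (pX q0 : X → ℝ) (pu : X → U → ℝ) (δ : ℝ) :
    Bool → Option U → X → ℝ
  | true, some u, x => δ * (q0 x * pu x u)
  | true, none, _ => 0
  | false, none, x => pX x - δ * q0 x
  | false, some _, _ => 0

open Finset in
lemma pos_mem_sow {X Y : Type} [Fintype X] [Fintype Y]
    (pXY : X → Y → ℝ) (hnn : ∀ x y, 0 ≤ pXY x y) (hsum : ∑ x, ∑ y, pXY x y = 1)
    (hX : ∀ x, 0 < ∑ y, pXY x y)
    (ε : ℝ) (hε1 : ε ≤ 1)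
    (hlt : 1 - eta (fun x y => pXY x y / ∑ y', pXY x y') < ε) :
    ∃ r ∈ { r : ℝ | ∃ (V U : Type) (iV : Fintype V) (iU : Fintype U)
      (q : V → U → X → ℝ), by
      letI := iV; letI := iU
      exact (∀ v u x, 0 ≤ q v u x) ∧
        (∑ v, ∑ u, ∑ x, q v u x) = 1 ∧
        (∀ x, ∑ v, ∑ u, q v u x = ∑ y, ∑ z, erasureSource pXY ε x y z) ∧
        (∀ v u x, 0 < (∑ x', q v u x') →
          q v u x / (∑ x', q v u x')
            = (∑ v', q v' u x) / (∑ v', ∑ x', q v' u x')) ∧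
        r = condMI (fun v u y => ∑ x, ∑ z, q v u x * (erasureSource pXY ε x y z / (∑ y', ∑ z', erasureSource pXY ε x y' z')))
          - condMI (fun v u z => ∑ x, ∑ y, q v u x * (erasureSource pXY ε x y z / (∑ y', ∑ z', erasureSource pXY ε x y' z'))) },
    0 < r := by
  classical
  have hexists : ∀ {s : Set ℝ} {a : ℝ}, a < sSup s → 0 ≤ a → ∃ b ∈ s, a < b := by
    intro s a h ha
    rcases s.eq_empty_or_nonempty with rfl | hne
    · rw [Real.sSup_empty] at h; linarith
    · exact exists_lt_of_lt_csSup hne h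
  haveI hXne : Nonempty X := by
    rcases isEmpty_or_nonempty X with h | h
    · exfalso; simp at hsum
    · exact h
  have h1e : 1 - ε < eta (fun x y => pXY x y / ∑ y', pXY x y') := by linarith
  have h1e0 : 0 ≤ 1 - ε := by linarith
  unfold eta at h1e
  obtain ⟨r0, ⟨q0, hq0pmf, rfl⟩, hr0⟩ := hexists h1e h1e0
  unfold sdpc at hr0
  obtain ⟨r1, ⟨U, iU, pu, hpmf, hpos, rfl⟩, hr1gt⟩ := hexists hr0 h1e0
  letI := iU
  rw [lt_div_iff₀ hpos] at hr1gt
  -- hr1gt : (1 - ε) * MI (fun u x => q0 x * pu x u) < MI (fun u b => ∑ x, ...)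
  have hXuniv : (univ : Finset X).Nonempty := univ_nonempty
  set δ := univ.inf' hXuniv (fun x => ∑ y, pXY x y) with hδdef
  have hδpos : 0 < δ := by
    rw [hδdef, Finset.lt_inf'_iff]; intro x _; exact hX x
  have hδle : ∀ x, δ ≤ ∑ y, pXY x y := fun x => Finset.inf'_le _ (mem_univ x)
  have hpXle1 : ∀ x, ∑ y, pXY x y ≤ 1 := by
    intro x; rw [← hsum]
    exact Finset.single_le_sum (f := fun x => ∑ y, pXY x y)
      (fun x _ => Finset.sum_nonneg fun y _ => hnn x y) (mem_univ x)
  have hδ1 : δ ≤ 1 := le_trans (hδle (Classical.arbitrary X)) (hpXle1 _)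
  have hq0le1 : ∀ x, q0 x ≤ 1 := by
    intro x; rw [← hq0pmf.2]
    exact Finset.single_le_sum (fun x _ => hq0pmf.1 x) (mem_univ x)
  set Q : Bool → Option U → X → ℝ := Qwit (fun x => ∑ y, pXY x y) q0 pu δ with hQdef
  have hQts : ∀ u x, Q true (some u) x = δ * (q0 x * pu x u) := fun _ _ => rfl
  have hQtn : ∀ x, Q true none x = 0 := fun _ => rfl
  have hQfn : ∀ x, Q false none x = (∑ y, pXY x y) - δ * q0 x := fun _ => rfl
  have hQfs : ∀ u x, Q false (some u) x = 0 := fun _ _ => rfl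
  have hQnn : ∀ v u x, 0 ≤ Q v u x := by
    intro v u x
    match v, u with
    | true, some u =>
      rw [hQts]
      exact mul_nonneg hδpos.le (mul_nonneg (hq0pmf.1 x) ((hpmf x).1 u))
    | true, none => rw [hQtn]
    | false, none =>
      rw [hQfn]
      have h1 : δ * q0 x ≤ δ * 1 := mul_le_mul_of_nonneg_left (hq0le1 x) hδpos.le
      have h2 := hδle x
      linarith
    | false, some u => rw [hQfs]
  have hwt : (∑ u' : Option U, ∑ x, Q true u' x) = δ := by
    rw [Fintype.sum_option]
    have e1 : (∑ x, Q true none x) = 0 := Finset.sum_eq_zero fun x _ => hQtn x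
    have e2 : (∑ u : U, ∑ x, Q true (some u) x) = δ := by
      rw [Finset.sum_comm]
      have e3 : ∀ x, (∑ u : U, Q true (some u) x) = δ * q0 x := by
        intro x
        rw [Finset.sum_congr rfl fun u (_ : u ∈ univ) => hQts u x, ← Finset.mul_sum,
          ← Finset.mul_sum, (hpmf x).2, mul_one]
      rw [Finset.sum_congr rfl fun x (_ : x ∈ univ) => e3 x, ← Finset.mul_sum, hq0pmf.2,
        mul_one]
    rw [e1, e2, zero_add]
  have hwf : (∑ u' : Option U, ∑ x, Q false u' x) = 1 - δ := by
    rw [Fintype.sum_option]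
    have e1 : (∑ x, Q false none x) = 1 - δ := by
      rw [Finset.sum_congr rfl fun x (_ : x ∈ univ) => hQfn x, Finset.sum_sub_distrib, hsum,
        ← Finset.mul_sum, hq0pmf.2, mul_one]
    have e2 : (∑ u : U, ∑ x, Q false (some u) x) = 0 :=
      Finset.sum_eq_zero fun u _ => Finset.sum_eq_zero fun x _ => hQfs u x
    rw [e1, e2, add_zero]
  have hQtot : (∑ v, ∑ u', ∑ x, Q v u' x) = 1 := by
    rw [Fintype.sum_bool, hwt, hwf]; ring
  have hQmarg : ∀ x, (∑ v, ∑ u', Q v u' x) = ∑ y, ∑ z, erasureSource pXY ε x y z := by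
    intro x
    rw [erasure_marg pXY ε x, Fintype.sum_bool, Fintype.sum_option, Fintype.sum_option,
      hQtn x, hQfn x]
    have e1 : (∑ u : U, Q true (some u) x) = δ * q0 x := by
      rw [Finset.sum_congr rfl fun u (_ : u ∈ univ) => hQts u x, ← Finset.mul_sum,
        ← Finset.mul_sum, (hpmf x).2, mul_one]
    have e2 : (∑ u : U, Q false (some u) x) = 0 := Finset.sum_eq_zero fun u _ => hQfs u x
    rw [e1, e2]
    ring
  have hQmark : ∀ v u' x, 0 < (∑ x', Q v u' x') →
      Q v u' x / (∑ x', Q v u' x')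
        = (∑ v', Q v' u' x) / (∑ v', ∑ x', Q v' u' x') := by
    intro v u' x
    match v, u' with
    | true, some u =>
      intro _
      rw [Fintype.sum_bool, Fintype.sum_bool]
      rw [hQfs u x, add_zero]
      rw [Finset.sum_congr rfl fun x' (_ : x' ∈ univ) => hQfs u x', Finset.sum_const_zero,
        add_zero]
    | true, none =>
      intro hpos'
      exfalso
      rw [Finset.sum_congr rfl fun x' (_ : x' ∈ univ) => hQtn x',
        Finset.sum_const_zero] at hpos'
      exact lt_irrefl 0 hpos'
    | false, none =>
      intro _
      rw [Fintype.sum_bool, Fintype.sum_bool]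
      rw [hQtn x, zero_add]
      rw [Finset.sum_congr rfl fun x' (_ : x' ∈ univ) => hQtn x', Finset.sum_const_zero,
        zero_add]
    | false, some u =>
      intro hpos'
      exfalso
      rw [Finset.sum_congr rfl fun x' (_ : x' ∈ univ) => hQfs u x',
        Finset.sum_const_zero] at hpos'
      exact lt_irrefl 0 hpos'
  refine ⟨δ * (MI (fun u b => ∑ x, q0 x * pu x u * (pXY x b / ∑ y', pXY x y'))
      - (1 - ε) * MI (fun u x => q0 x * pu x u)),
    ⟨Bool, Option U, inferInstance, inferInstance, Q, hQnn, hQtot, hQmarg, hQmark, ?_⟩,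
    mul_pos hδpos (by linarith)⟩
  rw [sow_val_eq pXY hnn hX ε Q hQnn, Fintype.sum_bool, hwt, hwf]
  have hMIat : MI (fun (u' : Option U) x => Q true u' x / δ)
      = MI (fun u x => q0 x * pu x u) := by
    rw [mi_option_none_zero (fun u' x => Q true u' x / δ)
      (fun x => by show Q true none x / δ = 0; rw [hQtn x, zero_div])]
    refine congrArg MI (funext fun u => funext fun x => ?_)
    show Q true (some u) x / δ = q0 x * pu x u
    rw [hQts, mul_div_cancel_left₀ _ (ne_of_gt hδpos)]
  have hMIbt : MI (fun (u' : Option U) y => ∑ x, (Q true u' x / δ)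
        * (pXY x y / ∑ y', pXY x y'))
      = MI (fun u b => ∑ x, q0 x * pu x u * (pXY x b / ∑ y', pXY x y')) := by
    rw [mi_option_none_zero (fun u' y => ∑ x, (Q true u' x / δ)
        * (pXY x y / ∑ y', pXY x y'))
      (fun y => by
        show (∑ x, (Q true none x / δ) * (pXY x y / ∑ y', pXY x y')) = 0
        exact Finset.sum_eq_zero fun x _ => by rw [hQtn x, zero_div, zero_mul])]
    refine congrArg MI (funext fun u => funext fun y => ?_)
    apply Finset.sum_congr rfl; intro x _
    show Q true (some u) x / δ * (pXY x y / ∑ y', pXY x y') = _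
    rw [hQts, mul_div_cancel_left₀ _ (ne_of_gt hδpos)]
  rw [hMIat, hMIbt]
  rcases eq_or_lt_of_le hδ1 with hδeq | hδlt
  · rw [hδeq]
    ring
  · have h1δ : (0:ℝ) < 1 - δ := by linarith
    have hν : ∑ x, ((∑ y, pXY x y) - δ * q0 x) / (1 - δ) = 1 := by
      rw [← Finset.sum_div, Finset.sum_sub_distrib, hsum, ← Finset.mul_sum, hq0pmf.2,
        mul_one, div_self (ne_of_gt h1δ)]
    have hMIaf : MI (fun (u' : Option U) x => Q false u' x / (1 - δ)) = 0 := by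
      have haf : (fun (u' : Option U) x => Q false u' x / (1 - δ))
          = fun u' x => if u' = none then ((∑ y, pXY x y) - δ * q0 x) / (1 - δ) else 0 := by
        funext u' x
        match u' with
        | none => rw [hQfn]; simp
        | some u => rw [hQfs]; simp
      rw [haf]
      exact mi_point none _ hν
    have hMIbf : MI (fun (u' : Option U) y => ∑ x, (Q false u' x / (1 - δ))
        * (pXY x y / ∑ y', pXY x y')) = 0 := by
      have hbf : (fun (u' : Option U) y => ∑ x, (Q false u' x / (1 - δ))
            * (pXY x y / ∑ y', pXY x y'))
          = fun u' y => if u' = none then ∑ x, (((∑ y', pXY x y') - δ * q0 x) / (1 - δ))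
            * (pXY x y / ∑ y', pXY x y') else 0 := by
        funext u' y
        match u' with
        | none =>
          rw [Finset.sum_congr rfl fun x (_ : x ∈ univ) => by rw [hQfn x]]
          simp
        | some u =>
          rw [Finset.sum_eq_zero fun x (_ : x ∈ univ) => by
            rw [hQfs u x, zero_div, zero_mul]]
          simp
      rw [hbf]
      refine mi_point none _ ?_
      rw [Finset.sum_comm]
      rw [Finset.sum_congr rfl fun x (_ : x ∈ univ) => by
        rw [← Finset.mul_sum, ← Finset.sum_div, div_self (ne_of_gt (hX x)), mul_one]]
      exact hν
    rw [hMIaf, hMIbf]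
    ring


/-- for an erasure source with base pmf `p_XY` (with strictly positive
marginals) and erasure probability `ε ∈ [0,1]`, the one-way secret-key quantity
`S_ow(X;Y‖Z)` is zero iff `ε ≤ 1 − η(p_{Y|X})`. -/
theorem Sow_eq_zero_iff {X Y : Type} [Fintype X] [Fintype Y]
    (pXY : X → Y → ℝ) (hnn : ∀ x y, 0 ≤ pXY x y) (hsum : ∑ x, ∑ y, pXY x y = 1)
    (hX : ∀ x, 0 < ∑ y, pXY x y) (hY : ∀ y, 0 < ∑ x, pXY x y)
    (ε : ℝ) (hε : ε ∈ Set.Icc (0 : ℝ) 1) :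
    Sow (erasureSource pXY ε) = 0
      ↔ ε ≤ 1 - eta (fun x y => pXY x y / ∑ y', pXY x y') := by
  have hε1 := hε.2
  constructor
  · intro h0
    by_contra hlt
    push_neg at hlt
    obtain ⟨r, hrmem, hrpos⟩ := pos_mem_sow pXY hnn hsum hX ε hε1 hlt
    have hub := sow_elem_le_log pXY hnn hsum hX ε hε1
    have hle : r ≤ Sow (erasureSource pXY ε) := by
      unfold Sow
      exact le_csSup ⟨Real.log (Fintype.card Y), fun r' hr' => hub r' hr'⟩ hrmem
    rw [h0] at hle
    linarith
  · intro hle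
    have hnp := sow_elem_nonpos pXY hnn hsum hX ε hle
    have h1 : Sow (erasureSource pXY ε) ≤ 0 := by
      unfold Sow
      exact Real.sSup_le hnp le_rfl
    have h2 : 0 ≤ Sow (erasureSource pXY ε) := by
      unfold Sow
      exact le_csSup ⟨0, fun r hr => hnp r hr⟩ (zero_mem_sow pXY hnn hsum hX ε)
    linarith
end

section
/- Let p_{XY} be a pmf on X×Y (X, Y finite) with strictly positive marginals, ε ∈ [0,1], and let p_{XYZ} be the corresponding erasure source, so |Z| = |X|·|Y| + 1. Then B₀(X;Y‖Z) = 0 if and only if ε ≤ ε₃, where ε₃ is the maximum of Σ_{t=1}^{|Z|} min{ δ(x,y,t) : (x,y) with p_{XY}(x,y) > 0 } over all functions δ : X×Y×{1,…,|Z|} → [0,∞) such that Σ_{t=1}^{|Z|} δ(x,y,t) = 1 for every (x,y) and, for every t, the |X|×|Y| matrix with entries p_{XY}(x,y)·δ(x,y,t) has rank at most one. -/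
/-- `ε₃(p, M)`: the supremum of `Σ_{t=1}^{M} min{δ(x,y,t) : p(x,y) > 0}` over all
`δ : X×Y×{1,…,M} → [0,∞)` with `Σ_t δ(x,y,t) = 1` for every `(x,y)` and such that,
for every `t`, the matrix `[p(x,y)·δ(x,y,t)]` has rank at most one. -/
noncomputable def eps3 {X Y : Type} [Fintype X] [Fintype Y]
    (p : X → Y → ℝ) (M : ℕ) : ℝ :=
  sSup { r : ℝ | ∃ δ : X → Y → Fin M → ℝ,
    (∀ x y t, 0 ≤ δ x y t) ∧
    (∀ x y, ∑ t, δ x y t = 1) ∧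
    (∀ t, (Matrix.of fun x y => p x y * δ x y t).rank ≤ 1) ∧
    r = ∑ t, ⨅ xy : {xy : X × Y // 0 < p xy.1 xy.2}, δ xy.1.1 xy.1.2 t }

/-- The intrinsic mutual information `B₀(X;Y‖Z)`: the minimum over finite sets `J`
with `|J| ≤ |Z|` and channels `p(j|z)` of `I(X;Y|J)`, computed under
`p_XYZ(x,y,z)·p(j|z)`. -/
noncomputable def B0 {X Y Z : Type} [Fintype X] [Fintype Y] [Fintype Z]
    (p : X → Y → Z → ℝ) : ℝ :=
  sInf { r : ℝ | ∃ (J : Type) (iJ : Fintype J) (W : Z → J → ℝ), by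
    letI := iJ
    exact Fintype.card J ≤ Fintype.card Z ∧
      (∀ z, (∀ j, 0 ≤ W z j) ∧ ∑ j, W z j = 1) ∧
      r = condMI (fun j x y => ∑ z, p x y z * W z j) }


section Aux

lemma rank_le_one_of_minors {X Y : Type} [Fintype X] [Fintype Y] (A : Matrix X Y ℝ)
    (h : ∀ x x' y y', A x y * A x' y' = A x y' * A x' y) : A.rank ≤ 1 := by
  by_cases h0 : A = 0
  · simp [h0, Matrix.rank_zero]
  · obtain ⟨x₀, y₀, hxy⟩ : ∃ x₀ y₀, A x₀ y₀ ≠ 0 := by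
      by_contra hc
      push_neg at hc
      exact h0 (by ext x y; simp [hc])
    have hA : A = Matrix.vecMulVec (fun x => A x y₀ / A x₀ y₀) (fun y => A x₀ y) := by
      ext x y
      simp only [Matrix.vecMulVec_apply]
      rw [div_mul_eq_mul_div, eq_div_iff hxy]
      exact h x x₀ y y₀
    rw [hA, Matrix.vecMulVec_eq Unit]
    exact le_trans (Matrix.rank_mul_le_left _ _)
      (le_trans (Matrix.rank_le_card_width _) (by simp))

set_option maxHeartbeats 1000000 in
lemma exists_factor_of_rank_le_one {X Y : Type} [Fintype X] [Fintype Y] [DecidableEq Y]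
    (A : Matrix X Y ℝ) (h : A.rank ≤ 1) :
    ∃ (u : X → ℝ) (v : Y → ℝ), ∀ x y, A x y = u x * v y := by
  rw [Matrix.rank] at h
  obtain ⟨u, hu⟩ := finrank_le_one_iff.mp h
  have hmem : ∀ y : Y, A.mulVec (Pi.single y 1) ∈ LinearMap.range A.mulVecLin := by
    intro y; exact ⟨Pi.single y 1, rfl⟩
  refine ⟨fun x => (u : X → ℝ) x, fun y => (hu ⟨A.mulVec (Pi.single y 1), hmem y⟩).choose,
    fun x y => ?_⟩
  have hs := (hu ⟨A.mulVec (Pi.single y 1), hmem y⟩).choose_spec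
  have h2 := congrFun (congrArg Subtype.val hs) x
  simp only [Matrix.mulVec_single, mul_one] at h2
  show A x y = _
  rw [show A x y = (MulOpposite.op (1:ℝ) • A.col y) x by simp, ← h2]
  simp [mul_comm]

lemma minors_of_rank_le_one {X Y : Type} [Fintype X] [Fintype Y] (A : Matrix X Y ℝ)
    (h : A.rank ≤ 1) : ∀ x x' y y', A x y * A x' y' = A x y' * A x' y := by
  classical
  obtain ⟨u, v, huv⟩ := exists_factor_of_rank_le_one A h
  intro x x' y y'
  simp only [huv]
  ring

open Finset

lemma sum_filter_pos_eq {ι : Type} [Fintype ι] (p : ι → ℝ) (f : ι → ℝ)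
    (hp : ∀ i, 0 ≤ p i) (hf : ∀ i, p i = 0 → f i = 0) :
    ∑ i ∈ univ.filter (fun i => 0 < p i), f i = ∑ i, f i := by
  refine Finset.sum_subset (filter_subset _ _) ?_
  intro i _ hi
  simp only [mem_filter, mem_univ, true_and, not_lt] at hi
  exact hf i (le_antisymm (by simpa using hi) (hp i))

lemma gibbs_ineq {ι : Type} [Fintype ι] (p r : ι → ℝ) (hp : ∀ i, 0 ≤ p i) (hr : ∀ i, 0 ≤ r i)
    (hp1 : ∑ i, p i = 1) (hr1 : ∑ i, r i ≤ 1) (habs : ∀ i, 0 < p i → 0 < r i) :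
    0 ≤ ∑ i, p i * Real.log (p i / r i) := by
  classical
  set S := univ.filter (fun i => 0 < p i) with hS
  have hsum : ∑ i ∈ S, p i * Real.log (p i / r i) = ∑ i, p i * Real.log (p i / r i) :=
    sum_filter_pos_eq p _ hp (fun i hi => by simp [hi])
  have hsumP : ∑ i ∈ S, p i = 1 := by
    rw [← hp1]; exact sum_filter_pos_eq p p hp (fun i hi => hi)
  have hterm : ∀ i ∈ S, p i - r i ≤ p i * Real.log (p i / r i) := by
    intro i hi
    simp only [hS, mem_filter, mem_univ, true_and] at hi
    have hri := habs i hi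
    have hlog : Real.log (r i / p i) ≤ r i / p i - 1 :=
      Real.log_le_sub_one_of_pos (div_pos hri hi)
    have heq : Real.log (p i / r i) = - Real.log (r i / p i) := by
      rw [← Real.log_inv, inv_div]
    rw [heq]
    have h2 : 1 - r i / p i ≤ -Real.log (r i / p i) := by linarith
    calc p i - r i = p i * (1 - r i / p i) := by field_simp
    _ ≤ p i * (-Real.log (r i / p i)) := by
        exact mul_le_mul_of_nonneg_left h2 hi.le
  have hSr : ∑ i ∈ S, r i ≤ 1 := by
    refine le_trans ?_ hr1
    exact Finset.sum_le_sum_of_subset_of_nonneg (filter_subset _ _) (fun i _ _ => hr i)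
  calc (0:ℝ) = 1 - 1 := by ring
  _ ≤ ∑ i ∈ S, p i - ∑ i ∈ S, r i := by rw [hsumP]; linarith
  _ = ∑ i ∈ S, (p i - r i) := by rw [Finset.sum_sub_distrib]
  _ ≤ ∑ i ∈ S, p i * Real.log (p i / r i) := Finset.sum_le_sum hterm
  _ = _ := hsum

lemma gibbs_eq {ι : Type} [Fintype ι] (p r : ι → ℝ) (hp : ∀ i, 0 ≤ p i) (hr : ∀ i, 0 ≤ r i)
    (hp1 : ∑ i, p i = 1) (hr1 : ∑ i, r i = 1) (habs : ∀ i, 0 < p i → 0 < r i)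
    (hkl : ∑ i, p i * Real.log (p i / r i) ≤ 0) : ∀ i, p i = r i := by
  classical
  set S := univ.filter (fun i => 0 < p i) with hS
  have hsum : ∑ i ∈ S, p i * Real.log (p i / r i) = ∑ i, p i * Real.log (p i / r i) :=
    sum_filter_pos_eq p _ hp (fun i hi => by simp [hi])
  have hsumP : ∑ i ∈ S, p i = 1 := by
    rw [← hp1]; exact sum_filter_pos_eq p p hp (fun i hi => hi)
  set f : ι → ℝ := fun i => p i * Real.log (p i / r i) - (p i - r i) with hf
  have hfnn : ∀ i ∈ S, 0 ≤ f i := by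
    intro i hi
    simp only [hS, mem_filter, mem_univ, true_and] at hi
    have hri := habs i hi
    have hlog : Real.log (r i / p i) ≤ r i / p i - 1 :=
      Real.log_le_sub_one_of_pos (div_pos hri hi)
    have heq : Real.log (p i / r i) = - Real.log (r i / p i) := by
      rw [← Real.log_inv, inv_div]
    simp only [hf, heq]
    have h2 : 1 - r i / p i ≤ -Real.log (r i / p i) := by linarith
    have := mul_le_mul_of_nonneg_left h2 hi.le
    have hexp : p i * (1 - r i / p i) = p i - r i := by field_simp
    linarith [hexp ▸ this]
  have hsumf : ∑ i ∈ S, f i = (∑ i ∈ S, p i * Real.log (p i / r i)) - 1 + ∑ i ∈ S, r i := by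
    simp only [hf]
    rw [Finset.sum_sub_distrib, Finset.sum_sub_distrib, hsumP]; ring
  have hSr : ∑ i ∈ S, r i ≤ 1 := by
    rw [← hr1]
    exact Finset.sum_le_sum_of_subset_of_nonneg (filter_subset _ _) (fun i _ _ => hr i)
  have hf0 : ∑ i ∈ S, f i ≤ 0 := by rw [hsumf, hsum]; linarith
  have hfnn' : 0 ≤ ∑ i ∈ S, f i := Finset.sum_nonneg hfnn
  have hfz : ∀ i ∈ S, f i = 0 := by
    intro i hi
    have := (Finset.sum_eq_zero_iff_of_nonneg hfnn).mp (le_antisymm hf0 hfnn')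
    exact this i hi
  have hSr1 : ∑ i ∈ S, r i = 1 := by
    have h0 : (0:ℝ) = ∑ i ∈ S, f i := (le_antisymm hf0 hfnn').symm
    rw [hsumf, hsum] at h0
    nlinarith [hkl, gibbs_ineq p r hp hr hp1 hr1.le habs]
  -- off S, r i = 0
  have hoff : ∀ i ∉ S, r i = 0 := by
    intro i hi
    have htot : ∑ j ∈ Sᶜ, r j = 0 := by
      have : ∑ j ∈ S, r j + ∑ j ∈ Sᶜ, r j = 1 := by
        rw [Finset.sum_add_sum_compl]; exact hr1
      linarith [hSr1]
    have := (Finset.sum_eq_zero_iff_of_nonneg (fun j _ => hr j)).mp htot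
    exact this i (by simpa [Finset.mem_compl] using hi)
  intro i
  by_cases hi : i ∈ S
  · -- f i = 0, p i > 0, r i > 0 → equality in log bound → r i = p i
    have hpi : 0 < p i := by simpa [hS] using hi
    have hri := habs i hpi
    have hfi := hfz i hi
    simp only [hf] at hfi
    by_contra hne
    have hne' : r i / p i ≠ 1 := by
      intro hcon
      exact hne (by field_simp at hcon; linarith)
    have hstrict : Real.log (r i / p i) < r i / p i - 1 :=
      Real.log_lt_sub_one_of_pos (div_pos hri hpi) hne'
    have heq : Real.log (p i / r i) = - Real.log (r i / p i) := by
      rw [← Real.log_inv, inv_div]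
    rw [heq] at hfi
    have hexp : p i * (r i / p i - 1) = r i - p i := by field_simp
    nlinarith [mul_lt_mul_of_pos_left hstrict hpi]
  · have hpi : p i = 0 := le_antisymm (by simpa [hS] using hi) (hp i)
    rw [hpi, hoff i hi]

lemma MI_nonneg {A B : Type} [Fintype A] [Fintype B] (q : A → B → ℝ)
    (h0 : ∀ a b, 0 ≤ q a b) (h1 : ∑ a, ∑ b, q a b = 1) : 0 ≤ MI q := by
  have hcol : ∑ b, ∑ a, q a b = 1 := by rw [Finset.sum_comm]; exact h1
  have key := gibbs_ineq (ι := A × B) (fun i => q i.1 i.2)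
    (fun i => (∑ b', q i.1 b') * (∑ a', q a' i.2))
    (fun i => h0 i.1 i.2)
    (fun i => mul_nonneg (Finset.sum_nonneg fun b _ => h0 i.1 b)
      (Finset.sum_nonneg fun a _ => h0 a i.2))
    (by rw [Fintype.sum_prod_type]; exact h1)
    (by
      rw [Fintype.sum_prod_type]
      have : ∀ a, ∑ b, (∑ b', q a b') * (∑ a', q a' b)
          = (∑ b', q a b') * ∑ b, (∑ a', q a' b) := fun a => by
        rw [Finset.mul_sum]
      simp_rw [this, hcol, mul_one]
      rw [h1])
    (fun i hi => mul_pos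
      (lt_of_lt_of_le hi (Finset.single_le_sum (fun b _ => h0 i.1 b) (Finset.mem_univ i.2)))
      (lt_of_lt_of_le hi (Finset.single_le_sum (fun a _ => h0 a i.2) (Finset.mem_univ i.1))))
  rw [Fintype.sum_prod_type] at key
  exact key

lemma MI_product_of_eq_zero {A B : Type} [Fintype A] [Fintype B] (q : A → B → ℝ)
    (h0 : ∀ a b, 0 ≤ q a b) (h1 : ∑ a, ∑ b, q a b = 1) (hmi : MI q ≤ 0) :
    ∀ a b, q a b = (∑ b', q a b') * (∑ a', q a' b) := by
  have hcol : ∑ b, ∑ a, q a b = 1 := by rw [Finset.sum_comm]; exact h1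
  have key := gibbs_eq (ι := A × B) (fun i => q i.1 i.2)
    (fun i => (∑ b', q i.1 b') * (∑ a', q a' i.2))
    (fun i => h0 i.1 i.2)
    (fun i => mul_nonneg (Finset.sum_nonneg fun b _ => h0 i.1 b)
      (Finset.sum_nonneg fun a _ => h0 a i.2))
    (by rw [Fintype.sum_prod_type]; exact h1)
    (by
      rw [Fintype.sum_prod_type]
      have : ∀ a, ∑ b, (∑ b', q a b') * (∑ a', q a' b)
          = (∑ b', q a b') * ∑ b, (∑ a', q a' b) := fun a => by
        rw [Finset.mul_sum]
      simp_rw [this, hcol, mul_one]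
      rw [h1])
    (fun i hi => mul_pos
      (lt_of_lt_of_le hi (Finset.single_le_sum (fun b _ => h0 i.1 b) (Finset.mem_univ i.2)))
      (lt_of_lt_of_le hi (Finset.single_le_sum (fun a _ => h0 a i.2) (Finset.mem_univ i.1))))
    (by rw [Fintype.sum_prod_type]; exact hmi)
  exact fun a b => key (a, b)

lemma MI_term_zero_of_minors {A B : Type} [Fintype A] [Fintype B] (g : A → B → ℝ)
    (h0 : ∀ a b, 0 ≤ g a b)
    (hm : ∀ a a' b b', g a b * g a' b' = g a b' * g a' b) :
    (∑ a, ∑ b, g a b) * MI (fun a b => g a b / (∑ a', ∑ b', g a' b')) = 0 := by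
  set T := ∑ a', ∑ b', g a' b' with hT
  have hTnn : 0 ≤ T := Finset.sum_nonneg fun a _ => Finset.sum_nonneg fun b _ => h0 a b
  rcases eq_or_lt_of_le hTnn with hT0 | hTpos
  · rw [← hT0, zero_mul]
  · have hq1 : ∑ a, ∑ b, g a b / T = 1 := by
      simp_rw [← Finset.sum_div]
      exact div_self (ne_of_gt hTpos)
    suffices h : MI (fun a b => g a b / T) = 0 by rw [h, mul_zero]
    unfold MI
    refine Finset.sum_eq_zero fun a _ => Finset.sum_eq_zero fun b _ => ?_
    rcases eq_or_lt_of_le (h0 a b) with hg0 | hgpos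
    · simp [← hg0]
    · have hmarg : (∑ b', g a b' / T) * (∑ a', g a' b / T) = g a b / T := by
        rw [Finset.sum_mul_sum]
        have hterm : ∀ b' a', g a b' / T * (g a' b / T) = g a b / T * (g a' b' / T) := by
          intro b' a'
          rw [div_mul_div_comm, div_mul_div_comm, hm a a' b b']
        calc ∑ b', ∑ a', g a b' / T * (g a' b / T)
            = ∑ b', ∑ a', g a b / T * (g a' b' / T) := by
              exact Finset.sum_congr rfl fun b' _ => Finset.sum_congr rfl fun a' _ => hterm b' a'
          _ = g a b / T * ∑ b', ∑ a', g a' b' / T := by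
              rw [Finset.mul_sum]
              exact Finset.sum_congr rfl fun b' _ => by rw [Finset.mul_sum]
          _ = g a b / T := by
              rw [Finset.sum_comm, hq1, mul_one]
      rw [hmarg]
      have : g a b / T / (g a b / T) = 1 :=
        div_self (ne_of_gt (div_pos hgpos hTpos))
      rw [this, Real.log_one, mul_zero]

lemma G_decomp {A B : Type} [Fintype A] [Fintype B] (g : A → B → ℝ) (h0 : ∀ a b, 0 ≤ g a b) :
    (∑ a, ∑ b, g a b) * MI (fun a b => g a b / (∑ a', ∑ b', g a' b'))
      = (∑ a, ∑ b, g a b * Real.log (g a b))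
        - (∑ a, (∑ b, g a b) * Real.log (∑ b, g a b))
        - (∑ b, (∑ a, g a b) * Real.log (∑ a, g a b))
        + (∑ a, ∑ b, g a b) * Real.log (∑ a, ∑ b, g a b) := by
  classical
  have hTnn : 0 ≤ ∑ a', ∑ b', g a' b' :=
    Finset.sum_nonneg fun a _ => Finset.sum_nonneg fun b _ => h0 a b
  rcases eq_or_lt_of_le hTnn with hT0 | hTpos
  · have hg : ∀ a b, g a b = 0 := by
      intro a b
      have h1 := (Finset.sum_eq_zero_iff_of_nonneg
        (fun a (_ : a ∈ Finset.univ) => Finset.sum_nonneg fun b _ => h0 a b)).mp hT0.symm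
      have h2 := (Finset.sum_eq_zero_iff_of_nonneg
        (fun b (_ : b ∈ Finset.univ) => h0 a b)).mp (h1 a (Finset.mem_univ a))
      exact h2 b (Finset.mem_univ b)
    simp [hg]
  · set T := ∑ a', ∑ b', g a' b' with hT
    have hLHS : T * MI (fun a b => g a b / T)
        = ∑ a, ∑ b, (g a b * Real.log (g a b) - g a b * Real.log (∑ b', g a b')
            - g a b * Real.log (∑ a', g a' b) + g a b * Real.log T) := by
      unfold MI
      rw [Finset.mul_sum]
      refine Finset.sum_congr rfl fun a _ => ?_
      rw [Finset.mul_sum]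
      refine Finset.sum_congr rfl fun b _ => ?_
      rcases eq_or_lt_of_le (h0 a b) with h | h
      · simp [← h]
      · have hra : 0 < ∑ b', g a b' :=
          lt_of_lt_of_le h (Finset.single_le_sum (fun b' _ => h0 a b') (Finset.mem_univ b))
        have hcb : 0 < ∑ a', g a' b :=
          lt_of_lt_of_le h (Finset.single_le_sum (fun a' _ => h0 a' b) (Finset.mem_univ a))
        have hconv : (g a b / T) / ((∑ b', g a b' / T) * (∑ a', g a' b / T))
            = g a b * T / ((∑ b', g a b') * (∑ a', g a' b)) := by
          rw [← Finset.sum_div, ← Finset.sum_div]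
          field_simp
        rw [hconv, Real.log_div (mul_ne_zero (ne_of_gt h) (ne_of_gt hTpos))
          (ne_of_gt (mul_pos hra hcb)),
          Real.log_mul (ne_of_gt h) (ne_of_gt hTpos),
          Real.log_mul (ne_of_gt hra) (ne_of_gt hcb)]
        field_simp
        ring
    rw [hLHS]
    have hsplit : ∀ a, ∑ b, (g a b * Real.log (g a b) - g a b * Real.log (∑ b', g a b')
        - g a b * Real.log (∑ a', g a' b) + g a b * Real.log T)
        = (∑ b, g a b * Real.log (g a b)) - (∑ b, g a b) * Real.log (∑ b', g a b')
          - (∑ b, g a b * Real.log (∑ a', g a' b)) + (∑ b, g a b) * Real.log T := by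
      intro a
      rw [Finset.sum_add_distrib, Finset.sum_sub_distrib, Finset.sum_sub_distrib,
        ← Finset.sum_mul, ← Finset.sum_mul]
    simp_rw [hsplit]
    rw [Finset.sum_add_distrib, Finset.sum_sub_distrib, Finset.sum_sub_distrib,
      ← Finset.sum_mul]
    have hcolterm : ∑ a, ∑ b, g a b * Real.log (∑ a', g a' b)
        = ∑ b, (∑ a, g a b) * Real.log (∑ a', g a' b) := by
      rw [Finset.sum_comm]
      exact Finset.sum_congr rfl fun b _ => by rw [← Finset.sum_mul]
    rw [hcolterm, ← hT]

lemma condMI_nonneg {V A B : Type} [Fintype V] [Fintype A] [Fintype B]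
    (p : V → A → B → ℝ) (h0 : ∀ v a b, 0 ≤ p v a b) : 0 ≤ condMI p := by
  unfold condMI
  refine Finset.sum_nonneg fun v _ => ?_
  have hTnn : 0 ≤ ∑ a, ∑ b, p v a b :=
    Finset.sum_nonneg fun a _ => Finset.sum_nonneg fun b _ => h0 v a b
  rcases eq_or_lt_of_le hTnn with h | h
  · rw [← h, zero_mul]
  · refine mul_nonneg hTnn (MI_nonneg _ (fun a b => div_nonneg (h0 v a b) hTnn) ?_)
    simp_rw [← Finset.sum_div]
    exact div_self (ne_of_gt h)

lemma condMI_relabel {X Y Z : Type} [Fintype X] [Fintype Y] [Fintype Z]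
    (p : X → Y → Z → ℝ) (J : Type) [Fintype J] (hJ : Fintype.card J ≤ Fintype.card Z)
    (W : Z → J → ℝ) (hW : ∀ z, (∀ j, 0 ≤ W z j) ∧ ∑ j, W z j = 1) :
    ∃ W' : Z → Fin (Fintype.card Z) → ℝ,
      (∀ z, (∀ t, 0 ≤ W' z t) ∧ ∑ t, W' z t = 1) ∧
      condMI (fun t x y => ∑ z, p x y z * W' z t)
        = condMI (fun j x y => ∑ z, p x y z * W z j) := by
  classical
  obtain ⟨e⟩ : Nonempty (J ↪ Fin (Fintype.card Z)) :=
    Function.Embedding.nonempty_of_card_le (by simpa using hJ)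
  set q : J → X → Y → ℝ := fun j x y => ∑ z, p x y z * W z j with hq
  refine ⟨fun z t => ∑ j, if e j = t then W z j else 0, fun z =>
    ⟨fun t => Finset.sum_nonneg fun j _ => by
      by_cases h : e j = t <;> simp [h, (hW z).1 j],
     by
      rw [Finset.sum_comm]
      calc ∑ j, ∑ t, (if e j = t then W z j else 0) = ∑ j, W z j := by
            refine Finset.sum_congr rfl fun j _ => ?_
            simp
        _ = 1 := (hW z).2⟩, ?_⟩
  have hjoint : (fun t x y => ∑ z, p x y z * ∑ j, if e j = t then W z j else 0)
      = fun t x y => ∑ j, if e j = t then q j x y else 0 := by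
    funext t x y
    simp_rw [Finset.mul_sum]
    rw [Finset.sum_comm]
    refine Finset.sum_congr rfl fun j _ => ?_
    by_cases h : e j = t <;> simp [h, hq]
  rw [hjoint]
  unfold condMI
  have hkey : ∀ t, (∑ x, ∑ y, ∑ j, if e j = t then q j x y else 0)
        * MI (fun x y => (∑ j, if e j = t then q j x y else 0)
            / (∑ x', ∑ y', ∑ j, if e j = t then q j x' y' else 0))
      = ∑ j, if e j = t then (∑ x, ∑ y, q j x y)
        * MI (fun x y => q j x y / (∑ x', ∑ y', q j x' y')) else 0 := by
    intro t
    by_cases h : ∃ j, e j = t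
    · obtain ⟨j, hj⟩ := h
      have hcollapse : ∀ x y, (∑ j', if e j' = t then q j' x y else 0) = q j x y := by
        intro x y
        rw [Finset.sum_eq_single j (fun j' _ hne => by
          have : e j' ≠ t := fun hc => hne (e.injective (hc.trans hj.symm))
          simp [this]) (fun h => absurd (Finset.mem_univ j) h)]
        simp [hj]
      simp_rw [hcollapse]
      rw [Finset.sum_eq_single j (fun j' _ hne => by
        have : e j' ≠ t := fun hc => hne (e.injective (hc.trans hj.symm))
        simp [this]) (fun h => absurd (Finset.mem_univ j) h)]
      simp [hj]
    · push_neg at h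
      have hcollapse : ∀ x y : _, (∑ j', if e j' = t then q j' x y else 0) = 0 := by
        intro x y
        exact Finset.sum_eq_zero fun j _ => by simp [h j]
      simp_rw [hcollapse]
      have h1 : (∑ j : J, if e j = t then (∑ x, ∑ y, q j x y)
          * MI (fun x y => q j x y / (∑ x', ∑ y', q j x' y')) else 0) = 0 :=
        Finset.sum_eq_zero fun j _ => if_neg (h j)
      rw [h1]
      simp
  simp_rw [hkey]
  rw [Finset.sum_comm]
  refine Finset.sum_congr rfl fun j _ => ?_
  simp

lemma B0_set_eq {X Y Z : Type} [Fintype X] [Fintype Y] [Fintype Z] (p : X → Y → Z → ℝ) :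
    {r : ℝ | ∃ (J : Type) (iJ : Fintype J) (W : Z → J → ℝ), by
      letI := iJ
      exact Fintype.card J ≤ Fintype.card Z ∧
        (∀ z, (∀ j, 0 ≤ W z j) ∧ ∑ j, W z j = 1) ∧
        r = condMI (fun j x y => ∑ z, p x y z * W z j)}
    = (fun W : Z → Fin (Fintype.card Z) → ℝ =>
        condMI (fun t x y => ∑ z, p x y z * W z t)) ''
      {W | (∀ z t, 0 ≤ W z t) ∧ ∀ z, ∑ t, W z t = 1} := by
  ext r
  constructor
  · rintro ⟨J, iJ, W, hcard, hW, hr⟩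
    obtain ⟨W', hW', heq⟩ := condMI_relabel p J hcard W hW
    exact ⟨W', ⟨fun z t => (hW' z).1 t, fun z => (hW' z).2⟩, by simpa using heq.trans hr.symm⟩
  · rintro ⟨W, ⟨h1, h2⟩, hr⟩
    refine ⟨Fin (Fintype.card Z), inferInstance, W, ?_⟩
    simp only [Fintype.card_fin, le_refl, true_and]
    exact ⟨fun z => ⟨h1 z, h2 z⟩, hr.symm⟩

lemma condMI_continuousOn {X Y Z J : Type} [Fintype X] [Fintype Y] [Fintype Z] [Fintype J]
    (p : X → Y → Z → ℝ) (hp : ∀ x y z, 0 ≤ p x y z) :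
    ContinuousOn (fun W : Z → J → ℝ => condMI (fun j x y => ∑ z, p x y z * W z j))
      {W | ∀ z j, 0 ≤ W z j} := by
  classical
  set g := fun (W : Z → J → ℝ) (j : J) (x : X) (y : Y) => ∑ z, p x y z * W z j with hg
  have hgc : ∀ j x y, Continuous fun W => g W j x y := fun j x y =>
    continuous_finset_sum _ fun z _ =>
      continuous_const.mul ((continuous_apply j).comp (continuous_apply z))
  have hφ : Continuous (fun x : ℝ => x * Real.log x) := Real.continuous_mul_log
  set H := fun W => ∑ j, ((∑ x, ∑ y, g W j x y * Real.log (g W j x y))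
      - (∑ x, (∑ y, g W j x y) * Real.log (∑ y, g W j x y))
      - (∑ y, (∑ x, g W j x y) * Real.log (∑ x, g W j x y))
      + (∑ x, ∑ y, g W j x y) * Real.log (∑ x, ∑ y, g W j x y)) with hH
  have hHc : Continuous H := by
    refine continuous_finset_sum _ fun j _ => ?_
    refine Continuous.add (Continuous.sub (Continuous.sub ?_ ?_) ?_) ?_
    · exact continuous_finset_sum _ fun x _ => continuous_finset_sum _ fun y _ =>
        hφ.comp (hgc j x y)
    · exact continuous_finset_sum _ fun x _ =>
        hφ.comp (continuous_finset_sum _ fun y _ => hgc j x y)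
    · exact continuous_finset_sum _ fun y _ =>
        hφ.comp (continuous_finset_sum _ fun x _ => hgc j x y)
    · exact hφ.comp (continuous_finset_sum _ fun x _ =>
        continuous_finset_sum _ fun y _ => hgc j x y)
  refine ContinuousOn.congr hHc.continuousOn ?_
  intro W hW
  show condMI _ = H W
  unfold condMI
  refine Finset.sum_congr rfl fun j _ => ?_
  exact G_decomp (fun x y => g W j x y)
    (fun x y => Finset.sum_nonneg fun z _ => mul_nonneg (hp x y z) (hW z j))

lemma B0_attained {X Y Z : Type} [Fintype X] [Fintype Y] [Fintype Z] [Nonempty Z]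
    (p : X → Y → Z → ℝ) (hp : ∀ x y z, 0 ≤ p x y z) :
    ∃ W : Z → Fin (Fintype.card Z) → ℝ,
      (∀ z t, 0 ≤ W z t) ∧ (∀ z, ∑ t, W z t = 1) ∧
      B0 p = condMI (fun t x y => ∑ z, p x y z * W z t) := by
  classical
  set K : Set (Z → Fin (Fintype.card Z) → ℝ) :=
    {W | (∀ z t, 0 ≤ W z t) ∧ ∀ z, ∑ t, W z t = 1} with hK
  set F := fun W : Z → Fin (Fintype.card Z) → ℝ =>
    condMI (fun t x y => ∑ z, p x y z * W z t) with hF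
  have hcard : 0 < Fintype.card Z := Fintype.card_pos
  have hKne : K.Nonempty := by
    refine ⟨fun z t => if t = ⟨0, hcard⟩ then 1 else 0, fun z t => ?_, fun z => ?_⟩
    · by_cases h : t = ⟨0, hcard⟩ <;> simp [h] <;> exact ite_nonneg zero_le_one le_rfl
    · rw [Finset.sum_ite_eq' Finset.univ (⟨0, hcard⟩ : Fin (Fintype.card Z)) (fun _ => (1:ℝ))]
      simp
  have hKcl : IsClosed K := by
    have heq : K = (⋂ z, ⋂ t, {W : Z → Fin (Fintype.card Z) → ℝ | 0 ≤ W z t})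
        ∩ ⋂ z, {W : Z → Fin (Fintype.card Z) → ℝ | ∑ t, W z t = 1} := by
      ext W
      simp [hK, Set.mem_iInter]
    rw [heq]
    exact IsClosed.inter
      (isClosed_iInter fun z => isClosed_iInter fun t =>
        isClosed_le continuous_const ((continuous_apply t).comp (continuous_apply z)))
      (isClosed_iInter fun z => isClosed_eq
        (continuous_finset_sum _ fun t _ => (continuous_apply t).comp (continuous_apply z))
        continuous_const)
  have hKcomp : IsCompact K := by
    refine IsCompact.of_isClosed_subset
      (isCompact_univ_pi fun z => isCompact_univ_pi fun t => isCompact_Icc (a := (0:ℝ)) (b := 1))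
      hKcl ?_
    intro W hW
    rw [Set.mem_univ_pi]
    intro z
    rw [Set.mem_univ_pi]
    intro t
    refine ⟨hW.1 z t, ?_⟩
    calc W z t ≤ ∑ t', W z t' :=
      Finset.single_le_sum (fun t' _ => hW.1 z t') (Finset.mem_univ t)
    _ = 1 := hW.2 z
  have hFc : ContinuousOn F K := by
    refine (condMI_continuousOn p hp).mono ?_
    intro W hW
    exact hW.1
  have hScomp : IsCompact (F '' K) := hKcomp.image_of_continuousOn hFc
  have hSne : (F '' K).Nonempty := hKne.image F
  have hB0 : B0 p = sInf (F '' K) := by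
    unfold B0
    rw [B0_set_eq p]
  have hmem := hScomp.sInf_mem hSne
  rw [← hB0] at hmem
  obtain ⟨W, hWK, hWF⟩ := hmem
  exact ⟨W, hWK.1, hWK.2, hWF.symm⟩

lemma eps3_bddAbove {X Y : Type} [Fintype X] [Fintype Y]
    (p : X → Y → ℝ) (hpos : ∃ x y, 0 < p x y) (M : ℕ) :
    BddAbove { r : ℝ | ∃ δ : X → Y → Fin M → ℝ,
      (∀ x y t, 0 ≤ δ x y t) ∧
      (∀ x y, ∑ t, δ x y t = 1) ∧
      (∀ t, (Matrix.of fun x y => p x y * δ x y t).rank ≤ 1) ∧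
      r = ∑ t, ⨅ xy : {xy : X × Y // 0 < p xy.1 xy.2}, δ xy.1.1 xy.1.2 t } := by
  obtain ⟨x₀, y₀, hxy₀⟩ := hpos
  refine ⟨1, fun r hr => ?_⟩
  obtain ⟨δ, hnn, hsum, _, hrr⟩ := hr
  rw [hrr]
  calc ∑ t, ⨅ xy : {xy : X × Y // 0 < p xy.1 xy.2}, δ xy.1.1 xy.1.2 t
      ≤ ∑ t, δ x₀ y₀ t := by
        refine Finset.sum_le_sum fun t _ => ?_
        exact ciInf_le (Finite.bddBelow_range _) (⟨(x₀, y₀), hxy₀⟩ : {xy : X × Y // 0 < p xy.1 xy.2})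
    _ = 1 := hsum x₀ y₀

lemma eps3_attained {X Y : Type} [Fintype X] [Fintype Y]
    (p : X → Y → ℝ) (hnn : ∀ x y, 0 ≤ p x y) (hpos : ∃ x y, 0 < p x y) (M : ℕ)
    (hM : Fintype.card (X × Y) ≤ M) :
    ∃ δ : X → Y → Fin M → ℝ,
      (∀ x y t, 0 ≤ δ x y t) ∧ (∀ x y, ∑ t, δ x y t = 1) ∧
      (∀ t, (Matrix.of fun x y => p x y * δ x y t).rank ≤ 1) ∧
      eps3 p M = ∑ t, ⨅ xy : {xy : X × Y // 0 < p xy.1 xy.2}, δ xy.1.1 xy.1.2 t := by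
  classical
  obtain ⟨x₀, y₀, hxy₀⟩ := hpos
  haveI : Nonempty {xy : X × Y // 0 < p xy.1 xy.2} := ⟨⟨(x₀, y₀), hxy₀⟩⟩
  set D : Set (X → Y → Fin M → ℝ) := {δ |
    (∀ x y t, 0 ≤ δ x y t) ∧ (∀ x y, ∑ t, δ x y t = 1) ∧
    ∀ t x x' y y', (p x y * δ x y t) * (p x' y' * δ x' y' t)
      = (p x y' * δ x y' t) * (p x' y * δ x' y t)} with hD
  set obj : (X → Y → Fin M → ℝ) → ℝ :=
    fun δ => ∑ t, ⨅ xy : {xy : X × Y // 0 < p xy.1 xy.2}, δ xy.1.1 xy.1.2 t with hobj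
  have hseteq : { r : ℝ | ∃ δ : X → Y → Fin M → ℝ,
      (∀ x y t, 0 ≤ δ x y t) ∧
      (∀ x y, ∑ t, δ x y t = 1) ∧
      (∀ t, (Matrix.of fun x y => p x y * δ x y t).rank ≤ 1) ∧
      r = ∑ t, ⨅ xy : {xy : X × Y // 0 < p xy.1 xy.2}, δ xy.1.1 xy.1.2 t } = obj '' D := by
    ext r
    constructor
    · rintro ⟨δ, h1, h2, h3, h4⟩
      exact ⟨δ, ⟨h1, h2, fun t x x' y y' =>
        minors_of_rank_le_one (Matrix.of fun x y => p x y * δ x y t) (h3 t) x x' y y'⟩, h4.symm⟩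
    · rintro ⟨δ, ⟨h1, h2, h3⟩, h4⟩
      exact ⟨δ, h1, h2, fun t =>
        rank_le_one_of_minors (Matrix.of fun x y => p x y * δ x y t)
          (fun x x' y y' => h3 t x x' y y'), h4.symm⟩
  have hDcl : IsClosed D := by
    have heq : D = ((⋂ x, ⋂ y, ⋂ t, {δ : X → Y → Fin M → ℝ | 0 ≤ δ x y t})
        ∩ ⋂ x, ⋂ y, {δ : X → Y → Fin M → ℝ | ∑ t, δ x y t = 1})
        ∩ ⋂ t, ⋂ x, ⋂ x', ⋂ y, ⋂ y', {δ : X → Y → Fin M → ℝ |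
            (p x y * δ x y t) * (p x' y' * δ x' y' t)
              = (p x y' * δ x y' t) * (p x' y * δ x' y t)} := by
      ext δ
      simp only [hD, Set.mem_inter_iff, Set.mem_iInter, Set.mem_setOf_eq]
      tauto
    have hap : ∀ (x : X) (y : Y) (t : Fin M), Continuous fun δ : X → Y → Fin M → ℝ => δ x y t :=
      fun x y t => (continuous_apply t).comp ((continuous_apply y).comp (continuous_apply x))
    rw [heq]
    refine IsClosed.inter (IsClosed.inter ?_ ?_) ?_
    · exact isClosed_iInter fun x => isClosed_iInter fun y => isClosed_iInter fun t =>
        isClosed_le continuous_const (hap x y t)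
    · exact isClosed_iInter fun x => isClosed_iInter fun y =>
        isClosed_eq (continuous_finset_sum _ fun t _ => hap x y t) continuous_const
    · exact isClosed_iInter fun t => isClosed_iInter fun x => isClosed_iInter fun x' =>
        isClosed_iInter fun y => isClosed_iInter fun y' =>
          isClosed_eq ((continuous_const.mul (hap x y t)).mul
            (continuous_const.mul (hap x' y' t)))
            ((continuous_const.mul (hap x y' t)).mul (continuous_const.mul (hap x' y t)))
  have hDcomp : IsCompact D := by
    refine IsCompact.of_isClosed_subset
      (isCompact_univ_pi fun x => isCompact_univ_pi fun y => isCompact_univ_pi fun t =>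
        isCompact_Icc (a := (0:ℝ)) (b := 1)) hDcl ?_
    intro δ hδ
    rw [Set.mem_univ_pi]
    intro x
    rw [Set.mem_univ_pi]
    intro y
    rw [Set.mem_univ_pi]
    intro t
    refine ⟨hδ.1 x y t, ?_⟩
    calc δ x y t ≤ ∑ t', δ x y t' :=
      Finset.single_le_sum (fun t' _ => hδ.1 x y t') (Finset.mem_univ t)
    _ = 1 := hδ.2.1 x y
  have hDne : D.Nonempty := by
    obtain ⟨e⟩ : Nonempty (X × Y ↪ Fin M) := Function.Embedding.nonempty_of_card_le (by simpa [Fintype.card_prod] using hM)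
    refine ⟨fun x y t => if e (x, y) = t then 1 else 0, fun x y t => ?_, fun x y => ?_, ?_⟩
    · by_cases h : e (x, y) = t <;> simp [h]
    · simp
    · intro t x x' y y'
      rcases eq_or_ne x x' with rfl | hxx
      · ring
      · rcases eq_or_ne y y' with rfl | hyy
        · ring
        · have hL : p x y * (if e (x, y) = t then (1:ℝ) else 0)
              * (p x' y' * (if e (x', y') = t then (1:ℝ) else 0)) = 0 := by
            by_cases h1 : e (x, y) = t
            · by_cases h2 : e (x', y') = t
              · exact absurd (congrArg Prod.fst (e.injective (h1.trans h2.symm))) hxx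
              · simp [h2]
            · simp [h1]
          have hR : p x y' * (if e (x, y') = t then (1:ℝ) else 0)
              * (p x' y * (if e (x', y) = t then (1:ℝ) else 0)) = 0 := by
            by_cases h1 : e (x, y') = t
            · by_cases h2 : e (x', y) = t
              · exact absurd (congrArg Prod.fst (e.injective (h1.trans h2.symm))) hxx
              · simp [h2]
            · simp [h1]
          rw [hL, hR]
  have hobjc : ContinuousOn obj D := by
    have : Continuous obj := by
      refine continuous_finset_sum _ fun t _ => ?_
      have hre : (fun δ : X → Y → Fin M → ℝ =>
          ⨅ xy : {xy : X × Y // 0 < p xy.1 xy.2}, δ xy.1.1 xy.1.2 t)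
          = fun δ => Finset.univ.inf' Finset.univ_nonempty
              (fun xy : {xy : X × Y // 0 < p xy.1 xy.2} => δ xy.1.1 xy.1.2 t) := by
        funext δ
        rw [Finset.inf'_univ_eq_ciInf]
      rw [hre]
      exact Continuous.finset_inf'_apply Finset.univ_nonempty fun xy _ =>
        (continuous_apply t).comp
          ((continuous_apply xy.1.2).comp (continuous_apply xy.1.1))
    exact this.continuousOn
  have hScomp : IsCompact (obj '' D) := hDcomp.image_of_continuousOn hobjc
  have hSne : (obj '' D).Nonempty := hDne.image obj
  have hmem := hScomp.sSup_mem hSne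
  have : eps3 p M = sSup (obj '' D) := by
    unfold eps3
    rw [hseteq]
  rw [← this] at hmem
  obtain ⟨δ, hδD, hδ⟩ := hmem
  exact ⟨δ, hδD.1, hδD.2.1, fun t =>
    rank_le_one_of_minors (Matrix.of fun x y => p x y * δ x y t)
      (fun x x' y y' => hδD.2.2 t x x' y y'), hδ.symm⟩

lemma G_nonneg {A B : Type} [Fintype A] [Fintype B] (g : A → B → ℝ) (h0 : ∀ a b, 0 ≤ g a b) :
    0 ≤ (∑ a, ∑ b, g a b) * MI (fun a b => g a b / (∑ a', ∑ b', g a' b')) := by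
  have hTnn : 0 ≤ ∑ a, ∑ b, g a b :=
    Finset.sum_nonneg fun a _ => Finset.sum_nonneg fun b _ => h0 a b
  rcases eq_or_lt_of_le hTnn with h | h
  · rw [← h, zero_mul]
  · refine mul_nonneg hTnn (MI_nonneg _ (fun a b => div_nonneg (h0 a b) hTnn) ?_)
    simp_rw [← Finset.sum_div]
    exact div_self (ne_of_gt h)

end Aux

/-- for an erasure source with base pmf `p_XY` (strictly positive
marginals) and erasure probability `ε ∈ [0,1]`, with `|Z| = |X|·|Y| + 1`, the
intrinsic mutual information `B₀(X;Y‖Z)` is zero iff `ε ≤ ε₃`. -/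
theorem B0_eq_zero_iff {X Y : Type} [Fintype X] [Fintype Y]
    (pXY : X → Y → ℝ) (hnn : ∀ x y, 0 ≤ pXY x y) (hsum : ∑ x, ∑ y, pXY x y = 1)
    (hX : ∀ x, 0 < ∑ y, pXY x y) (hY : ∀ y, 0 < ∑ x, pXY x y)
    (ε : ℝ) (hε : ε ∈ Set.Icc (0 : ℝ) 1) :
    B0 (erasureSource pXY ε) = 0
      ↔ ε ≤ eps3 pXY (Fintype.card X * Fintype.card Y + 1) := by
  classical
  obtain ⟨hε0, hε1⟩ := hε
  set M := Fintype.card X * Fintype.card Y + 1 with hM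
  set p := erasureSource pXY ε with hp
  have hcardZ : Fintype.card (Option (X × Y)) = M := by
    simp [Fintype.card_option, Fintype.card_prod, hM]
  have hpnn : ∀ x y z, 0 ≤ p x y z := by
    intro x y z
    match z with
    | none => exact mul_nonneg hε0 (hnn x y)
    | some w =>
      show (0:ℝ) ≤ if w = (x, y) then (1 - ε) * pXY x y else 0
      by_cases h : w = (x, y)
      · simp only [h, if_pos]
        exact mul_nonneg (by linarith) (hnn x y)
      · simp [h]
  have hpos : ∃ x y, 0 < pXY x y := by
    by_contra h
    push_neg at h
    have : ∑ x, ∑ y, pXY x y ≤ 0 :=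
      Finset.sum_nonpos fun x _ => Finset.sum_nonpos fun y _ => h x y
    linarith
  haveI hNE : Nonempty {xy : X × Y // 0 < pXY xy.1 xy.2} := by
    obtain ⟨x₀, y₀, h₀⟩ := hpos
    exact ⟨⟨(x₀, y₀), h₀⟩⟩
  -- joint distribution computation
  have hjoint : ∀ {N : ℕ} (W : Option (X × Y) → Fin N → ℝ) (t : Fin N) (x : X) (y : Y),
      (∑ z, p x y z * W z t)
        = pXY x y * (ε * W none t + (1 - ε) * W (some (x, y)) t) := by
    intro N W t x y
    rw [Fintype.sum_option]
    have hz : ∀ w : X × Y, p x y (some w) * W (some w) t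
        = if w = (x, y) then (1 - ε) * pXY x y * W (some (x, y)) t else 0 := by
      intro w
      by_cases h : w = (x, y)
      · subst h
        show (if ((x,y) : X × Y) = (x, y) then (1 - ε) * pXY x y else 0) * W (some (x,y)) t = _
        rw [if_pos rfl, if_pos rfl]
      · show (if w = (x, y) then (1 - ε) * pXY x y else 0) * W (some w) t = _
        rw [if_neg h, if_neg h, zero_mul]
    simp_rw [hz]
    rw [Finset.sum_ite_eq' Finset.univ ((x, y) : X × Y)
      (fun _ => (1 - ε) * pXY x y * W (some (x, y)) t)]
    show ε * pXY x y * W none t + _ = _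
    simp only [Finset.mem_univ, if_pos]
    ring
  constructor
  · -- B0 = 0 → ε ≤ eps3
    intro hB0
    obtain ⟨W, hWnn, hWsum, hBW⟩ := B0_attained p hpnn
    rw [hB0] at hBW
    set e : Fin M ≃ Fin (Fintype.card (Option (X × Y))) := (finCongr hcardZ).symm with he
    set q : Fin (Fintype.card (Option (X × Y))) → X → Y → ℝ :=
      fun s x y => ∑ z, p x y z * W z s with hq
    -- each term of condMI is zero
    have hterms : ∀ s, (∑ x, ∑ y, q s x y)
        * MI (fun x y => q s x y / (∑ x', ∑ y', q s x' y')) = 0 := by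
      have hnonneg : ∀ s ∈ Finset.univ, 0 ≤ (∑ x, ∑ y, q s x y)
          * MI (fun x y => q s x y / (∑ x', ∑ y', q s x' y')) := fun s _ =>
        G_nonneg (q s) (fun x y => Finset.sum_nonneg fun z _ =>
          mul_nonneg (hpnn x y z) (hWnn z s))
      have hzero : ∑ s, (∑ x, ∑ y, q s x y)
          * MI (fun x y => q s x y / (∑ x', ∑ y', q s x' y')) = 0 := by
        have : condMI (fun s x y => q s x y) = 0 := hBW.symm
        unfold condMI at this
        exact this
      intro s
      exact (Finset.sum_eq_zero_iff_of_nonneg hnonneg).mp hzero s (Finset.mem_univ s)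
    -- minors of each q s
    have hqm : ∀ s x x' y y', q s x y * q s x' y' = q s x y' * q s x' y := by
      intro s
      have hqnn : ∀ x y, 0 ≤ q s x y := fun x y => Finset.sum_nonneg fun z _ =>
        mul_nonneg (hpnn x y z) (hWnn z s)
      have hTnn : 0 ≤ ∑ x, ∑ y, q s x y :=
        Finset.sum_nonneg fun x _ => Finset.sum_nonneg fun y _ => hqnn x y
      rcases eq_or_lt_of_le hTnn with hT0 | hTpos
      · have hall : ∀ x y, q s x y = 0 := by
          intro x y
          have h1 := (Finset.sum_eq_zero_iff_of_nonneg
            (fun x (_ : x ∈ Finset.univ) => Finset.sum_nonneg fun y _ => hqnn x y)).mp hT0.symm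
          exact (Finset.sum_eq_zero_iff_of_nonneg
            (fun y (_ : y ∈ Finset.univ) => hqnn x y)).mp (h1 x (Finset.mem_univ x)) y
            (Finset.mem_univ y)
        intro x x' y y'
        rw [hall x y, hall x y']
        ring
      · set T := ∑ x, ∑ y, q s x y with hT
        have hTne : T ≠ 0 := ne_of_gt hTpos
        have hMI : MI (fun x y => q s x y / T) = 0 := by
          rcases mul_eq_zero.mp (hterms s) with h | h
          · exact absurd h hTne
          · exact h
        have hqn1 : ∑ x, ∑ y, q s x y / T = 1 := by
          simp_rw [← Finset.sum_div]
          exact div_self hTne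
        have hprod := MI_product_of_eq_zero (fun x y => q s x y / T)
          (fun x y => div_nonneg (hqnn x y) hTpos.le) hqn1 (le_of_eq hMI)
        have hprod' : ∀ a b, q s a b / T
            = (∑ b', q s a b' / T) * (∑ a', q s a' b / T) := fun a b => hprod a b
        have hqnm : ∀ x x' y y', (q s x y / T) * (q s x' y' / T)
            = (q s x y' / T) * (q s x' y / T) := by
          intro x x' y y'
          rw [hprod' x y, hprod' x' y', hprod' x y', hprod' x' y]
          ring
        intro x x' y y'
        have := hqnm x x' y y'
        field_simp at this
        linarith
    -- define δ
    set δ : X → Y → Fin M → ℝ :=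
      fun x y t => ε * W none (e t) + (1 - ε) * W (some (x, y)) (e t) with hδ
    have hjq : ∀ t x y, q (e t) x y = pXY x y * δ x y t := fun t x y => hjoint W (e t) x y
    have hδnn : ∀ x y t, 0 ≤ δ x y t := fun x y t =>
      add_nonneg (mul_nonneg hε0 (hWnn none (e t)))
        (mul_nonneg (by linarith) (hWnn (some (x, y)) (e t)))
    have hδsum : ∀ x y, ∑ t, δ x y t = 1 := by
      intro x y
      rw [hδ]
      rw [Finset.sum_add_distrib, ← Finset.mul_sum, ← Finset.mul_sum,
        Equiv.sum_comp e (fun s => W none s),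
        Equiv.sum_comp e (fun s => W (some (x, y)) s), hWsum none, hWsum (some (x, y))]
      ring
    have hδrank : ∀ t, (Matrix.of fun x y => pXY x y * δ x y t).rank ≤ 1 := by
      intro t
      refine rank_le_one_of_minors _ ?_
      intro x x' y y'
      show (pXY x y * δ x y t) * (pXY x' y' * δ x' y' t)
        = (pXY x y' * δ x y' t) * (pXY x' y * δ x' y t)
      rw [← hjq, ← hjq, ← hjq, ← hjq]
      exact hqm (e t) x x' y y'
    have hobj : ε ≤ ∑ t, ⨅ xy : {xy : X × Y // 0 < pXY xy.1 xy.2}, δ xy.1.1 xy.1.2 t := by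
      have hstep : ∀ t, ε * W none (e t)
          ≤ ⨅ xy : {xy : X × Y // 0 < pXY xy.1 xy.2}, δ xy.1.1 xy.1.2 t := by
        intro t
        refine le_ciInf fun xy => ?_
        have h2 : 0 ≤ (1 - ε) * W (some (xy.1.1, xy.1.2)) (e t) :=
          mul_nonneg (by linarith) (hWnn _ _)
        show ε * W none (e t)
          ≤ ε * W none (e t) + (1 - ε) * W (some ((xy : X × Y).1, (xy : X × Y).2)) (e t)
        linarith
      calc ε = ∑ s, ε * W none s := by rw [← Finset.mul_sum, hWsum none, mul_one]
      _ = ∑ t, ε * W none (e t) := (Equiv.sum_comp e (fun s => ε * W none s)).symm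
      _ ≤ _ := Finset.sum_le_sum fun t _ => hstep t
    refine le_trans hobj ?_
    unfold eps3
    exact le_csSup (eps3_bddAbove pXY hpos M) ⟨δ, hδnn, hδsum, hδrank, rfl⟩

  · -- ε ≤ eps3 → B0 = 0
    intro hle
    obtain ⟨δ, hδnn, hδsum, hδrank, heps⟩ := eps3_attained pXY hnn hpos M
      (by simp [hM, Fintype.card_prod])
    set m : Fin M → ℝ :=
      fun t => ⨅ xy : {xy : X × Y // 0 < pXY xy.1 xy.2}, δ xy.1.1 xy.1.2 t with hm
    have hmle : ∀ t x y, 0 < pXY x y → m t ≤ δ x y t := fun t x y h =>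
      ciInf_le (Finite.bddBelow_range _) (⟨(x, y), h⟩ : {xy : X × Y // 0 < pXY xy.1 xy.2})
    have hmnn : ∀ t, 0 ≤ m t := fun t => le_ciInf fun xy => hδnn xy.1.1 xy.1.2 t
    set R := ∑ t, m t with hR
    have hεR : ε ≤ R := by rw [hR]; rw [heps] at hle; exact hle
    have hR1 : R ≤ 1 := by
      obtain ⟨x₀, y₀, h₀⟩ := hpos
      calc R ≤ ∑ t, δ x₀ y₀ t := Finset.sum_le_sum fun t _ => hmle t x₀ y₀ h₀
      _ = 1 := hδsum x₀ y₀
    have hminors : ∀ t x x' y y', (pXY x y * δ x y t) * (pXY x' y' * δ x' y' t)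
        = (pXY x y' * δ x y' t) * (pXY x' y * δ x' y t) := fun t =>
      minors_of_rank_le_one _ (hδrank t)
    set a : Fin M → ℝ := fun t => if ε = 0 then 0 else m t * ε / R with ha
    have hεRpos : ε ≠ 0 → 0 < R := fun h => lt_of_lt_of_le (lt_of_le_of_ne hε0 (Ne.symm h)) hεR
    have hann : ∀ t, 0 ≤ a t := by
      intro t
      rw [ha]
      by_cases h : ε = 0
      · simp [h]
      · simp only [h, if_false]
        exact div_nonneg (mul_nonneg (hmnn t) hε0) (hεRpos h).le
    have halem : ∀ t, a t ≤ m t := by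
      intro t
      by_cases h : ε = 0
      · simpa [ha, h] using hmnn t
      · simp only [ha, h, if_false]
        rw [mul_div_assoc]
        calc m t * (ε / R) ≤ m t * 1 :=
          mul_le_mul_of_nonneg_left ((div_le_one (hεRpos h)).mpr hεR) (hmnn t)
        _ = m t := mul_one _
    have hasum : ∑ t, a t = ε := by
      by_cases h : ε = 0
      · simp [ha, h]
      · simp only [ha, h, if_false]
        rw [show (∑ t, m t * ε / R) = (∑ t, m t) * ε / R by
          rw [← Finset.sum_div, ← Finset.sum_mul], ← hR, mul_comm R ε, mul_div_assoc,
          div_self (ne_of_gt (hεRpos h)), mul_one]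
    have hMpos : 0 < M := Nat.succ_pos _
    set Wn : Fin M → ℝ :=
      fun t => if ε = 0 then (if t = ⟨0, hMpos⟩ then 1 else 0) else a t / ε with hWn
    set Ws : X × Y → Fin M → ℝ := fun w t =>
      if ε < 1 ∧ 0 < pXY w.1 w.2 then (δ w.1 w.2 t - a t) / (1 - ε) else δ w.1 w.2 t with hWs
    set W : Option (X × Y) → Fin M → ℝ :=
      fun z t => z.elim (Wn t) (fun w => Ws w t) with hWdef
    have hWnone : ∀ t, W none t = Wn t := fun t => rfl
    have hWsome : ∀ w t, W (some w) t = Ws w t := fun w t => rfl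
    have hWnn : ∀ z t, 0 ≤ W z t := by
      intro z t
      match z with
      | none =>
        rw [hWnone, hWn]
        by_cases h : ε = 0
        · simp only [h, if_true]
          split <;> norm_num
        · simp only [h, if_false]
          exact div_nonneg (hann t) hε0
      | some w =>
        rw [hWsome, hWs]
        by_cases h : ε < 1 ∧ 0 < pXY w.1 w.2
        · simp only [h, if_true]
          refine div_nonneg ?_ (by linarith [h.1])
          linarith [halem t, hmle t w.1 w.2 h.2]
        · simp only [h, if_false]
          exact hδnn w.1 w.2 t
    have hWsum : ∀ z, ∑ t, W z t = 1 := by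
      intro z
      match z with
      | none =>
        simp only [hWnone, hWn]
        by_cases h : ε = 0
        · simp only [h, if_true]
          rw [Finset.sum_ite_eq' Finset.univ (⟨0, hMpos⟩ : Fin M) (fun _ => (1:ℝ))]
          simp
        · simp only [h, if_false]
          rw [← Finset.sum_div, hasum, div_self h]
      | some w =>
        simp only [hWsome, hWs]
        by_cases h : ε < 1 ∧ 0 < pXY w.1 w.2
        · have hite : ∀ t, (if ε < 1 ∧ 0 < pXY w.1 w.2
              then (δ w.1 w.2 t - a t) / (1 - ε) else δ w.1 w.2 t)
              = (δ w.1 w.2 t - a t) / (1 - ε) := fun t => if_pos h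
          simp only [hite]
          rw [← Finset.sum_div, Finset.sum_sub_distrib, hδsum, hasum,
            div_self (by linarith [h.1] : (1:ℝ) - ε ≠ 0)]
        · have hite : ∀ t, (if ε < 1 ∧ 0 < pXY w.1 w.2
              then (δ w.1 w.2 t - a t) / (1 - ε) else δ w.1 w.2 t)
              = δ w.1 w.2 t := fun t => if_neg h
          simp only [hite]
          exact hδsum w.1 w.2
    -- the joint distribution equals pXY · δ
    have hδm : ε = 1 → ∀ x y t, pXY x y * m t = pXY x y * δ x y t := by
      intro h1 x y t
      rcases eq_or_lt_of_le (hnn x y) with hp0 | hp0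
      · rw [← hp0, zero_mul, zero_mul]
      · have hReq : R = 1 := le_antisymm hR1 (by rw [← h1]; exact hεR)
        have hzero : ∑ t', (δ x y t' - m t') = 0 := by
          rw [Finset.sum_sub_distrib, hδsum, ← hR, hReq, sub_self]
        have heach := (Finset.sum_eq_zero_iff_of_nonneg
          (fun t' (_ : t' ∈ Finset.univ) => by linarith [hmle t' x y hp0])).mp hzero
        have := heach t (Finset.mem_univ t)
        have : δ x y t = m t := by linarith
        rw [this]
    have hgeq : ∀ t x y, (∑ z, p x y z * W z t) = pXY x y * δ x y t := by
      intro t x y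
      rw [hjoint W t x y, hWnone, hWsome]
      rcases eq_or_lt_of_le hε1 with h1 | h1
      · -- ε = 1
        have hεne : ε ≠ 0 := by rw [h1]; norm_num
        have hReq : R = 1 := le_antisymm hR1 (by rw [← h1]; exact hεR)
        have hat : a t = m t := by
          rw [ha]
          simp only [hεne, if_false]
          rw [h1, hReq]
          ring
        have hWnt : Wn t = m t := by
          rw [hWn]
          simp only [hεne, if_false]
          rw [hat, h1, div_one]
        rw [← hδm h1 x y t, hWnt, h1]
        ring
      · -- ε < 1
        have hεWn : ε * Wn t = a t := by
          by_cases h : ε = 0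
          · simp [hWn, ha, h]
          · rw [hWn]
            simp only [h, if_false]
            field_simp
        rcases eq_or_lt_of_le (hnn x y) with hp0 | hp0
        · rw [← hp0]
          ring
        · have hWs' : Ws (x, y) t = (δ x y t - a t) / (1 - ε) := by
            rw [hWs]
            exact if_pos ⟨h1, hp0⟩
          rw [hWs', hεWn]
          have hne : (1:ℝ) - ε ≠ 0 := by linarith
          field_simp
          ring
    have hcond0 : condMI (fun t x y => ∑ z, p x y z * W z t) = 0 := by
      unfold condMI
      refine Finset.sum_eq_zero fun t _ => ?_
      simp only [hgeq t]
      exact MI_term_zero_of_minors (fun x y => pXY x y * δ x y t)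
        (fun x y => mul_nonneg (hnn x y) (hδnn x y t))
        (fun x x' y y' => hminors t x x' y y')
    unfold B0
    have hmemS : (0:ℝ) ∈ {r : ℝ | ∃ (J : Type) (iJ : Fintype J)
        (Wc : Option (X × Y) → J → ℝ), by
      letI := iJ
      exact Fintype.card J ≤ Fintype.card (Option (X × Y)) ∧
        (∀ z, (∀ j, 0 ≤ Wc z j) ∧ ∑ j, Wc z j = 1) ∧
        (0:ℝ) = condMI (fun j x y => ∑ z, p x y z * Wc z j)} := by
      refine ⟨Fin M, inferInstance, W, ?_, ?_, ?_⟩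
      · rw [Fintype.card_fin, hcardZ]
      · exact fun z => ⟨fun t => hWnn z t, hWsum z⟩
      · exact hcond0.symm
    have hlb : ∀ r ∈ {r : ℝ | ∃ (J : Type) (iJ : Fintype J)
        (Wc : Option (X × Y) → J → ℝ), by
      letI := iJ
      exact Fintype.card J ≤ Fintype.card (Option (X × Y)) ∧
        (∀ z, (∀ j, 0 ≤ Wc z j) ∧ ∑ j, Wc z j = 1) ∧
        r = condMI (fun j x y => ∑ z, p x y z * Wc z j)}, (0:ℝ) ≤ r := by
      rintro r ⟨J, iJ, Wc, hc, hWc, hr⟩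
      rw [hr]
      exact condMI_nonneg _ (fun j x y => Finset.sum_nonneg fun z _ =>
        mul_nonneg (hpnn x y z) ((hWc z).1 j))
    exact le_antisymm (csInf_le ⟨0, hlb⟩ hmemS) (le_csInf ⟨0, hmemS⟩ hlb)
end

section
/- Let X, Y be finite sets and let μ, γ be pmfs on X×Y with equal marginals. Then there exist k ≥ 1, pairwise distinct x₁,…,x_k ∈ X and pairwise distinct y₁,…,y_k ∈ Y such that γ(x_i, y_i) > 0 for all 1 ≤ i ≤ k, μ(x₁, y_k) > 0, and μ(x_i, y_{i−1}) > 0 for all 2 ≤ i ≤ k. -/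
/-- A pair of pmfs on `X × Y` has equal marginals. -/
def EqualMarginals {X Y : Type*} [Fintype X] [Fintype Y] (μ γ : X × Y → ℝ) : Prop :=
  (∀ x, ∑ y, μ (x, y) = ∑ y, γ (x, y)) ∧ (∀ y, ∑ x, μ (x, y) = ∑ x, γ (x, y))

lemma aux_exists_pos {S : Type*} [Fintype S] (f : S → ℝ) (h0 : ∀ s, 0 ≤ f s)
    (h : 0 < ∑ s, f s) : ∃ s, 0 < f s := by
  by_contra hc
  push_neg at hc
  have := Finset.sum_nonpos (fun s (_ : s ∈ Finset.univ) => hc s)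
  linarith

lemma aux_fin_sub_one (m : ℕ) (i : Fin (m+1)) :
    ((i - 1 : Fin (m+1)) : ℕ) = if (i:ℕ) = 0 then m else (i:ℕ) - 1 := by
  rcases i with ⟨v, hv⟩
  simp only [Fin.sub_def, Fin.val_one']
  rcases Nat.eq_zero_or_pos m with hm | hm
  · subst hm; interval_cases v <;> simp
  · rw [Nat.one_mod_eq_one.mpr (by omega)]
    rcases Nat.eq_zero_or_pos v with h | h
    · subst h; simp [Nat.mod_eq_of_lt (by omega : m < m+1)]
    · rw [if_neg (by omega)]
      have h2 : m + 1 - 1 + v = (v - 1) + (m + 1) := by omega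
      simp only [h2, Nat.add_mod_right]
      exact Nat.mod_eq_of_lt (by omega)

/-- if `μ, γ` are pmfs on `X × Y` with equal marginals, then there exist
`k = m+1 ≥ 1`, pairwise distinct `x₁,…,x_k` and pairwise distinct `y₁,…,y_k` with
`γ(x_i,y_i) > 0` for all `i`, `μ(x₁,y_k) > 0`, and `μ(x_i,y_{i−1}) > 0` for
`2 ≤ i ≤ k` (the latter two conditions are expressed with cyclic subtraction in
`Fin (m+1)`, so `i = 1` refers to `μ(x₁,y_k)`). -/
theorem exists_positive_path {X Y : Type*} [Fintype X] [Fintype Y]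
    (μ γ : X × Y → ℝ) (hμ : IsPMF μ) (hγ : IsPMF γ) (hm : EqualMarginals μ γ) :
    ∃ (m : ℕ) (x : Fin (m + 1) → X) (y : Fin (m + 1) → Y),
      Function.Injective x ∧ Function.Injective y ∧
      (∀ i, 0 < γ (x i, y i)) ∧ (∀ i, 0 < μ (x i, y (i - 1))) := by
  classical
  obtain ⟨hμ0, hμ1⟩ := hμ
  obtain ⟨hγ0, hγ1⟩ := hγ
  obtain ⟨hm1, hm2⟩ := hm
  -- step: from a γ-positive pair, find the next one
  have step : ∀ p : X × Y, 0 < γ p → ∃ q : X × Y, 0 < γ q ∧ 0 < μ (q.1, p.2) := by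
    intro p hp
    have hple : γ (p.1, p.2) ≤ ∑ x, γ (x, p.2) :=
      Finset.single_le_sum (f := fun x => γ (x, p.2)) (fun i _ => hγ0 _) (Finset.mem_univ p.1)
    have hpeq : γ (p.1, p.2) = γ p := by rw [Prod.mk.eta]
    have h1 : 0 < ∑ x, μ (x, p.2) := by rw [hm2]; linarith
    obtain ⟨x', hx'⟩ := aux_exists_pos (fun x => μ (x, p.2)) (fun _ => hμ0 _) h1
    have h2 : 0 < ∑ y, γ (x', y) := by
      rw [← hm1]
      have := Finset.single_le_sum (f := fun y => μ (x', y)) (fun i _ => hμ0 _)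
        (Finset.mem_univ p.2)
      linarith
    obtain ⟨y', hy'⟩ := aux_exists_pos (fun y => γ (x', y)) (fun _ => hγ0 _) h2
    exact ⟨(x', y'), hy', hx'⟩
  have h0 : ∃ p : X × Y, 0 < γ p := by
    apply aux_exists_pos γ hγ0; rw [hγ1]; norm_num
  choose nxt hnxt1 hnxt2 using step
  obtain ⟨p0, hp0⟩ := h0
  set F : {p : X × Y // 0 < γ p} → {p : X × Y // 0 < γ p} :=
    fun s => ⟨nxt s.1 s.2, hnxt1 s.1 s.2⟩ with hF
  set seq : ℕ → {p : X × Y // 0 < γ p} := fun n => F^[n] ⟨p0, hp0⟩ with hseq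
  set sx : ℕ → X := fun n => (seq n).1.1 with hsx
  set sy : ℕ → Y := fun n => (seq n).1.2 with hsy
  have hg : ∀ n, 0 < γ (sx n, sy n) := by
    intro n
    have := (seq n).2
    rwa [show ((seq n).1.1, (seq n).1.2) = (seq n).1 from Prod.mk.eta]
  have hl : ∀ n, 0 < μ (sx (n+1), sy n) := by
    intro n
    have hs : seq (n+1) = F (seq n) := Function.iterate_succ_apply' F n _
    show 0 < μ ((seq (n+1)).1.1, (seq n).1.2)
    rw [hs]
    exact hnxt2 (seq n).1 (seq n).2
  -- pigeonhole: some repeat exists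
  have hrep : ∃ d : ℕ, 0 < d ∧ ∃ a, (sx a = sx (a+d) ∨ sy a = sy (a+d)) := by
    obtain ⟨a, b, hab, he⟩ := Finite.exists_ne_map_eq_of_infinite sx
    rcases Nat.lt_or_ge a b with h | h
    · exact ⟨b - a, by omega, a, Or.inl (by rw [he]; congr 1; omega)⟩
    · exact ⟨a - b, by omega, b, Or.inl (by rw [← he]; congr 1; omega)⟩
  set d := Nat.find hrep with hd
  obtain ⟨hdpos, a, hcase⟩ := Nat.find_spec hrep
  rw [← hd] at hcase hdpos
  have hmin : ∀ d' : ℕ, 0 < d' → d' < d → ∀ a', sx a' ≠ sx (a'+d') ∧ sy a' ≠ sy (a'+d') := by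
    intro d' hd1 hd2 a'
    have := Nat.find_min hrep hd2
    push_neg at this
    obtain h := this hd1 a'
    exact ⟨h.1, h.2⟩
  obtain ⟨m, hmd⟩ : ∃ m, d = m + 1 := ⟨d - 1, by omega⟩
  rcases hcase with hc | hc
  · -- x-repeat: cycle uses indices a, a+1, ..., a+m
    refine ⟨m, fun i => sx (a + (i:ℕ)), fun i => sy (a + (i:ℕ)), ?_, ?_, fun i => hg _, ?_⟩
    · intro i j hij
      simp only at hij
      by_contra hne
      rcases Nat.lt_or_ge (i:ℕ) (j:ℕ) with h | h
      · exact (hmin ((j:ℕ) - (i:ℕ)) (by omega) (by omega) (a + (i:ℕ))).1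
          (by rw [hij]; congr 1; omega)
      · have h' : (j:ℕ) < (i:ℕ) := by
          rcases Nat.lt_or_ge (j:ℕ) (i:ℕ) with h' | h'
          · exact h'
          · exact absurd (Fin.ext (by omega)) hne
        exact (hmin ((i:ℕ) - (j:ℕ)) (by omega) (by omega) (a + (j:ℕ))).1
          (by rw [← hij]; congr 1; omega)
    · intro i j hij
      simp only at hij
      by_contra hne
      rcases Nat.lt_or_ge (i:ℕ) (j:ℕ) with h | h
      · exact (hmin ((j:ℕ) - (i:ℕ)) (by omega) (by omega) (a + (i:ℕ))).2
          (by rw [hij]; congr 1; omega)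
      · have h' : (j:ℕ) < (i:ℕ) := by
          rcases Nat.lt_or_ge (j:ℕ) (i:ℕ) with h' | h'
          · exact h'
          · exact absurd (Fin.ext (by omega)) hne
        exact (hmin ((i:ℕ) - (j:ℕ)) (by omega) (by omega) (a + (j:ℕ))).2
          (by rw [← hij]; congr 1; omega)
    · intro i
      have hsub := aux_fin_sub_one m i
      show 0 < μ (sx (a + (i:ℕ)), sy (a + ((i - 1 : Fin (m+1)):ℕ)))
      rcases Nat.eq_zero_or_pos (i:ℕ) with h | h
      · rw [h, hsub]
        simp only [h, if_pos rfl, if_true]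
        have hxa : sx (a + 0) = sx (a + m + 1) := by
          rw [Nat.add_zero, hc]; congr 1; omega
        rw [hxa]
        have := hl (a + m)
        convert this using 2
      · rw [hsub, if_neg (by omega)]
        have h1 : a + (i:ℕ) = (a + ((i:ℕ) - 1)) + 1 := by omega
        rw [h1]
        exact hl _
  · -- y-repeat: cycle uses indices a+1, ..., a+m+1
    refine ⟨m, fun i => sx (a + 1 + (i:ℕ)), fun i => sy (a + 1 + (i:ℕ)), ?_, ?_, fun i => hg _, ?_⟩
    · intro i j hij
      simp only at hij
      by_contra hne
      rcases Nat.lt_or_ge (i:ℕ) (j:ℕ) with h | h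
      · exact (hmin ((j:ℕ) - (i:ℕ)) (by omega) (by omega) (a + 1 + (i:ℕ))).1
          (by rw [hij]; congr 1; omega)
      · have h' : (j:ℕ) < (i:ℕ) := by
          rcases Nat.lt_or_ge (j:ℕ) (i:ℕ) with h' | h'
          · exact h'
          · exact absurd (Fin.ext (by omega)) hne
        exact (hmin ((i:ℕ) - (j:ℕ)) (by omega) (by omega) (a + 1 + (j:ℕ))).1
          (by rw [← hij]; congr 1; omega)
    · intro i j hij
      simp only at hij
      by_contra hne
      rcases Nat.lt_or_ge (i:ℕ) (j:ℕ) with h | h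
      · exact (hmin ((j:ℕ) - (i:ℕ)) (by omega) (by omega) (a + 1 + (i:ℕ))).2
          (by rw [hij]; congr 1; omega)
      · have h' : (j:ℕ) < (i:ℕ) := by
          rcases Nat.lt_or_ge (j:ℕ) (i:ℕ) with h' | h'
          · exact h'
          · exact absurd (Fin.ext (by omega)) hne
        exact (hmin ((i:ℕ) - (j:ℕ)) (by omega) (by omega) (a + 1 + (j:ℕ))).2
          (by rw [← hij]; congr 1; omega)
    · intro i
      have hsub := aux_fin_sub_one m i
      show 0 < μ (sx (a + 1 + (i:ℕ)), sy (a + 1 + ((i - 1 : Fin (m+1)):ℕ)))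
      rcases Nat.eq_zero_or_pos (i:ℕ) with h | h
      · rw [hsub, if_pos h, h]
        have hya : sy (a + 1 + m) = sy a := by
          have he : a + 1 + m = a + d := by omega
          rw [he, ← hc]
        rw [hya]
        have := hl a
        convert this using 2
      · rw [hsub, if_neg (by omega)]
        have h1 : a + 1 + (i:ℕ) = (a + 1 + ((i:ℕ) - 1)) + 1 := by omega
        rw [h1]
        exact hl _
end

section
/- Let p be a pmf on X×Y (X, Y finite) and let α ∈ (0,1) ∪ (1,∞]. Then J_α(p) ≥ 0, with J_α(p) = 0 if and only if p is a product pmf, i.e., p(x,y) = p_X(x)·p_Y(y) for all (x,y), where p_X and p_Y are the marginals of p. -/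
open Classical in
/-- Rényi divergence of order `α ∈ (0,1) ∪ (1,∞]` between finitely supported
distributions, with values in `(-∞,∞]`:
`D_α(p‖q) = (α−1)⁻¹ · log Σ_{s : p(s)>0} p(s)^α q(s)^{1−α}` for finite `α`, equal to
`+∞` if `α > 1` and `supp p ⊄ supp q`, and
`D_∞(p‖q) = log max_{s : p(s)>0} p(s)/q(s)`, equal to `+∞` if `supp p ⊄ supp q`. -/
noncomputable def renyiD {S : Type*} [Fintype S] (α : ENNReal) (p q : S → ℝ) : EReal :=
  if α = ⊤ then
    (if ∀ s, 0 < p s → 0 < q s then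
      ((Real.log (sSup { r : ℝ | ∃ s, 0 < p s ∧ r = p s / q s }) : ℝ) : EReal)
    else ⊤)
  else if 1 < α ∧ ¬ ∀ s, 0 < p s → 0 < q s then ⊤
  else (((α.toReal - 1)⁻¹ *
      Real.log (∑ s ∈ Finset.univ.filter (fun s => 0 < p s),
        p s ^ α.toReal * q s ^ (1 - α.toReal)) : ℝ) : EReal)

/-- The correlation measure `J_α(p) = D_α(q‖r)` where
`q((x₁,y₁),(x₂,y₂)) = p(x₁,y₁)·p(x₂,y₂)` and
`r((x₁,y₁),(x₂,y₂)) = p(x₁,y₂)·p(x₂,y₁)`. -/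
noncomputable def Jalpha {X Y : Type*} [Fintype X] [Fintype Y] (α : ENNReal)
    (p : X × Y → ℝ) : EReal :=
  renyiD α (fun t : (X × Y) × (X × Y) => p t.1 * p t.2)
    (fun t : (X × Y) × (X × Y) => p (t.1.1, t.2.2) * p (t.2.1, t.1.2))

open Real in
/-- weighted AM-GM, weight in (0,1), with strictness. -/
lemma gm_am {w a b : ℝ} (hw0 : 0 < w) (hw1 : w < 1) (ha : 0 ≤ a) (hb : 0 ≤ b) :
    a ^ w * b ^ (1 - w) ≤ w * a + (1 - w) * b ∧
      (a ≠ b → a ^ w * b ^ (1 - w) < w * a + (1 - w) * b) := by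
  rcases eq_or_lt_of_le hb with rfl | hb
  · rw [Real.zero_rpow (by linarith), mul_zero, mul_zero, add_zero]
    constructor
    · positivity
    · intro hne
      have : 0 < a := lt_of_le_of_ne ha (Ne.symm hne)
      positivity
  · have hbw : (0:ℝ) < b ^ w := Real.rpow_pos_of_pos hb w
    have hs : -1 ≤ a / b - 1 := by
      have : 0 ≤ a / b := div_nonneg ha hb.le
      linarith
    have key : a ^ w * b ^ (1 - w) = b * (1 + (a / b - 1)) ^ w := by
      rw [show (1 : ℝ) + (a / b - 1) = a / b by ring,
        Real.div_rpow ha hb.le, Real.rpow_sub hb, Real.rpow_one]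
      field_simp
    have key2 : b * (1 + w * (a / b - 1)) = w * a + (1 - w) * b := by
      field_simp
      ring
    constructor
    · have := rpow_one_add_le_one_add_mul_self hs hw0.le hw1.le
      calc a ^ w * b ^ (1 - w) = b * (1 + (a / b - 1)) ^ w := key
        _ ≤ b * (1 + w * (a / b - 1)) := by nlinarith
        _ = w * a + (1 - w) * b := key2
    · intro hne
      have hs' : a / b - 1 ≠ 0 := by
        intro h
        apply hne
        have : a / b = 1 := by linarith
        field_simp at this
        linarith
      have := rpow_one_add_lt_one_add_mul_self hs hs' hw0 hw1
      calc a ^ w * b ^ (1 - w) = b * (1 + (a / b - 1)) ^ w := key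
        _ < b * (1 + w * (a / b - 1)) := by nlinarith
        _ = w * a + (1 - w) * b := key2

open Real in
/-- reversed AM-GM for weight > 1, with strictness. -/
lemma am_gm {w a b : ℝ} (hw : 1 < w) (ha : 0 ≤ a) (hb : 0 < b) :
    w * a + (1 - w) * b ≤ a ^ w * b ^ (1 - w) ∧
      (a ≠ b → w * a + (1 - w) * b < a ^ w * b ^ (1 - w)) := by
  have hbw : (0:ℝ) < b ^ w := Real.rpow_pos_of_pos hb w
  have hs : -1 ≤ a / b - 1 := by
    have : 0 ≤ a / b := div_nonneg ha hb.le
    linarith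
  have key : a ^ w * b ^ (1 - w) = b * (1 + (a / b - 1)) ^ w := by
    rw [show (1 : ℝ) + (a / b - 1) = a / b by ring,
      Real.div_rpow ha hb.le, Real.rpow_sub hb, Real.rpow_one]
    field_simp
  have key2 : b * (1 + w * (a / b - 1)) = w * a + (1 - w) * b := by
    field_simp
    ring
  constructor
  · have := one_add_mul_self_le_rpow_one_add hs hw.le
    calc w * a + (1 - w) * b = b * (1 + w * (a / b - 1)) := key2.symm
      _ ≤ b * (1 + (a / b - 1)) ^ w := by nlinarith
      _ = a ^ w * b ^ (1 - w) := key.symm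
  · intro hne
    have hs' : a / b - 1 ≠ 0 := by
      intro h
      apply hne
      have : a / b = 1 := by linarith
      field_simp at this
      linarith
    have := one_add_mul_self_lt_rpow_one_add hs hs' hw
    calc w * a + (1 - w) * b = b * (1 + w * (a / b - 1)) := key2.symm
      _ < b * (1 + (a / b - 1)) ^ w := by nlinarith
      _ = a ^ w * b ^ (1 - w) := key.symm

open Classical in
lemma sum_filter_pmf {S : Type*} [Fintype S] {p : S → ℝ} (hp : IsPMF p) :
    ∑ s ∈ Finset.univ.filter (fun s => 0 < p s), p s = 1 := by
  rw [Finset.sum_filter_of_ne, hp.2]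
  intro x _ h
  exact lt_of_le_of_ne (hp.1 x) (Ne.symm h)

open Classical in
lemma sum_filter_le_one {S : Type*} [Fintype S] {p : S → ℝ} (P : S → Prop) (hp : IsPMF p) :
    ∑ s ∈ Finset.univ.filter P, p s ≤ 1 := by
  rw [← hp.2]
  exact Finset.sum_le_sum_of_subset_of_nonneg (Finset.filter_subset _ _)
    (fun i _ _ => hp.1 i)

open Classical in
lemma sumA {S : Type*} [Fintype S] {p q : S → ℝ} (hp : IsPMF p) (hq : IsPMF q)
    {w : ℝ} (hw0 : 0 < w) (hw1 : w < 1) :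
    (∑ s ∈ Finset.univ.filter (fun s => 0 < p s), p s ^ w * q s ^ (1 - w)) ≤ 1 ∧
    ((∑ s ∈ Finset.univ.filter (fun s => 0 < p s), p s ^ w * q s ^ (1 - w)) = 1 ↔ p = q) := by
  set F := Finset.univ.filter (fun s => 0 < p s) with hF
  have key : ∀ s ∈ F, p s ^ w * q s ^ (1 - w) ≤ w * p s + (1 - w) * q s :=
    fun s _ => (gm_am hw0 hw1 (hp.1 s) (hq.1 s)).1
  have hFp : ∑ s ∈ F, p s = 1 := sum_filter_pmf hp
  have hFq : ∑ s ∈ F, q s ≤ 1 := sum_filter_le_one _ hq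
  have hsum : ∑ s ∈ F, (w * p s + (1 - w) * q s)
      = w * (∑ s ∈ F, p s) + (1 - w) * (∑ s ∈ F, q s) := by
    rw [Finset.sum_add_distrib, Finset.mul_sum, Finset.mul_sum]
  have haff : ∑ s ∈ F, (w * p s + (1 - w) * q s) ≤ 1 := by
    rw [hsum, hFp]
    nlinarith
  have hle : (∑ s ∈ F, p s ^ w * q s ^ (1 - w)) ≤ 1 :=
    le_trans (Finset.sum_le_sum key) haff
  refine ⟨hle, ?_, ?_⟩
  · intro hT
    have haff1 : ∑ s ∈ F, (w * p s + (1 - w) * q s) = 1 :=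
      le_antisymm haff (le_of_eq_of_le hT.symm (Finset.sum_le_sum key))
    have hpt : ∀ s ∈ F, p s ^ w * q s ^ (1 - w) = w * p s + (1 - w) * q s :=
      (Finset.sum_eq_sum_iff_of_le key).mp (hT.trans haff1.symm)
    have hpq : ∀ s ∈ F, p s = q s := by
      intro s hs
      by_contra hne
      exact absurd (hpt s hs) (ne_of_lt ((gm_am hw0 hw1 (hp.1 s) (hq.1 s)).2 hne))
    have hFq1 : ∑ s ∈ F, q s = 1 := by
      rw [hsum, hFp] at haff1
      nlinarith
    have hzero : ∀ s ∈ Finset.univ.filter (fun s => ¬ 0 < p s), q s = 0 := by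
      have htot : (∑ s ∈ F, q s) + ∑ s ∈ Finset.univ.filter (fun s => ¬ 0 < p s), q s = 1 := by
        rw [hF, Finset.sum_filter_add_sum_filter_not, hq.2]
      have : ∑ s ∈ Finset.univ.filter (fun s => ¬ 0 < p s), q s = 0 := by linarith
      exact fun s hs => (Finset.sum_eq_zero_iff_of_nonneg (fun i _ => hq.1 i)).mp this s hs
    funext s
    by_cases hps : 0 < p s
    · exact hpq s (Finset.mem_filter.mpr ⟨Finset.mem_univ s, hps⟩)
    · have h1 : p s = 0 := le_antisymm (not_lt.mp hps) (hp.1 s)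
      have h2 : q s = 0 := hzero s (Finset.mem_filter.mpr ⟨Finset.mem_univ s, hps⟩)
      rw [h1, h2]
  · rintro rfl
    have : ∀ s ∈ F, p s ^ w * p s ^ (1 - w) = p s := by
      intro s hs
      have hps : 0 < p s := (Finset.mem_filter.mp hs).2
      rw [← Real.rpow_add hps, show w + (1 - w) = 1 by ring, Real.rpow_one]
    rw [Finset.sum_congr rfl this, hFp]

open Classical in
lemma sumB {S : Type*} [Fintype S] {p q : S → ℝ} (hp : IsPMF p) (hq : IsPMF q)
    {w : ℝ} (hw : 1 < w) (hsupp : ∀ s, 0 < p s → 0 < q s) :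
    1 ≤ (∑ s ∈ Finset.univ.filter (fun s => 0 < p s), p s ^ w * q s ^ (1 - w)) ∧
    ((∑ s ∈ Finset.univ.filter (fun s => 0 < p s), p s ^ w * q s ^ (1 - w)) = 1 ↔ p = q) := by
  set F := Finset.univ.filter (fun s => 0 < p s) with hF
  have key : ∀ s ∈ F, w * p s + (1 - w) * q s ≤ p s ^ w * q s ^ (1 - w) := by
    intro s hs
    exact (am_gm hw (hp.1 s) (hsupp s (Finset.mem_filter.mp hs).2)).1
  have hFp : ∑ s ∈ F, p s = 1 := sum_filter_pmf hp
  have hFq : ∑ s ∈ F, q s ≤ 1 := sum_filter_le_one _ hq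
  have hsum : ∑ s ∈ F, (w * p s + (1 - w) * q s)
      = w * (∑ s ∈ F, p s) + (1 - w) * (∑ s ∈ F, q s) := by
    rw [Finset.sum_add_distrib, Finset.mul_sum, Finset.mul_sum]
  have haff : 1 ≤ ∑ s ∈ F, (w * p s + (1 - w) * q s) := by
    rw [hsum, hFp]
    nlinarith
  have hle : 1 ≤ (∑ s ∈ F, p s ^ w * q s ^ (1 - w)) :=
    le_trans haff (Finset.sum_le_sum key)
  refine ⟨hle, ?_, ?_⟩
  · intro hT
    have haff1 : ∑ s ∈ F, (w * p s + (1 - w) * q s) = 1 :=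
      le_antisymm (le_of_le_of_eq (Finset.sum_le_sum key) hT) haff
    have hpt : ∀ s ∈ F, w * p s + (1 - w) * q s = p s ^ w * q s ^ (1 - w) :=
      (Finset.sum_eq_sum_iff_of_le key).mp (haff1.trans hT.symm)
    have hpq : ∀ s ∈ F, p s = q s := by
      intro s hs
      by_contra hne
      exact absurd (hpt s hs)
        (ne_of_lt ((am_gm hw (hp.1 s) (hsupp s (Finset.mem_filter.mp hs).2)).2 hne))
    have hFq1 : ∑ s ∈ F, q s = 1 := by
      rw [hsum, hFp] at haff1
      nlinarith
    have hzero : ∀ s ∈ Finset.univ.filter (fun s => ¬ 0 < p s), q s = 0 := by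
      have htot : (∑ s ∈ F, q s) + ∑ s ∈ Finset.univ.filter (fun s => ¬ 0 < p s), q s = 1 := by
        rw [hF, Finset.sum_filter_add_sum_filter_not, hq.2]
      have : ∑ s ∈ Finset.univ.filter (fun s => ¬ 0 < p s), q s = 0 := by linarith
      exact fun s hs => (Finset.sum_eq_zero_iff_of_nonneg (fun i _ => hq.1 i)).mp this s hs
    funext s
    by_cases hps : 0 < p s
    · exact hpq s (Finset.mem_filter.mpr ⟨Finset.mem_univ s, hps⟩)
    · have h1 : p s = 0 := le_antisymm (not_lt.mp hps) (hp.1 s)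
      have h2 : q s = 0 := hzero s (Finset.mem_filter.mpr ⟨Finset.mem_univ s, hps⟩)
      rw [h1, h2]
  · rintro rfl
    have : ∀ s ∈ F, p s ^ w * p s ^ (1 - w) = p s := by
      intro s hs
      have hps : 0 < p s := (Finset.mem_filter.mp hs).2
      rw [← Real.rpow_add hps, show w + (1 - w) = 1 by ring, Real.rpow_one]
    rw [Finset.sum_congr rfl this, hFp]


open Classical in
lemma renyi_faithful {S : Type*} [Fintype S] {p q : S → ℝ} (hp : IsPMF p) (hq : IsPMF q)
    (hpos : ∃ s, 0 < p s ∧ 0 < q s) (α : ENNReal) (hα : 0 < α ∧ α ≠ 1) :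
    0 ≤ renyiD α p q ∧ (renyiD α p q = 0 ↔ p = q) := by
  obtain ⟨s₂, hs₂p, hs₂q⟩ := hpos
  by_cases htop : α = ⊤
  · unfold renyiD
    rw [if_pos htop]
    by_cases hsupp : ∀ s, 0 < p s → 0 < q s
    · rw [if_pos hsupp]
      set A : Set ℝ := { r : ℝ | ∃ s, 0 < p s ∧ r = p s / q s } with hA
      have hA_eq : A = (fun s => p s / q s) '' {s | 0 < p s} := by
        ext x
        simp only [hA, Set.mem_setOf_eq, Set.mem_image, eq_comm]
      have hbdd : BddAbove A := by
        rw [hA_eq]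
        exact ((Set.toFinite _).image _).bddAbove
      have hub : ∀ s, 0 < p s → p s / q s ≤ sSup A :=
        fun s hs => le_csSup hbdd ⟨s, hs, rfl⟩
      set M := sSup A with hM
      have hM0 : 0 < M := lt_of_lt_of_le (div_pos hs₂p hs₂q) (hub s₂ hs₂p)
      have hM1 : 1 ≤ M := by
        set F := Finset.univ.filter (fun s => 0 < p s) with hF
        have h1 : ∀ s ∈ F, p s ≤ M * q s := by
          intro s hs
          have hps : 0 < p s := (Finset.mem_filter.mp hs).2
          exact (div_le_iff₀ (hsupp s hps)).mp (hub s hps)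
        calc (1:ℝ) = ∑ s ∈ F, p s := (sum_filter_pmf hp).symm
          _ ≤ ∑ s ∈ F, M * q s := Finset.sum_le_sum h1
          _ = M * ∑ s ∈ F, q s := by rw [Finset.mul_sum]
          _ ≤ M * 1 := by
              have := sum_filter_le_one (fun s => 0 < p s) hq
              nlinarith
          _ = M := mul_one M
      constructor
      · exact EReal.coe_nonneg.mpr (Real.log_nonneg hM1)
      · rw [EReal.coe_eq_zero]
        constructor
        · intro h
          have hMone : M = 1 := by
            rcases Real.log_eq_zero.mp h with h' | h' | h' <;> linarith
          have hle : ∀ s ∈ (Finset.univ : Finset S), p s ≤ q s := by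
            intro s _
            by_cases hps : 0 < p s
            · have := hub s hps
              rw [hMone] at this
              exact (div_le_one (hsupp s hps)).mp this
            · rw [le_antisymm (not_lt.mp hps) (hp.1 s)]; exact hq.1 s
          have := (Finset.sum_eq_sum_iff_of_le hle).mp (hp.2.trans hq.2.symm)
          funext s
          exact this s (Finset.mem_univ s)
        · rintro rfl
          have hA1 : A = {1} := by
            ext x
            simp only [hA, Set.mem_setOf_eq, Set.mem_singleton_iff]
            constructor
            · rintro ⟨s, hs, rfl⟩
              exact div_self (ne_of_gt hs)
            · rintro rfl
              exact ⟨s₂, hs₂p, (div_self (ne_of_gt hs₂p)).symm⟩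
          rw [hM, hA1, csSup_singleton, Real.log_one]
    · rw [if_neg hsupp]
      refine ⟨le_top, ?_, ?_⟩
      · intro h
        exact absurd h (by simp)
      · rintro rfl
        exact absurd (fun s hs => hs) hsupp
  · have hw0 : 0 < α.toReal := ENNReal.toReal_pos hα.1.ne' htop
    have hw1 : α.toReal ≠ 1 := fun h => hα.2 ((ENNReal.toReal_eq_one_iff α).mp h)
    have hlt_iff : 1 < α.toReal ↔ 1 < α := by
      rw [← ENNReal.toReal_one]
      exact ENNReal.toReal_lt_toReal (by simp) htop
    unfold renyiD
    rw [if_neg htop]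
    rcases lt_or_gt_of_ne hw1 with hlt | hgt
    · have hnot : ¬ (1 < α ∧ ¬ ∀ s, 0 < p s → 0 < q s) := by
        rintro ⟨h1, _⟩
        exact absurd (hlt_iff.mpr h1) (not_lt.mpr hlt.le)
      rw [if_neg hnot]
      obtain ⟨hTle, hTiff⟩ := sumA hp hq hw0 hlt
      set T := ∑ s ∈ Finset.univ.filter (fun s => 0 < p s),
        p s ^ α.toReal * q s ^ (1 - α.toReal) with hT
      have hT0 : 0 < T := by
        apply Finset.sum_pos'
        · intro i _
          exact mul_nonneg (Real.rpow_nonneg (hp.1 i) _) (Real.rpow_nonneg (hq.1 i) _)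
        · exact ⟨s₂, Finset.mem_filter.mpr ⟨Finset.mem_univ s₂, hs₂p⟩,
            mul_pos (Real.rpow_pos_of_pos hs₂p _) (Real.rpow_pos_of_pos hs₂q _)⟩
      have hinv : (α.toReal - 1)⁻¹ < 0 := inv_neg''.mpr (by linarith)
      constructor
      · refine EReal.coe_nonneg.mpr ?_
        nlinarith [Real.log_nonpos hT0.le hTle, hinv.le]
      · rw [EReal.coe_eq_zero, mul_eq_zero]
        constructor
        · rintro (h | h)
          · exact absurd h (ne_of_lt hinv)
          · apply hTiff.mp
            rcases Real.log_eq_zero.mp h with h' | h' | h' <;> linarith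
        · intro h
          exact Or.inr (by rw [hTiff.mpr h, Real.log_one])
    · by_cases hsupp : ∀ s, 0 < p s → 0 < q s
      · rw [if_neg (fun h => h.2 hsupp)]
        obtain ⟨hTge, hTiff⟩ := sumB hp hq hgt hsupp
        set T := ∑ s ∈ Finset.univ.filter (fun s => 0 < p s),
          p s ^ α.toReal * q s ^ (1 - α.toReal) with hT
        have hinv : 0 < (α.toReal - 1)⁻¹ := inv_pos.mpr (by linarith)
        constructor
        · exact EReal.coe_nonneg.mpr (mul_nonneg hinv.le (Real.log_nonneg hTge))
        · rw [EReal.coe_eq_zero, mul_eq_zero]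
          constructor
          · rintro (h | h)
            · exact absurd h (ne_of_gt hinv)
            · apply hTiff.mp
              rcases Real.log_eq_zero.mp h with h' | h' | h' <;> linarith
          · intro h
            exact Or.inr (by rw [hTiff.mpr h, Real.log_one])
      · rw [if_pos ⟨hlt_iff.mp hgt, hsupp⟩]
        refine ⟨le_top, ?_, ?_⟩
        · intro h
          exact absurd h (by simp)
        · rintro rfl
          exact absurd (fun s hs => hs) hsupp

/-- The swap equivalence. -/
def swapE (X Y : Type*) : ((X × Y) × (X × Y)) ≃ ((X × Y) × (X × Y)) where
  toFun t := ((t.1.1, t.2.2), (t.2.1, t.1.2))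
  invFun t := ((t.1.1, t.2.2), (t.2.1, t.1.2))
  left_inv t := rfl
  right_inv t := rfl

/-- faithfulness: for any pmf `p` on `X × Y` and any
`α ∈ (0,1) ∪ (1,∞]`, we have `J_α(p) ≥ 0`, with equality iff `p` is a product pmf. -/
theorem Jalpha_nonneg_and_eq_zero_iff {X Y : Type*} [Fintype X] [Fintype Y]
    (p : X × Y → ℝ) (hp : IsPMF p) (α : ENNReal) (hα : 0 < α ∧ α ≠ 1) :
    0 ≤ Jalpha α p ∧
      (Jalpha α p = 0 ↔ ∀ x y, p (x, y) = (∑ y', p (x, y')) * (∑ x', p (x', y))) := by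
  set Q : (X × Y) × (X × Y) → ℝ := fun t => p t.1 * p t.2 with hQ
  set R : (X × Y) × (X × Y) → ℝ := fun t => p (t.1.1, t.2.2) * p (t.2.1, t.1.2) with hR
  have hQsum : ∑ t : (X × Y) × (X × Y), Q t = 1 := by
    calc ∑ t : (X × Y) × (X × Y), Q t = ∑ a : X × Y, ∑ b : X × Y, p a * p b :=
          Fintype.sum_prod_type _
      _ = (∑ a : X × Y, p a) * (∑ b : X × Y, p b) := (Finset.sum_mul_sum _ _ _ _).symm
      _ = 1 := by rw [hp.2, mul_one]
  have hQpmf : IsPMF Q := ⟨fun t => mul_nonneg (hp.1 _) (hp.1 _), hQsum⟩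
  have hRQ : ∀ t, R t = Q (swapE X Y t) := fun t => rfl
  have hRpmf : IsPMF R := by
    refine ⟨fun t => mul_nonneg (hp.1 _) (hp.1 _), ?_⟩
    calc ∑ t, R t = ∑ t, Q (swapE X Y t) := Finset.sum_congr rfl (fun t _ => hRQ t)
      _ = ∑ t, Q t := Equiv.sum_comp _ _
      _ = 1 := hQsum
  have hpos : ∃ t, 0 < Q t ∧ 0 < R t := by
    have : ∃ s, 0 < p s := by
      by_contra h
      push_neg at h
      have hz : ∀ s, p s = 0 := fun s => le_antisymm (h s) (hp.1 s)
      have hs := hp.2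
      rw [Finset.sum_congr rfl (fun s _ => hz s), Finset.sum_const, smul_zero] at hs
      exact one_ne_zero hs.symm
    obtain ⟨s₀, hs₀⟩ := this
    exact ⟨(s₀, s₀), mul_pos hs₀ hs₀, mul_pos hs₀ hs₀⟩
  obtain ⟨h1, h2⟩ := renyi_faithful hQpmf hRpmf hpos α hα
  refine ⟨h1, h2.trans ?_⟩
  constructor
  · intro hQR x y
    have hsum : ∑ t' : X × Y, Q ((x, y), t') = ∑ t' : X × Y, R ((x, y), t') :=
      Finset.sum_congr rfl (fun t' _ => by rw [hQR])
    have hL : ∑ t' : X × Y, Q ((x, y), t') = p (x, y) := by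
      simp only [hQ]
      rw [← Finset.mul_sum, hp.2, mul_one]
    have hRside : ∑ t' : X × Y, R ((x, y), t')
        = (∑ y', p (x, y')) * (∑ x', p (x', y)) := by
      simp only [hR]
      calc ∑ t' : X × Y, p (x, t'.2) * p (t'.1, y)
          = ∑ x', ∑ y', p (x, y') * p (x', y) := Fintype.sum_prod_type _
        _ = ∑ y', ∑ x', p (x, y') * p (x', y) := Finset.sum_comm
        _ = (∑ y', p (x, y')) * (∑ x', p (x', y)) := (Finset.sum_mul_sum _ _ _ _).symm
    rw [← hL, hsum, hRside]
  · intro hprod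
    funext t
    obtain ⟨⟨x1, y1⟩, ⟨x2, y2⟩⟩ := t
    show p (x1, y1) * p (x2, y2) = p (x1, y2) * p (x2, y1)
    rw [hprod x1 y1, hprod x2 y2, hprod x1 y2, hprod x2 y1]
    ring
end

section
/- Let p be a pmf on X×Y (X, Y finite), let W_A be a channel from X to a finite set A, and let W_B be a channel from Y to a finite set B, so that the joint pmf p(a,x,y,b) = W_A(a|x)·p(x,y)·W_B(b|y) realizes the Markov chain A → X → Y → B. Let p_{AB}(a,b) = Σ_{x,y} W_A(a|x)·p(x,y)·W_B(b|y). Then for every α ∈ (0,1) ∪ (1,∞], J_α(p_{AB}) ≤ J_α(p). -/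
lemma rpow_self_mul {a : ℝ} (ha : a ≠ 0) {x : ℝ} (hx : 0 ≤ x) :
    x ^ a * x ^ (1 - a) = x := by
  rcases hx.eq_or_lt with h | h
  · rw [← h, Real.zero_rpow ha, zero_mul]
  · rw [← Real.rpow_add h]; norm_num

lemma hterm_eq {a : ℝ} (ha : a ≠ 0) {k x y : ℝ} (hk : 0 ≤ k) (hx : 0 ≤ x) (hy : 0 ≤ y) :
    k * (x ^ a * y ^ (1 - a)) = (k * x) ^ a * ((k * y) ^ (1 - a)) := by
  rw [Real.mul_rpow hk hx, Real.mul_rpow hk hy,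
    show k ^ a * x ^ a * (k ^ (1 - a) * y ^ (1 - a))
      = (k ^ a * k ^ (1 - a)) * (x ^ a * y ^ (1 - a)) from by ring,
    rpow_self_mul ha hk]

lemma radon_convex {ι : Type*} (F : Finset ι) (u v : ι → ℝ) {a : ℝ} (ha : 1 < a)
    (hu : ∀ i ∈ F, 0 ≤ u i) (hv : ∀ i ∈ F, 0 < v i) :
    (∑ i ∈ F, u i) ^ a * (∑ i ∈ F, v i) ^ (1 - a) ≤ ∑ i ∈ F, u i ^ a * v i ^ (1 - a) := by
  have ha0 : a ≠ 0 := by linarith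
  rcases F.eq_empty_or_nonempty with rfl | hF
  · simp [Real.zero_rpow ha0]
  have hV : 0 < ∑ i ∈ F, v i := Finset.sum_pos hv hF
  have hU : 0 ≤ ∑ i ∈ F, u i := Finset.sum_nonneg hu
  have key := Real.rpow_arith_mean_le_arith_mean_rpow F
    (fun i => v i / (∑ i ∈ F, v i)) (fun i => u i / v i)
    (fun i hi => div_nonneg (hv i hi).le hV.le)
    (by rw [← Finset.sum_div, div_self hV.ne'])
    (fun i hi => div_nonneg (hu i hi) (hv i hi).le) ha.le
  have e1 : ∑ i ∈ F, v i / (∑ i ∈ F, v i) * (u i / v i) = (∑ i ∈ F, u i) / (∑ i ∈ F, v i) := by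
    rw [show ((∑ i ∈ F, u i) / (∑ i ∈ F, v i)) = ∑ i ∈ F, u i / (∑ i ∈ F, v i) from Finset.sum_div ..]
    refine Finset.sum_congr rfl fun i hi => ?_
    field_simp [(hv i hi).ne']
  have e2 : ∀ i ∈ F, v i / (∑ i ∈ F, v i) * (u i / v i) ^ a
      = u i ^ a * v i ^ (1 - a) / (∑ i ∈ F, v i) := by
    intro i hi
    rw [Real.div_rpow (hu i hi) (hv i hi).le, Real.rpow_sub (hv i hi), Real.rpow_one]
    field_simp
  rw [e1, Finset.sum_congr rfl e2, ← Finset.sum_div] at key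
  have key2 := mul_le_mul_of_nonneg_right key hV.le
  rw [div_mul_cancel₀ _ hV.ne'] at key2
  calc (∑ i ∈ F, u i) ^ a * (∑ i ∈ F, v i) ^ (1 - a)
      = ((∑ i ∈ F, u i) / (∑ i ∈ F, v i)) ^ a * (∑ i ∈ F, v i) := by
        rw [Real.div_rpow hU hV.le, Real.rpow_sub hV, Real.rpow_one]
        field_simp
    _ ≤ ∑ i ∈ F, u i ^ a * v i ^ (1 - a) := key2

lemma holder_concave {ι : Type*} (F : Finset ι) (u v : ι → ℝ) {a : ℝ} (ha0 : 0 < a) (ha1 : a < 1)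
    (hu : ∀ i ∈ F, 0 ≤ u i) (hv : ∀ i ∈ F, 0 ≤ v i) :
    ∑ i ∈ F, u i ^ a * v i ^ (1 - a) ≤ (∑ i ∈ F, u i) ^ a * (∑ i ∈ F, v i) ^ (1 - a) := by
  have h1a : (0:ℝ) < 1 - a := by linarith
  have hpq : Real.HolderConjugate (1/a) (1/(1-a)) := by
    exact Real.holderConjugate_one_div ha0 h1a (by ring)
  have h := Real.inner_le_Lp_mul_Lq F (fun i => u i ^ a) (fun i => v i ^ (1 - a)) hpq
  simp only [one_div_one_div] at h
  have e1 : (∑ i ∈ F, |u i ^ a| ^ (1/a)) = ∑ i ∈ F, u i :=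
    Finset.sum_congr rfl fun i hi => by
      rw [abs_of_nonneg (Real.rpow_nonneg (hu i hi) a), ← Real.rpow_mul (hu i hi),
        mul_one_div_cancel ha0.ne', Real.rpow_one]
  have e2 : (∑ i ∈ F, |v i ^ (1-a)| ^ (1/(1-a))) = ∑ i ∈ F, v i :=
    Finset.sum_congr rfl fun i hi => by
      rw [abs_of_nonneg (Real.rpow_nonneg (hv i hi) (1-a)), ← Real.rpow_mul (hv i hi),
        mul_one_div_cancel h1a.ne', Real.rpow_one]
  rw [e1, e2] at h
  exact h

lemma exists_pos_of_sum_pos {S : Type*} [Fintype S] {f : S → ℝ} (h : 0 < ∑ s, f s) :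
    ∃ s, 0 < f s := by
  by_contra hc
  push_neg at hc
  exact absurd (Finset.sum_nonpos (fun s _ => hc s)) (not_le.2 h)

section DPI
variable {S T : Type*} [Fintype S] [Fintype T]

open Finset in
open Classical in
lemma renyiD_DPI (α : ENNReal) (hα : 0 < α ∧ α ≠ 1) (q r : S → ℝ)
    (hq : IsPMF q) (hr : IsPMF r)
    (K : S → T → ℝ) (hK : ∀ s, IsPMF (K s))
    (hpos : ∃ s, 0 < q s ∧ 0 < r s) :
    renyiD α (fun t => ∑ s, K s t * q s) (fun t => ∑ s, K s t * r s) ≤ renyiD α q r := by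
  have hKnn : ∀ s t, 0 ≤ K s t := fun s t => (hK s).1 t
  have hKq_nn : ∀ t, 0 ≤ ∑ s, K s t * q s :=
    fun t => Finset.sum_nonneg fun s _ => mul_nonneg (hKnn s t) (hq.1 s)
  have hKr_nn : ∀ t, 0 ≤ ∑ s, K s t * r s :=
    fun t => Finset.sum_nonneg fun s _ => mul_nonneg (hKnn s t) (hr.1 s)
  -- a positive term from a positive pushforward
  have hex : ∀ (f : S → ℝ), (∀ s, 0 ≤ f s) → ∀ t, 0 < ∑ s, K s t * f s →
      ∃ s, 0 < K s t ∧ 0 < f s := by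
    intro f hf t ht
    obtain ⟨s, hs⟩ := exists_pos_of_sum_pos ht
    refine ⟨s, ?_, ?_⟩
    · rcases (hKnn s t).eq_or_lt with h | h
      · rw [← h, zero_mul] at hs; exact absurd hs (lt_irrefl 0)
      · exact h
    · rcases (hf s).eq_or_lt with h | h
      · rw [← h, mul_zero] at hs; exact absurd hs (lt_irrefl 0)
      · exact h
  -- support transfer
  have transfer : (∀ s, 0 < q s → 0 < r s) →
      ∀ t, 0 < ∑ s, K s t * q s → 0 < ∑ s, K s t * r s := by
    intro hs t ht
    obtain ⟨s, hKs, hqs⟩ := hex q hq.1 t ht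
    have h1 : 0 < K s t * r s := mul_pos hKs (hs s hqs)
    have h2 : K s t * r s ≤ ∑ s, K s t * r s :=
      Finset.single_le_sum (fun s _ => mul_nonneg (hKnn s t) (hr.1 s)) (mem_univ s)
    linarith
  -- the pushforward of q is a pmf; existence of t with positive pushforward
  have hKq_sum : ∑ t, ∑ s, K s t * q s = 1 := by
    rw [Finset.sum_comm]
    calc ∑ s, ∑ t, K s t * q s = ∑ s, q s := by
          refine Finset.sum_congr rfl fun s _ => ?_
          rw [← Finset.sum_mul, (hK s).2, one_mul]
      _ = 1 := hq.2
  have hKq_ex : ∃ t, 0 < ∑ s, K s t * q s :=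
    exists_pos_of_sum_pos (by rw [hKq_sum]; norm_num)
  rcases eq_or_ne α ⊤ with rfl | htop
  · -- α = ∞
    rw [renyiD, renyiD, if_pos rfl, if_pos rfl]
    by_cases hs : ∀ s, 0 < q s → 0 < r s
    · rw [if_pos hs, if_pos (fun t => transfer hs t)]
      apply EReal.coe_le_coe_iff.2
      have hfin1 : ({ x : ℝ | ∃ s, 0 < q s ∧ x = q s / r s}).Finite :=
        (Set.finite_range fun s => q s / r s).subset (by rintro x ⟨s, _, rfl⟩; exact ⟨s, rfl⟩)
      have hfin2 : ({ x : ℝ | ∃ t, 0 < ∑ s, K s t * q s ∧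
          x = (∑ s, K s t * q s) / (∑ s, K s t * r s)}).Finite :=
        (Set.finite_range fun t => (∑ s, K s t * q s) / (∑ s, K s t * r s)).subset
          (by rintro x ⟨t, _, rfl⟩; exact ⟨t, rfl⟩)
      obtain ⟨s0, hq0, hr0⟩ := hpos
      set M := sSup { x : ℝ | ∃ s, 0 < q s ∧ x = q s / r s} with hMdef
      have hMpos : 0 < M :=
        (div_pos hq0 hr0).trans_le (le_csSup hfin1.bddAbove ⟨s0, hq0, rfl⟩)
      have hqr : ∀ s, q s ≤ M * r s := by
        intro s
        rcases (hq.1 s).eq_or_lt with h | h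
        · rw [← h]; exact mul_nonneg hMpos.le (hr.1 s)
        · have hrs := hs s h
          rw [← div_le_iff₀ hrs] at *
          exact le_csSup hfin1.bddAbove ⟨s, h, rfl⟩
      have hKqr : ∀ t, (∑ s, K s t * q s) ≤ M * ∑ s, K s t * r s := by
        intro t
        calc ∑ s, K s t * q s ≤ ∑ s, K s t * (M * r s) :=
              Finset.sum_le_sum fun s _ => mul_le_mul_of_nonneg_left (hqr s) (hKnn s t)
          _ = M * ∑ s, K s t * r s := by rw [Finset.mul_sum]; exact Finset.sum_congr rfl fun s _ => by ring
      obtain ⟨t1, ht1⟩ := hKq_ex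
      have hKpos : 0 < (∑ s, K s t1 * q s) / (∑ s, K s t1 * r s) :=
        div_pos ht1 (transfer hs t1 ht1)
      refine Real.log_le_log (hKpos.trans_le (le_csSup hfin2.bddAbove ⟨t1, ht1, rfl⟩)) ?_
      refine csSup_le ⟨_, t1, ht1, rfl⟩ ?_
      rintro x ⟨t, ht, rfl⟩
      rw [div_le_iff₀ (transfer hs t ht)]
      exact hKqr t
    · rw [if_neg hs]
      exact le_top
  · -- α finite
    set a := α.toReal with hadef
    have ha0 : 0 < a := ENNReal.toReal_pos hα.1.ne' htop
    have hg_nn : ∀ s, 0 ≤ q s ^ a * r s ^ (1 - a) := fun s =>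
      mul_nonneg (Real.rpow_nonneg (hq.1 s) _) (Real.rpow_nonneg (hr.1 s) _)
    -- per-term rewriting
    have hKg : ∀ t s, K s t * (q s ^ a * r s ^ (1 - a))
        = (K s t * q s) ^ a * ((K s t * r s) ^ (1 - a)) := fun t s =>
      hterm_eq ha0.ne' (hKnn s t) (hq.1 s) (hr.1 s)
    -- full sum equals filtered sum for the base pair
    have e0 : ∑ s ∈ Finset.univ.filter (fun s => 0 < q s), q s ^ a * r s ^ (1 - a)
        = ∑ s, q s ^ a * r s ^ (1 - a) := by
      refine Finset.sum_filter_of_ne fun s _ hne => ?_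
      rcases (hq.1 s).eq_or_lt with h | h
      · exact absurd (by rw [← h, Real.zero_rpow ha0.ne', zero_mul]) hne
      · exact h
    have e1 : ∑ t ∈ Finset.univ.filter (fun t => 0 < ∑ s, K s t * q s),
          (∑ s, K s t * q s) ^ a * (∑ s, K s t * r s) ^ (1 - a)
        = ∑ t, (∑ s, K s t * q s) ^ a * (∑ s, K s t * r s) ^ (1 - a) := by
      refine Finset.sum_filter_of_ne fun t _ hne => ?_
      rcases (hKq_nn t).eq_or_lt with h | h
      · exact absurd (by rw [← h, Real.zero_rpow ha0.ne', zero_mul]) hne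
      · exact h
    have emid : ∑ s, q s ^ a * r s ^ (1 - a)
        = ∑ t, ∑ s, K s t * (q s ^ a * r s ^ (1 - a)) := by
      rw [Finset.sum_comm]
      refine Finset.sum_congr rfl fun s _ => ?_
      rw [← Finset.sum_mul, (hK s).2, one_mul]
    rcases hα.2.lt_or_gt with hlt | hgt
    · -- α < 1
      have ha1 : a < 1 := by
        have := (ENNReal.toReal_lt_toReal htop (by norm_num : (1:ENNReal) ≠ ⊤)).2 hlt
        simpa using this
      have h1 : ¬ (1 < α ∧ ¬ ∀ t, 0 < (∑ s, K s t * q s) → 0 < (∑ s, K s t * r s)) :=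
        fun h => absurd h.1 (not_lt.2 hlt.le)
      have h2 : ¬ (1 < α ∧ ¬ ∀ s, 0 < q s → 0 < r s) :=
        fun h => absurd h.1 (not_lt.2 hlt.le)
      simp only [renyiD, if_neg htop, if_neg h1, if_neg h2]
      apply EReal.coe_le_coe_iff.2
      rw [← hadef]
      -- S ≤ S_K and 0 < S
      obtain ⟨s0, hq0, hr0⟩ := hpos
      have hSpos : 0 < ∑ s ∈ Finset.univ.filter (fun s => 0 < q s),
          q s ^ a * r s ^ (1 - a) := by
        have hmem : s0 ∈ Finset.univ.filter (fun s => 0 < q s) :=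
          Finset.mem_filter.2 ⟨Finset.mem_univ _, hq0⟩
        have := Finset.single_le_sum (f := fun s => q s ^ a * r s ^ (1 - a))
          (fun s _ => hg_nn s) hmem
        have hpos0 : 0 < q s0 ^ a * r s0 ^ (1 - a) :=
          mul_pos (Real.rpow_pos_of_pos hq0 _) (Real.rpow_pos_of_pos hr0 _)
        linarith
      have hle : ∑ s ∈ Finset.univ.filter (fun s => 0 < q s), q s ^ a * r s ^ (1 - a)
          ≤ ∑ t ∈ Finset.univ.filter (fun t => 0 < ∑ s, K s t * q s),
              (∑ s, K s t * q s) ^ a * (∑ s, K s t * r s) ^ (1 - a) := by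
        rw [e0, e1, emid]
        refine Finset.sum_le_sum fun t _ => ?_
        calc ∑ s, K s t * (q s ^ a * r s ^ (1 - a))
            = ∑ s, (K s t * q s) ^ a * ((K s t * r s) ^ (1 - a)) :=
              Finset.sum_congr rfl fun s _ => hKg t s
          _ ≤ (∑ s, K s t * q s) ^ a * (∑ s, K s t * r s) ^ (1 - a) :=
              holder_concave Finset.univ _ _ ha0 ha1
                (fun s _ => mul_nonneg (hKnn s t) (hq.1 s))
                (fun s _ => mul_nonneg (hKnn s t) (hr.1 s))
      have hinv : (a - 1)⁻¹ ≤ 0 := inv_nonpos.2 (by linarith)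
      exact mul_le_mul_of_nonpos_left (Real.log_le_log hSpos hle) hinv
    · -- 1 < α
      have ha1 : 1 < a := by
        have := (ENNReal.toReal_lt_toReal (by norm_num : (1:ENNReal) ≠ ⊤) htop).2 hgt
        simpa using this
      by_cases hsup : ∀ s, 0 < q s → 0 < r s
      · have h1 : ¬ (1 < α ∧ ¬ ∀ t, 0 < (∑ s, K s t * q s) → 0 < (∑ s, K s t * r s)) :=
          fun h => h.2 (fun t => transfer hsup t)
        have h2 : ¬ (1 < α ∧ ¬ ∀ s, 0 < q s → 0 < r s) := fun h => h.2 hsup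
        simp only [renyiD, if_neg htop, if_neg h1, if_neg h2]
        apply EReal.coe_le_coe_iff.2
        rw [← hadef]
        obtain ⟨t1, ht1⟩ := hKq_ex
        have hSKpos : 0 < ∑ t ∈ Finset.univ.filter (fun t => 0 < ∑ s, K s t * q s),
            (∑ s, K s t * q s) ^ a * (∑ s, K s t * r s) ^ (1 - a) := by
          refine Finset.sum_pos (fun t htm => ?_)
            ⟨t1, Finset.mem_filter.2 ⟨Finset.mem_univ _, ht1⟩⟩
          have hKqt := (Finset.mem_filter.1 htm).2
          exact mul_pos (Real.rpow_pos_of_pos hKqt _)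
            (Real.rpow_pos_of_pos (transfer hsup t hKqt) _)
        have hle : ∑ t ∈ Finset.univ.filter (fun t => 0 < ∑ s, K s t * q s),
              (∑ s, K s t * q s) ^ a * (∑ s, K s t * r s) ^ (1 - a)
            ≤ ∑ s ∈ Finset.univ.filter (fun s => 0 < q s), q s ^ a * r s ^ (1 - a) := by
          rw [e0, e1, emid]
          refine Finset.sum_le_sum fun t _ => ?_
          -- per-t Radon
          set F := Finset.univ.filter (fun s => 0 < K s t * r s) with hF
          have c1 : ∑ s, K s t * q s = ∑ s ∈ F, K s t * q s := by
            refine (Finset.sum_filter_of_ne fun s _ hne => ?_).symm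
            have hK0 : K s t ≠ 0 := fun h => hne (by rw [h, zero_mul])
            have hq0' : q s ≠ 0 := fun h => hne (by rw [h, mul_zero])
            exact mul_pos ((hKnn s t).lt_of_ne (Ne.symm hK0))
              (hsup s ((hq.1 s).lt_of_ne (Ne.symm hq0')))
          have c2 : ∑ s, K s t * r s = ∑ s ∈ F, K s t * r s := by
            refine (Finset.sum_filter_of_ne fun s _ hne => ?_).symm
            exact (mul_nonneg (hKnn s t) (hr.1 s)).lt_of_ne (Ne.symm hne)
          calc (∑ s, K s t * q s) ^ a * (∑ s, K s t * r s) ^ (1 - a)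
              = (∑ s ∈ F, K s t * q s) ^ a * (∑ s ∈ F, K s t * r s) ^ (1 - a) := by
                rw [← c1, ← c2]
            _ ≤ ∑ s ∈ F, (K s t * q s) ^ a * (K s t * r s) ^ (1 - a) :=
                radon_convex F _ _ ha1
                  (fun s _ => mul_nonneg (hKnn s t) (hq.1 s))
                  (fun s hsF => (Finset.mem_filter.1 hsF).2)
            _ = ∑ s ∈ F, K s t * (q s ^ a * r s ^ (1 - a)) :=
                Finset.sum_congr rfl fun s _ => (hKg t s).symm
            _ ≤ ∑ s, K s t * (q s ^ a * r s ^ (1 - a)) :=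
                Finset.sum_le_sum_of_subset_of_nonneg (Finset.filter_subset _ _)
                  (fun s _ _ => mul_nonneg (hKnn s t) (hg_nn s))
        have hinv : (0:ℝ) ≤ (a - 1)⁻¹ := inv_nonneg.2 (by linarith)
        exact mul_le_mul_of_nonneg_left (Real.log_le_log hSKpos hle) hinv
      · have : renyiD α q r = ⊤ := by
          rw [renyiD, if_neg htop, if_pos ⟨hgt, hsup⟩]
        rw [this]
        exact le_top

end DPI

lemma prod_sum {Z W : Type*} [Fintype Z] [Fintype W] (F : Z → ℝ) (G : W → ℝ) :
    ∑ s : Z × W, F s.1 * G s.2 = (∑ z, F z) * (∑ w, G w) := by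
  rw [Fintype.sum_mul_sum, Fintype.sum_prod_type]

lemma swap_sum {X Y : Type*} [Fintype X] [Fintype Y] (F G : X × Y → ℝ) :
    ∑ s : (X × Y) × (X × Y), F (s.1.1, s.2.2) * G (s.2.1, s.1.2)
      = (∑ t, F t) * (∑ t, G t) := by
  have hbij : Function.Bijective
      (fun s : (X × Y) × (X × Y) => (((s.1.1, s.2.2), (s.2.1, s.1.2)) : (X × Y) × (X × Y))) :=
    Function.Involutive.bijective (fun s => rfl)
  rw [← prod_sum F G]
  exact Fintype.sum_bijective _ hbij _ _ (fun s => rfl)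

/-- data processing: if `A → X → Y → B` is a Markov chain, realized by
channels `W_A` from `X` to `A` and `W_B` from `Y` to `B` applied to a pmf `p` on
`X × Y`, then `J_α(p_AB) ≤ J_α(p)` for every `α ∈ (0,1) ∪ (1,∞]`. -/
theorem Jalpha_data_processing {X Y A B : Type*} [Fintype X] [Fintype Y]
    [Fintype A] [Fintype B]
    (p : X × Y → ℝ) (hp : IsPMF p)
    (WA : X → A → ℝ) (hWA : ∀ x, IsPMF (WA x))
    (WB : Y → B → ℝ) (hWB : ∀ y, IsPMF (WB y))
    (α : ENNReal) (hα : 0 < α ∧ α ≠ 1) :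
    Jalpha α (fun ab : A × B => ∑ x, ∑ y, WA x ab.1 * p (x, y) * WB y ab.2)
      ≤ Jalpha α p := by
  set q : (X × Y) × (X × Y) → ℝ := fun s => p s.1 * p s.2 with hqdef
  set r : (X × Y) × (X × Y) → ℝ := fun s => p (s.1.1, s.2.2) * p (s.2.1, s.1.2) with hrdef
  set K : ((X × Y) × (X × Y)) → ((A × B) × (A × B)) → ℝ :=
    fun s t => (WA s.1.1 t.1.1 * WB s.1.2 t.1.2) * (WA s.2.1 t.2.1 * WB s.2.2 t.2.2) with hKdef
  have hqpmf : IsPMF q := by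
    constructor
    · exact fun s => mul_nonneg (hp.1 _) (hp.1 _)
    · rw [hqdef]
      rw [prod_sum p p, hp.2, one_mul]
  have hrpmf : IsPMF r := by
    constructor
    · exact fun s => mul_nonneg (hp.1 _) (hp.1 _)
    · rw [hrdef]
      rw [swap_sum p p, hp.2, one_mul]
  have hKpmf : ∀ s, IsPMF (K s) := by
    intro s
    constructor
    · exact fun t => mul_nonneg (mul_nonneg ((hWA _).1 _) ((hWB _).1 _))
        (mul_nonneg ((hWA _).1 _) ((hWB _).1 _))
    · rw [hKdef]
      rw [prod_sum (fun t1 : A × B => WA s.1.1 t1.1 * WB s.1.2 t1.2)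
        (fun t2 : A × B => WA s.2.1 t2.1 * WB s.2.2 t2.2),
        prod_sum (WA s.1.1) (WB s.1.2), prod_sum (WA s.2.1) (WB s.2.2),
        (hWA _).2, (hWA _).2, (hWB _).2, (hWB _).2]
      norm_num
  have hpos : ∃ s, 0 < q s ∧ 0 < r s := by
    obtain ⟨xy, hxy⟩ := exists_pos_of_sum_pos (f := p) (by rw [hp.2]; norm_num)
    exact ⟨(xy, xy), mul_pos hxy hxy, mul_pos hxy hxy⟩
  have key := renyiD_DPI α hα q r hqpmf hrpmf K hKpmf hpos
  have main : Jalpha α (fun ab : A × B => ∑ x, ∑ y, WA x ab.1 * p (x, y) * WB y ab.2)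
      = renyiD α (fun t => ∑ s, K s t * q s) (fun t => ∑ s, K s t * r s) := by
    simp only [Jalpha]
    congr 1
    · funext t
      rw [← Fintype.sum_prod_type (f := fun z : X × Y => WA z.1 t.1.1 * p z * WB z.2 t.1.2),
        ← Fintype.sum_prod_type (f := fun z : X × Y => WA z.1 t.2.1 * p z * WB z.2 t.2.2),
        ← prod_sum]
      exact Finset.sum_congr rfl fun s _ => by simp only [hKdef, hqdef]; ring
    · funext t
      rw [← Fintype.sum_prod_type (f := fun z : X × Y => WA z.1 t.1.1 * p z * WB z.2 t.2.2),
        ← Fintype.sum_prod_type (f := fun z : X × Y => WA z.1 t.2.1 * p z * WB z.2 t.1.2),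
        ← swap_sum]
      exact Finset.sum_congr rfl fun s _ => by simp only [hKdef, hrdef]; ring
  rw [main]
  exact key
end

section
/- Let p₁ be a pmf on X₁×Y₁ and p₂ a pmf on X₂×Y₂ (all sets finite), and let P be the pmf on (X₁×X₂)×(Y₁×Y₂) given by P((x₁,x₂),(y₁,y₂)) = p₁(x₁,y₁)·p₂(x₂,y₂). Then for every α ∈ (0,1) ∪ (1,∞], J_α(P) = J_α(p₁) + J_α(p₂). -/
lemma mul_pos_iff_of_nonneg' {a b : ℝ} (ha : 0 ≤ a) (hb : 0 ≤ b) :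
    0 < a * b ↔ 0 < a ∧ 0 < b := by
  constructor
  · intro h
    rcases mul_pos_iff.mp h with ⟨h1, h2⟩ | ⟨h1, h2⟩
    · exact ⟨h1, h2⟩
    · linarith
  · rintro ⟨h1, h2⟩; exact mul_pos h1 h2

lemma sup'_mul_sup' {S T : Type*} (A : Finset S) (B : Finset T)
    (hA : A.Nonempty) (hB : B.Nonempty) (f : S → ℝ) (g : T → ℝ)
    (hf : ∀ s ∈ A, 0 ≤ f s) (hg : ∀ t ∈ B, 0 ≤ g t) :
    (A ×ˢ B).sup' (hA.product hB) (fun st => f st.1 * g st.2)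
      = A.sup' hA f * B.sup' hB g := by
  apply le_antisymm
  · apply Finset.sup'_le
    intro st hst
    rw [Finset.mem_product] at hst
    have h1 : f st.1 ≤ A.sup' hA f := Finset.le_sup' f hst.1
    have h2 : g st.2 ≤ B.sup' hB g := Finset.le_sup' g hst.2
    have h0 : 0 ≤ g st.2 := hg _ hst.2
    have h0' : 0 ≤ A.sup' hA f := le_trans (hf _ hst.1) h1
    exact mul_le_mul h1 h2 h0 h0'
  · obtain ⟨s, hs, hfs⟩ := Finset.exists_mem_eq_sup' hA f
    obtain ⟨t, ht, hgt⟩ := Finset.exists_mem_eq_sup' hB g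
    rw [hfs, hgt]
    exact Finset.le_sup' (fun st : S × T => f st.1 * g st.2)
      (Finset.mem_product.mpr (⟨hs, ht⟩ : (s, t).1 ∈ A ∧ (s, t).2 ∈ B))

open Classical in
lemma sSup_ratio_eq {S : Type*} [Fintype S] (p q : S → ℝ)
    (hne : (Finset.univ.filter (fun s => 0 < p s)).Nonempty) :
    sSup { r : ℝ | ∃ s, 0 < p s ∧ r = p s / q s }
      = (Finset.univ.filter (fun s => 0 < p s)).sup' hne (fun s => p s / q s) := by
  rw [Finset.sup'_eq_csSup_image]
  congr 1
  ext r
  simp only [Set.mem_setOf_eq, Set.mem_image, Finset.mem_coe, Finset.mem_filter,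
    Finset.mem_univ, true_and]
  constructor
  · rintro ⟨s, hs, rfl⟩; exact ⟨s, hs, rfl⟩
  · rintro ⟨s, hs, rfl⟩; exact ⟨s, hs, rfl⟩


open Classical in
lemma renyiD_comp_equiv {S T : Type*} [Fintype S] [Fintype T] (e : S ≃ T)
    (α : ENNReal) (p q : T → ℝ) :
    renyiD α (fun s => p (e s)) (fun s => q (e s)) = renyiD α p q := by
  have hsupp : (∀ s, 0 < p (e s) → 0 < q (e s)) ↔ (∀ t, 0 < p t → 0 < q t) := by
    constructor
    · intro h t; have := h (e.symm t); simpa using this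
    · intro h s; exact h (e s)
  have hset : { r : ℝ | ∃ s, 0 < p (e s) ∧ r = p (e s) / q (e s) }
      = { r : ℝ | ∃ t, 0 < p t ∧ r = p t / q t } := by
    ext r
    constructor
    · rintro ⟨s, h1, h2⟩; exact ⟨e s, h1, h2⟩
    · rintro ⟨t, h1, h2⟩; exact ⟨e.symm t, by simpa using h1, by simpa using h2⟩
  have hsum : ∀ a : ℝ, (∑ s ∈ Finset.univ.filter (fun s => 0 < p (e s)),
        p (e s) ^ a * q (e s) ^ (1 - a))
      = ∑ t ∈ Finset.univ.filter (fun t => 0 < p t), p t ^ a * q t ^ (1 - a) := by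
    intro a
    apply Finset.sum_equiv e
    · intro i; simp
    · intro i _; rfl
  unfold renyiD
  simp only [hsupp, hset, hsum]

open Classical in
lemma renyiD_prod {S T : Type*} [Fintype S] [Fintype T] (α : ENNReal)
    (p₁ q₁ : S → ℝ) (p₂ q₂ : T → ℝ)
    (hp₁ : ∀ s, 0 ≤ p₁ s) (hq₁ : ∀ s, 0 ≤ q₁ s)
    (hp₂ : ∀ t, 0 ≤ p₂ t) (hq₂ : ∀ t, 0 ≤ q₂ t)
    (h₁ : ∃ s, 0 < p₁ s ∧ 0 < q₁ s) (h₂ : ∃ t, 0 < p₂ t ∧ 0 < q₂ t) :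
    renyiD α (fun st : S × T => p₁ st.1 * p₂ st.2)
        (fun st : S × T => q₁ st.1 * q₂ st.2)
      = renyiD α p₁ q₁ + renyiD α p₂ q₂ := by
  obtain ⟨s₀, hs₀p, hs₀q⟩ := h₁
  obtain ⟨t₀, ht₀p, ht₀q⟩ := h₂
  set F₁ : Finset S := Finset.univ.filter (fun s => 0 < p₁ s) with hF₁
  set F₂ : Finset T := Finset.univ.filter (fun t => 0 < p₂ t) with hF₂
  have hmemF₁ : ∀ s, s ∈ F₁ ↔ 0 < p₁ s := by intro s; simp [hF₁]
  have hmemF₂ : ∀ t, t ∈ F₂ ↔ 0 < p₂ t := by intro t; simp [hF₂]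
  have hne₁ : F₁.Nonempty := ⟨s₀, (hmemF₁ s₀).mpr hs₀p⟩
  have hne₂ : F₂.Nonempty := ⟨t₀, (hmemF₂ t₀).mpr ht₀p⟩
  have hpos : ∀ st : S × T, 0 < p₁ st.1 * p₂ st.2 ↔ 0 < p₁ st.1 ∧ 0 < p₂ st.2 :=
    fun st => mul_pos_iff_of_nonneg' (hp₁ _) (hp₂ _)
  have hqpos : ∀ st : S × T, 0 < q₁ st.1 * q₂ st.2 ↔ 0 < q₁ st.1 ∧ 0 < q₂ st.2 :=
    fun st => mul_pos_iff_of_nonneg' (hq₁ _) (hq₂ _)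
  have hfilter : Finset.univ.filter (fun st : S × T => 0 < p₁ st.1 * p₂ st.2)
      = F₁ ×ˢ F₂ := by
    ext st
    simp [hpos st, hmemF₁, hmemF₂, Finset.mem_product]
  have hC : (∀ st : S × T, 0 < p₁ st.1 * p₂ st.2 → 0 < q₁ st.1 * q₂ st.2)
      ↔ ((∀ s, 0 < p₁ s → 0 < q₁ s) ∧ (∀ t, 0 < p₂ t → 0 < q₂ t)) := by
    constructor
    · intro h
      constructor
      · intro s hs
        have := (hqpos (s, t₀)).mp (h (s, t₀) ((hpos (s, t₀)).mpr ⟨hs, ht₀p⟩))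
        exact this.1
      · intro t ht
        have := (hqpos (s₀, t)).mp (h (s₀, t) ((hpos (s₀, t)).mpr ⟨hs₀p, ht⟩))
        exact this.2
    · rintro ⟨h1, h2⟩ st hst
      have := (hpos st).mp hst
      exact (hqpos st).mpr ⟨h1 _ this.1, h2 _ this.2⟩
  -- sums
  have hsum₁pos : ∀ a : ℝ, 0 < ∑ s ∈ F₁, p₁ s ^ a * q₁ s ^ (1 - a) := by
    intro a
    apply Finset.sum_pos'
    · intro s hs
      exact mul_nonneg (Real.rpow_nonneg (hp₁ s) a) (Real.rpow_nonneg (hq₁ s) _)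
    · exact ⟨s₀, (hmemF₁ s₀).mpr hs₀p,
        mul_pos (Real.rpow_pos_of_pos hs₀p a) (Real.rpow_pos_of_pos hs₀q _)⟩
  have hsum₂pos : ∀ a : ℝ, 0 < ∑ t ∈ F₂, p₂ t ^ a * q₂ t ^ (1 - a) := by
    intro a
    apply Finset.sum_pos'
    · intro t ht
      exact mul_nonneg (Real.rpow_nonneg (hp₂ t) a) (Real.rpow_nonneg (hq₂ t) _)
    · exact ⟨t₀, (hmemF₂ t₀).mpr ht₀p,
        mul_pos (Real.rpow_pos_of_pos ht₀p a) (Real.rpow_pos_of_pos ht₀q _)⟩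
  have hsum : ∀ a : ℝ,
      (∑ st ∈ Finset.univ.filter (fun st : S × T => 0 < p₁ st.1 * p₂ st.2),
        (p₁ st.1 * p₂ st.2) ^ a * (q₁ st.1 * q₂ st.2) ^ (1 - a))
      = (∑ s ∈ F₁, p₁ s ^ a * q₁ s ^ (1 - a)) * (∑ t ∈ F₂, p₂ t ^ a * q₂ t ^ (1 - a)) := by
    intro a
    rw [hfilter, Finset.sum_mul_sum, Finset.sum_product]
    apply Finset.sum_congr rfl
    intro s _
    apply Finset.sum_congr rfl
    intro t _
    rw [Real.mul_rpow (hp₁ s) (hp₂ t), Real.mul_rpow (hq₁ s) (hq₂ t)]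
    ring
  by_cases htop : α = ⊤
  · -- α = ⊤
    unfold renyiD
    rw [if_pos htop, if_pos htop, if_pos htop]
    by_cases hc : (∀ s, 0 < p₁ s → 0 < q₁ s) ∧ (∀ t, 0 < p₂ t → 0 < q₂ t)
    · rw [if_pos (hC.mpr hc), if_pos hc.1, if_pos hc.2]
      have hneP : (Finset.univ.filter
          (fun st : S × T => 0 < p₁ st.1 * p₂ st.2)).Nonempty := by
        rw [hfilter]; exact hne₁.product hne₂
      rw [sSup_ratio_eq _ _ hne₁, sSup_ratio_eq _ _ hne₂, sSup_ratio_eq _ _ hneP]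
      have hsup' : (Finset.univ.filter
            (fun st : S × T => 0 < p₁ st.1 * p₂ st.2)).sup' hneP
            (fun st => (p₁ st.1 * p₂ st.2) / (q₁ st.1 * q₂ st.2))
          = F₁.sup' hne₁ (fun s => p₁ s / q₁ s) * F₂.sup' hne₂ (fun t => p₂ t / q₂ t) := by
        rw [← sup'_mul_sup' F₁ F₂ hne₁ hne₂ _ _
          (fun s hs => div_nonneg (hp₁ s) (hq₁ s))
          (fun t ht => div_nonneg (hp₂ t) (hq₂ t))]
        apply Finset.sup'_congr
        · exact hfilter
        · intro st hst
          rw [hfilter] at hst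
          rw [Finset.mem_product, hmemF₁, hmemF₂] at hst
          have hq1 : q₁ st.1 ≠ 0 := ne_of_gt (hc.1 _ hst.1)
          have hq2 : q₂ st.2 ≠ 0 := ne_of_gt (hc.2 _ hst.2)
          field_simp
      rw [hsup']
      have hm₁ : 0 < F₁.sup' hne₁ (fun s => p₁ s / q₁ s) :=
        lt_of_lt_of_le (div_pos hs₀p hs₀q)
          (Finset.le_sup' (fun s => p₁ s / q₁ s) ((hmemF₁ s₀).mpr hs₀p))
      have hm₂ : 0 < F₂.sup' hne₂ (fun t => p₂ t / q₂ t) :=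
        lt_of_lt_of_le (div_pos ht₀p ht₀q)
          (Finset.le_sup' (fun t => p₂ t / q₂ t) ((hmemF₂ t₀).mpr ht₀p))
      rw [Real.log_mul (ne_of_gt hm₁) (ne_of_gt hm₂), EReal.coe_add]
    · rw [if_neg (fun h => hc (hC.mp h))]
      rcases not_and_or.mp hc with h | h
      · rw [if_neg h]
        exact (EReal.top_add_of_ne_bot (by split <;> simp)).symm
      · rw [if_neg h]
        refine (EReal.add_top_of_ne_bot ?_).symm
        split <;> simp
  · -- α ≠ ⊤
    unfold renyiD
    rw [if_neg htop, if_neg htop, if_neg htop]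
    set a := α.toReal with ha
    by_cases hc : (∀ s, 0 < p₁ s → 0 < q₁ s) ∧ (∀ t, 0 < p₂ t → 0 < q₂ t)
    · rw [if_neg (fun h => h.2 (hC.mpr hc)), if_neg (fun h => h.2 hc.1),
        if_neg (fun h => h.2 hc.2)]
      rw [hsum a, Real.log_mul (ne_of_gt (hsum₁pos a)) (ne_of_gt (hsum₂pos a)),
        ← EReal.coe_add]
      norm_cast
      ring
    · by_cases hgt : 1 < α
      · rw [if_pos ⟨hgt, fun h => hc (hC.mp h)⟩]
        rcases not_and_or.mp hc with h | h
        · rw [if_pos (show 1 < α ∧ ¬∀ s : S, 0 < p₁ s → 0 < q₁ s from ⟨hgt, h⟩)]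
          refine (EReal.top_add_of_ne_bot ?_).symm
          split
          · simp
          · exact EReal.coe_ne_bot _
        · rw [if_pos (show 1 < α ∧ ¬∀ t : T, 0 < p₂ t → 0 < q₂ t from ⟨hgt, h⟩)]
          refine (EReal.add_top_of_ne_bot ?_).symm
          split
          · simp
          · exact EReal.coe_ne_bot _
      · rw [if_neg (fun h => hgt h.1), if_neg (fun h => hgt h.1),
          if_neg (fun h => hgt h.1)]
        rw [hsum a, Real.log_mul (ne_of_gt (hsum₁pos a)) (ne_of_gt (hsum₂pos a)),
          ← EReal.coe_add]
        norm_cast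
        ring

/-- additivity: if `(X₁,Y₁)` and `(X₂,Y₂)` are independent, i.e. the
joint pmf is `P((x₁,x₂),(y₁,y₂)) = p₁(x₁,y₁)·p₂(x₂,y₂)`, then
`J_α(P) = J_α(p₁) + J_α(p₂)` for every `α ∈ (0,1) ∪ (1,∞]` (addition in `(-∞,∞]`). -/
theorem Jalpha_additive {X₁ Y₁ X₂ Y₂ : Type*} [Fintype X₁] [Fintype Y₁]
    [Fintype X₂] [Fintype Y₂]
    (p₁ : X₁ × Y₁ → ℝ) (hp₁ : IsPMF p₁) (p₂ : X₂ × Y₂ → ℝ) (hp₂ : IsPMF p₂)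
    (α : ENNReal) (hα : 0 < α ∧ α ≠ 1) :
    Jalpha α (fun t : (X₁ × X₂) × (Y₁ × Y₂) => p₁ (t.1.1, t.2.1) * p₂ (t.1.2, t.2.2))
      = Jalpha α p₁ + Jalpha α p₂ := by
  classical
  obtain ⟨hp₁0, hp₁1⟩ := hp₁
  obtain ⟨hp₂0, hp₂1⟩ := hp₂
  have hex₁ : ∃ u, 0 < p₁ u := by
    by_contra h
    push_neg at h
    have hz : ∑ u, p₁ u = 0 :=
      Finset.sum_eq_zero (fun u _ => le_antisymm (h u) (hp₁0 u))
    rw [hp₁1] at hz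
    norm_num at hz
  have hex₂ : ∃ u, 0 < p₂ u := by
    by_contra h
    push_neg at h
    have hz : ∑ u, p₂ u = 0 :=
      Finset.sum_eq_zero (fun u _ => le_antisymm (h u) (hp₂0 u))
    rw [hp₂1] at hz
    norm_num at hz
  obtain ⟨u₁, hu₁⟩ := hex₁
  obtain ⟨u₂, hu₂⟩ := hex₂
  let e : (((X₁ × Y₁) × (X₁ × Y₁)) × ((X₂ × Y₂) × (X₂ × Y₂)))
      ≃ (((X₁ × X₂) × (Y₁ × Y₂)) × ((X₁ × X₂) × (Y₁ × Y₂))) :=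
    { toFun := fun u => (((u.1.1.1, u.2.1.1), (u.1.1.2, u.2.1.2)),
        ((u.1.2.1, u.2.2.1), (u.1.2.2, u.2.2.2)))
      invFun := fun v => (((v.1.1.1, v.1.2.1), (v.2.1.1, v.2.2.1)),
        ((v.1.1.2, v.1.2.2), (v.2.1.2, v.2.2.2)))
      left_inv := by
        rintro ⟨⟨⟨a1, b1⟩, ⟨a1', b1'⟩⟩, ⟨⟨a2, b2⟩, ⟨a2', b2'⟩⟩⟩; rfl
      right_inv := by
        rintro ⟨⟨⟨a1, a2⟩, ⟨b1, b2⟩⟩, ⟨⟨a1', a2'⟩, ⟨b1', b2'⟩⟩⟩; rfl }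
  unfold Jalpha
  rw [← renyiD_comp_equiv e α
    (fun t : ((X₁ × X₂) × (Y₁ × Y₂)) × ((X₁ × X₂) × (Y₁ × Y₂)) =>
      (p₁ (t.1.1.1, t.1.2.1) * p₂ (t.1.1.2, t.1.2.2))
        * (p₁ (t.2.1.1, t.2.2.1) * p₂ (t.2.1.2, t.2.2.2)))
    (fun t : ((X₁ × X₂) × (Y₁ × Y₂)) × ((X₁ × X₂) × (Y₁ × Y₂)) =>
      (p₁ (t.1.1.1, t.2.2.1) * p₂ (t.1.1.2, t.2.2.2))
        * (p₁ (t.2.1.1, t.1.2.1) * p₂ (t.2.1.2, t.1.2.2)))]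
  have hQ : (fun s : ((X₁ × Y₁) × (X₁ × Y₁)) × ((X₂ × Y₂) × (X₂ × Y₂)) =>
      (p₁ ((e s).1.1.1, (e s).1.2.1) * p₂ ((e s).1.1.2, (e s).1.2.2))
        * (p₁ ((e s).2.1.1, (e s).2.2.1) * p₂ ((e s).2.1.2, (e s).2.2.2)))
      = fun s : ((X₁ × Y₁) × (X₁ × Y₁)) × ((X₂ × Y₂) × (X₂ × Y₂)) =>
        (p₁ s.1.1 * p₁ s.1.2) * (p₂ s.2.1 * p₂ s.2.2) := by
    funext s
    obtain ⟨⟨⟨a1, b1⟩, ⟨a1', b1'⟩⟩, ⟨⟨a2, b2⟩, ⟨a2', b2'⟩⟩⟩ := s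
    simp only [e, Equiv.coe_fn_mk]
    ring
  have hR : (fun s : ((X₁ × Y₁) × (X₁ × Y₁)) × ((X₂ × Y₂) × (X₂ × Y₂)) =>
      (p₁ ((e s).1.1.1, (e s).2.2.1) * p₂ ((e s).1.1.2, (e s).2.2.2))
        * (p₁ ((e s).2.1.1, (e s).1.2.1) * p₂ ((e s).2.1.2, (e s).1.2.2)))
      = fun s : ((X₁ × Y₁) × (X₁ × Y₁)) × ((X₂ × Y₂) × (X₂ × Y₂)) =>
        (p₁ (s.1.1.1, s.1.2.2) * p₁ (s.1.2.1, s.1.1.2))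
          * (p₂ (s.2.1.1, s.2.2.2) * p₂ (s.2.2.1, s.2.1.2)) := by
    funext s
    obtain ⟨⟨⟨a1, b1⟩, ⟨a1', b1'⟩⟩, ⟨⟨a2, b2⟩, ⟨a2', b2'⟩⟩⟩ := s
    simp only [e, Equiv.coe_fn_mk]
    ring
  have := renyiD_prod α
    (fun u : (X₁ × Y₁) × (X₁ × Y₁) => p₁ u.1 * p₁ u.2)
    (fun u : (X₁ × Y₁) × (X₁ × Y₁) => p₁ (u.1.1, u.2.2) * p₁ (u.2.1, u.1.2))
    (fun u : (X₂ × Y₂) × (X₂ × Y₂) => p₂ u.1 * p₂ u.2)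
    (fun u : (X₂ × Y₂) × (X₂ × Y₂) => p₂ (u.1.1, u.2.2) * p₂ (u.2.1, u.1.2))
    (fun u => mul_nonneg (hp₁0 _) (hp₁0 _))
    (fun u => mul_nonneg (hp₁0 _) (hp₁0 _))
    (fun u => mul_nonneg (hp₂0 _) (hp₂0 _))
    (fun u => mul_nonneg (hp₂0 _) (hp₂0 _))
    ⟨(u₁, u₁), mul_pos hu₁ hu₁, by simpa using mul_pos hu₁ hu₁⟩
    ⟨(u₂, u₂), mul_pos hu₂ hu₂, by simpa using mul_pos hu₂ hu₂⟩
  convert this using 2 <;> try rw [hQ] <;> try rw [hR]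
end
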